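/- arXiv:1508.07279 — 5 statements merged into one kernel-verified Lean document; each statement's English description precedes it below -/
import Mathlib

section
/- Let q = pⁿ be an odd prime power, K a finite field with q² elements, F its subfield of order q, and f : K → K a planar function such that for every c ∈ K the number of x ∈ K with f(x) = c equals the number of y ∈ K with y² = c. Let θ ∈ K \ {0} be such that θ^{q+1} (an element of F) is a nonsquare in F. Then for all a, b ∈ K the number of x ∈ K with f(x+a) − b ∈ θF equals 1 if b ∈ θF and equals q+1 if b ∉ θF; hence U_θ = {(x, tθ) : x ∈ K, t ∈ F} ∪ {(∞)} is a unital in the shift plane Π(f). -/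
/-- The point set of the shift plane `Π(f)`: affine points `(x,y)`, points at
infinity `(a)` for `a ∈ K`, and the point `(∞)`. -/
abbrev ShiftPt (K : Type) : Type := (K × K) ⊕ (K ⊕ Unit)

/-- The affine line `L_{a,b} = {(x, f(x+a) − b) : x ∈ K} ∪ {(a)}` of the shift plane. -/
def affLine (K : Type) [Field K] (f : K → K) (a b : K) : Set (ShiftPt K) :=
  {P | (∃ x : K, P = Sum.inl (x, f (x + a) - b)) ∨ P = Sum.inr (Sum.inl a)}

/-- The vertical line `N_a = {(a,y) : y ∈ K} ∪ {(∞)}` of the shift plane. -/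
def vertLine (K : Type) [Field K] (a : K) : Set (ShiftPt K) :=
  {P | (∃ y : K, P = Sum.inl (a, y)) ∨ P = Sum.inr (Sum.inr ())}

/-- The line at infinity of the shift plane. -/
def lineAtInf (K : Type) : Set (ShiftPt K) :=
  {P | ∃ s : K ⊕ Unit, P = Sum.inr s}

/-- The set of all lines of the shift plane `Π(f)`. -/
def shiftLines (K : Type) [Field K] (f : K → K) : Set (Set (ShiftPt K)) :=
  {L | (∃ a b : K, L = affLine K f a b) ∨ (∃ a : K, L = vertLine K a) ∨ L = lineAtInf K}

/-- The set `θF = {tθ : t ∈ F}`, where `F = {t : t^q = t}` is the subfield of order `q`. -/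
def scalarSet (K : Type) [Field K] (q : ℕ) (θ : K) : Set K :=
  {c | ∃ t : K, t ^ q = t ∧ c = t * θ}

/-- The point set `U_θ = {(x, tθ) : x ∈ K, t ∈ F} ∪ {(∞)}`. -/
def unitalSet (K : Type) [Field K] (q : ℕ) (θ : K) : Set (ShiftPt K) :=
  {P | (∃ x t : K, t ^ q = t ∧ P = Sum.inl (x, t * θ)) ∨ P = Sum.inr (Sum.inr ())}

/-- Counting a preimage of a set by summing fibers: two functions with equal
fiber cardinalities have equal preimage cardinalities. -/
private lemma fiber_transfer {K : Type} [Fintype K] [DecidableEq K] (g h : K → K) (S : Finset K)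
    (hf : ∀ c : K, (Finset.univ.filter fun x => g x = c).card
        = (Finset.univ.filter fun x => h x = c).card) :
    (Finset.univ.filter fun x => g x ∈ S).card = (Finset.univ.filter fun x => h x ∈ S).card := by
  have key : ∀ (g : K → K), (Finset.univ.filter fun x => g x ∈ S).card
      = ∑ c ∈ S, (Finset.univ.filter fun x => g x = c).card := by
    intro g
    rw [Finset.card_eq_sum_card_fiberwise (f := g) (t := S) (by intro x hx; simpa using hx)]
    refine Finset.sum_congr rfl fun c hc => ?_
    congr 1
    ext x
    simp only [Finset.mem_filter, Finset.mem_univ, true_and]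
    exact ⟨fun h => h.2, fun h => ⟨h ▸ hc, h⟩⟩
  rw [key g, key h]
  exact Finset.sum_congr rfl fun c _ => hf c

private lemma ncard_filter {K : Type} [Fintype K] (P : K → Prop) [DecidablePred P] :
    {x | P x}.ncard = (Finset.univ.filter P).card := by
  rw [Set.ncard_eq_toFinset_card', Set.toFinset_setOf]

/-- The main counting lemma: cardinality of the subfield-indicator set, and the
counts of `y` with `y² − b ∈ scalarSet K q θ`. -/
private lemma aux_main (p n q : ℕ) (hp : Nat.Prime p) (hpodd : Odd p) (hn : 0 < n)
    (hq : q = p ^ n)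
    (K : Type) [Field K] [Fintype K] [DecidableEq K] (hcard : Fintype.card K = q ^ 2)
    (θ : K) [∀ c : K, Decidable (c ∈ scalarSet K q θ)] (hθ : θ ≠ 0)
    (hns : ¬ ∃ s : K, s ^ q = s ∧ s ^ 2 = θ ^ (q + 1)) :
    (Finset.univ.filter (fun t : K => t ^ q = t)).card = q ∧
    ∀ b : K,
      ((b ∈ scalarSet K q θ →
        (Finset.univ.filter (fun y : K => y ^ 2 - b ∈ scalarSet K q θ)).card = 1) ∧
       (b ∉ scalarSet K q θ →
        (Finset.univ.filter (fun y : K => y ^ 2 - b ∈ scalarSet K q θ)).card = q + 1)) := by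
  classical
  have hq1 : 1 < q := by
    rw [hq]
    calc 1 < p := hp.one_lt
    _ ≤ p ^ n := Nat.le_self_pow hn.ne' p
  have hqodd : Odd q := hq ▸ hpodd.pow
  -- characteristic
  haveI hKp : CharP K p := by
    haveI := ringChar.charP K
    have hrp : (ringChar K).Prime := CharP.char_is_prime K (ringChar K)
    obtain ⟨m, _, hm⟩ := FiniteField.card K (ringChar K)
    have hdvd : p ∣ ringChar K ^ (m : ℕ) := by
      rw [← hm, hcard, hq, ← pow_mul]
      exact dvd_pow_self p (by positivity)
    have : p = ringChar K := ((Nat.prime_dvd_prime_iff_eq hp hrp).mp (hp.dvd_of_dvd_pow hdvd))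
    rwa [this]
  haveI : Fact p.Prime := ⟨hp⟩
  have frob : ∀ x y : K, (x + y) ^ q = x ^ q + y ^ q := by
    intro x y; rw [hq]; exact add_pow_char_pow x y p n
  have hx2 : ∀ x : K, x ^ (q * q) = x := by
    intro x
    have := FiniteField.pow_card x
    rwa [hcard, pow_two] at this
  -- subfield closure properties
  have hF0 : (0 : K) ^ q = 0 := zero_pow (by omega)
  have hFneg : ∀ t : K, t ^ q = t → (-t) ^ q = -t := by
    intro t ht; rw [hqodd.neg_pow, ht]
  have hFsub : ∀ t s : K, t ^ q = t → s ^ q = s → (t - s) ^ q = t - s := by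
    intro t s ht hs
    rw [sub_eq_add_neg, frob, ht, hFneg s hs, ← sub_eq_add_neg]
  have hFmul : ∀ t s : K, t ^ q = t → s ^ q = s → (t * s) ^ q = t * s := by
    intro t s ht hs; rw [mul_pow, ht, hs]
  have hFinv : ∀ t : K, t ^ q = t → (t⁻¹) ^ q = t⁻¹ := by
    intro t ht; rw [inv_pow, ht]
  -- scalarSet closure
  have szero : (0 : K) ∈ scalarSet K q θ := ⟨0, hF0, by ring⟩
  have sneg : ∀ c : K, c ∈ scalarSet K q θ → -c ∈ scalarSet K q θ := by
    rintro c ⟨t, ht, rfl⟩; exact ⟨-t, hFneg t ht, by ring⟩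
  have ssub : ∀ c d : K, c ∈ scalarSet K q θ → d ∈ scalarSet K q θ →
      c - d ∈ scalarSet K q θ := by
    rintro c d ⟨t, ht, rfl⟩ ⟨s, hs, rfl⟩; exact ⟨t - s, hFsub t s ht hs, by ring⟩
  have sadd : ∀ c d : K, c ∈ scalarSet K q θ → d ∈ scalarSet K q θ →
      c + d ∈ scalarSet K q θ := by
    intro c d hc hd
    have := ssub c (-d) hc (sneg d hd)
    simpa using this
  have ssmul : ∀ (t c : K), t ^ q = t → c ∈ scalarSet K q θ → t * c ∈ scalarSet K q θ := by
    rintro t c ht ⟨s, hs, rfl⟩; exact ⟨t * s, hFmul t s ht hs, by ring⟩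
  have scancel : ∀ (t c : K), t ^ q = t → t ≠ 0 → t * c ∈ scalarSet K q θ →
      c ∈ scalarSet K q θ := by
    intro t c ht ht0 h
    have := ssmul t⁻¹ (t * c) (hFinv t ht) h
    rwa [inv_mul_cancel_left₀ ht0] at this
  -- squares lying in scalarSet K q θ are zero
  have key1 : ∀ y : K, y ^ 2 ∈ scalarSet K q θ → y = 0 := by
    rintro y ⟨t, ht, hyt⟩
    by_contra hy0
    have ht0 : t ≠ 0 := by
      rintro rfl
      exact hy0 (pow_eq_zero_iff (n := 2) (by norm_num) |>.mp (by rw [hyt, zero_mul]))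
    refine hns ⟨y ^ (q + 1) * t⁻¹, ?_, ?_⟩
    · have h1 : (y ^ (q + 1)) ^ q = y ^ (q + 1) := by
        rw [← pow_mul, mul_comm (q+1) q, mul_add, mul_one, pow_add, hx2, ← pow_succ']
      rw [mul_pow, h1, hFinv t ht]
    · have h2 : (y ^ (q + 1)) ^ 2 = (t * θ) ^ (q + 1) := by
        rw [← pow_mul, mul_comm (q+1) 2, pow_mul, hyt]
      have h3 : t ^ (q + 1) = t ^ 2 := by rw [pow_succ, ht, pow_two]
      field_simp
      rw [h2, mul_pow, h3]
  -- each element of F is a square in K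
  have key2 : ∀ t : K, t ^ q = t → IsSquare t := by
    intro t ht
    rcases eq_or_ne t 0 with rfl | ht0
    · exact ⟨0, by ring⟩
    have hr2 : ringChar K ≠ 2 := by
      rw [ringChar.eq K p]
      rintro rfl
      simp [Nat.odd_iff] at hpodd
    rw [FiniteField.isSquare_iff hr2 ht0]
    have harith : Fintype.card K / 2 = (q - 1) * ((q + 1) / 2) := by
      obtain ⟨k, hk⟩ := hqodd
      have e1 : Fintype.card K = 4 * (k * k) + 4 * k + 1 := by
        rw [hcard, hk]; ring
      have e2 : (q - 1) * ((q + 1) / 2) = 2 * (k * k) + 2 * k := by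
        have h1 : q - 1 = 2 * k := by omega
        have h2 : (q + 1) / 2 = k + 1 := by omega
        rw [h1, h2]; ring
      omega
    have htq1 : t ^ (q - 1) = 1 := by
      have : t ^ (q - 1) * t = t := by
        rw [← pow_succ]
        have : q - 1 + 1 = q := by omega
        rw [this, ht]
      exact mul_right_cancel₀ ht0 (by rw [this, one_mul])
    rw [harith, pow_mul, htq1, one_pow]
  -- cardinality of F
  have hFcard : (Finset.univ.filter (fun t : K => t ^ q = t)).card = q := by
    obtain ⟨g, hg⟩ := IsCyclic.exists_generator (α := Kˣ)
    have hog : orderOf g = q ^ 2 - 1 := by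
      rw [orderOf_eq_card_of_forall_mem_zpowers hg, Nat.card_eq_fintype_card,
        Fintype.card_units (α := K), hcard]
    have hmulfact : (q + 1) * (q - 1) = q ^ 2 - 1 := by
      obtain ⟨k, hk⟩ := hqodd
      have e1 : q ^ 2 = 4 * (k * k) + 4 * k + 1 := by rw [hk]; ring
      have e2 : (q + 1) * (q - 1) = 4 * (k * k) + 4 * k := by
        have h1 : q - 1 = 2 * k := by omega
        have h2 : q + 1 = 2 * k + 2 := by omega
        rw [h1, h2]; ring
      omega
    have hou : orderOf (g ^ (q + 1)) = q - 1 := by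
      rw [orderOf_pow g, hog]
      have hgcd : Nat.gcd (q ^ 2 - 1) (q + 1) = q + 1 :=
        Nat.gcd_eq_right ⟨q - 1, hmulfact.symm⟩
      rw [hgcd, ← hmulfact, Nat.mul_div_cancel_left _ (by omega)]
    set ζ : K := ((g ^ (q + 1) : Kˣ) : K) with hζdef
    have hoζ : orderOf ζ = q - 1 := by rw [hζdef, orderOf_units, hou]
    have hprim : IsPrimitiveRoot ζ (q - 1) := hoζ ▸ IsPrimitiveRoot.orderOf ζ
    have hset : (Finset.univ.filter (fun t : K => t ^ q = t))
        = insert (0 : K) (Polynomial.nthRootsFinset (q - 1) (1 : K)) := by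
      ext x
      simp only [Finset.mem_filter, Finset.mem_univ, true_and, Finset.mem_insert,
        Polynomial.mem_nthRootsFinset (show 0 < q - 1 by omega) (1 : K)]
      constructor
      · intro hx
        rcases eq_or_ne x 0 with rfl | hx0
        · exact Or.inl rfl
        · right
          have : x ^ (q - 1) * x = x := by
            rw [← pow_succ]
            have : q - 1 + 1 = q := by omega
            rw [this, hx]
          exact mul_right_cancel₀ hx0 (by rw [this, one_mul])
      · rintro (rfl | hx)
        · exact hF0
        · have : x ^ q = x ^ (q - 1) * x := by
            rw [← pow_succ]
            congr 1
            omega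
          rw [this, hx, one_mul]
    rw [hset, Finset.card_insert_of_notMem, hprim.card_nthRootsFinset]
    · omega
    · intro h0
      rw [Polynomial.mem_nthRootsFinset (show 0 < q - 1 by omega) (1 : K)] at h0
      rw [zero_pow (show q - 1 ≠ 0 by omega)] at h0
      exact zero_ne_one h0
  refine ⟨hFcard, ?_⟩
  -- the counting function
  set Nb : K → ℕ := fun b => (Finset.univ.filter (fun y : K => y ^ 2 - b ∈ scalarSet K q θ)).card with hNb
  have hNin : ∀ b : K, b ∈ scalarSet K q θ → Nb b = 1 := by
    intro b hb
    have : (Finset.univ.filter (fun y : K => y ^ 2 - b ∈ scalarSet K q θ)) = {0} := by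
      ext y
      simp only [Finset.mem_filter, Finset.mem_univ, true_and, Finset.mem_singleton]
      constructor
      · intro hy
        apply key1
        have := sadd _ _ hy hb
        simpa using this
      · rintro rfl
        simpa using sneg b hb
    show (Finset.univ.filter (fun y : K => y ^ 2 - b ∈ scalarSet K q θ)).card = 1
    rw [this, Finset.card_singleton]
  have hNmul : ∀ (t b : K), t ^ q = t → t ≠ 0 → Nb (t * b) = Nb b := by
    intro t b ht ht0
    obtain ⟨s, hs⟩ := key2 t ht
    have hs0 : s ≠ 0 := by rintro rfl; rw [mul_zero] at hs; exact ht0 hs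
    show (Finset.univ.filter (fun y : K => y ^ 2 - t * b ∈ scalarSet K q θ)).card
      = (Finset.univ.filter (fun y : K => y ^ 2 - b ∈ scalarSet K q θ)).card
    refine Finset.card_bij' (fun y _ => s⁻¹ * y) (fun y _ => s * y) ?_ ?_ ?_ ?_
    · intro y hy
      simp only [Finset.mem_filter, Finset.mem_univ, true_and] at hy ⊢
      have hexp : (s⁻¹ * y) ^ 2 - b = t⁻¹ * (y ^ 2 - t * b) := by
        rw [hs]
        field_simp
      rw [hexp]
      exact ssmul t⁻¹ _ (hFinv t ht) hy
    · intro y hy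
      simp only [Finset.mem_filter, Finset.mem_univ, true_and] at hy ⊢
      have hexp : (s * y) ^ 2 - t * b = t * (y ^ 2 - b) := by
        rw [hs]; ring
      rw [hexp]
      exact ssmul t _ ht hy
    · intro y _; field_simp
    · intro y _; field_simp
  have hNout : ∀ b : K, b ∉ scalarSet K q θ → Nb b = q + 1 := by
    intro b hb
    set Ffin := Finset.univ.filter (fun t : K => t ^ q = t) with hFfin
    -- partition of K into the fibers indexed by t ∈ F
    have hcover : (Finset.univ : Finset K)
        = Ffin.biUnion (fun t => Finset.univ.filter (fun y : K => y ^ 2 - t * b ∈ scalarSet K q θ)) := by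
      -- surjectivity of (t,s) ↦ t*b + s*θ
      have hinj : Set.InjOn (fun ts : K × K => ts.1 * b + ts.2 * θ)
          (↑(Ffin ×ˢ Ffin) : Set (K × K)) := by
        rintro ⟨t, s⟩ hts ⟨t', s'⟩ hts' heq
        simp only [Finset.mem_coe, Finset.mem_product, hFfin,
          Finset.mem_filter, Finset.mem_univ, true_and] at hts hts'
        simp only at heq
        have htt' : t = t' := by
          by_contra hne
          apply hb
          have h1 : (t - t') * b = (s' - s) * θ := by linear_combination heq
          have htne : t - t' ≠ 0 := sub_ne_zero_of_ne hne
          have h2 : b = ((s' - s) * (t - t')⁻¹) * θ := by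
            field_simp
            linear_combination h1
          exact ⟨(s' - s) * (t - t')⁻¹,
            hFmul _ _ (hFsub s' s hts'.2 hts.2)
              (hFinv _ (hFsub t t' hts.1 hts'.1)), h2⟩
        have hss' : s = s' := by
          have : s * θ = s' * θ := by
            have := heq
            rw [htt'] at this
            linear_combination this
          exact mul_right_cancel₀ hθ this
        simp [htt', hss']
      have himg : (Ffin ×ˢ Ffin).image (fun ts : K × K => ts.1 * b + ts.2 * θ)
          = Finset.univ := by
        apply Finset.eq_univ_of_card
        rw [Finset.card_image_of_injOn hinj, Finset.card_product, hFcard, hcard, pow_two]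
      ext y
      simp only [Finset.mem_univ, true_iff, Finset.mem_biUnion]
      have : y ^ 2 ∈ (Ffin ×ˢ Ffin).image (fun ts : K × K => ts.1 * b + ts.2 * θ) := by
        rw [himg]; exact Finset.mem_univ _
      obtain ⟨⟨t, s⟩, hts, heq⟩ := Finset.mem_image.mp this
      simp only [Finset.mem_product, hFfin, Finset.mem_filter, Finset.mem_univ, true_and]
        at hts
      refine ⟨t, by simp [hFfin, hts.1], ?_⟩
      simp only [Finset.mem_filter, Finset.mem_univ, true_and]
      exact ⟨s, hts.2, by linear_combination heq.symm⟩
    have hdisj : ∀ t ∈ Ffin, ∀ t' ∈ Ffin, t ≠ t' →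
        Disjoint (Finset.univ.filter (fun y : K => y ^ 2 - t * b ∈ scalarSet K q θ))
          (Finset.univ.filter (fun y : K => y ^ 2 - t' * b ∈ scalarSet K q θ)) := by
      intro t ht t' ht' hne
      simp only [hFfin, Finset.mem_filter, Finset.mem_univ, true_and] at ht ht'
      rw [Finset.disjoint_left]
      intro y hy hy'
      simp only [Finset.mem_filter, Finset.mem_univ, true_and] at hy hy'
      apply hb
      have h1 : (t - t') * b ∈ scalarSet K q θ := by
        have := ssub _ _ hy' hy
        have heq : y ^ 2 - t' * b - (y ^ 2 - t * b) = (t - t') * b := by ring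
        rwa [heq] at this
      exact scancel (t - t') b (hFsub t t' ht ht') (sub_ne_zero_of_ne hne) h1
    have hsum : ∑ t ∈ Ffin, Nb (t * b) = q ^ 2 := by
      have := Finset.card_biUnion hdisj
      rw [← hcover] at this
      rw [← this, Finset.card_univ, hcard]
    have h0mem : (0 : K) ∈ Ffin := by simp [hFfin, hF0]
    have hsplit : Nb (0 * b) + ∑ t ∈ Ffin.erase 0, Nb (t * b) = q ^ 2 := by
      rw [← hsum]
      exact Finset.add_sum_erase Ffin (fun t => Nb (t * b)) h0mem
    have hN0 : Nb (0 * b) = 1 := by rw [zero_mul]; exact hNin 0 szero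
    have hconst : ∀ t ∈ Ffin.erase 0, Nb (t * b) = Nb b := by
      intro t ht
      rw [Finset.mem_erase, hFfin, Finset.mem_filter] at ht
      exact hNmul t b ht.2.2 ht.1
    have hcount : ∑ t ∈ Ffin.erase 0, Nb (t * b) = (q - 1) * Nb b := by
      rw [Finset.sum_congr rfl hconst, Finset.sum_const, smul_eq_mul]
      congr 1
      rw [Finset.card_erase_of_mem h0mem, hFcard]
    have hfinal : 1 + (q - 1) * Nb b = q ^ 2 := by
      rw [hN0, hcount] at hsplit; exact hsplit
    have hmulfact : (q - 1) * (q + 1) = q ^ 2 - 1 := by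
      obtain ⟨k, hk⟩ := hqodd
      have e1 : q ^ 2 = 4 * (k * k) + 4 * k + 1 := by rw [hk]; ring
      have e2 : (q - 1) * (q + 1) = 4 * (k * k) + 4 * k := by
        have h1 : q - 1 = 2 * k := by omega
        have h2 : q + 1 = 2 * k + 2 := by omega
        rw [h1, h2]; ring
      omega
    have : (q - 1) * Nb b = (q - 1) * (q + 1) := by omega
    exact Nat.eq_of_mul_eq_mul_left (by omega) this
  exact fun b => ⟨hNin b, hNout b⟩

/-- Theorem 2.4 (general part).  If `f` is planar on `K = F_{q²}` with
`#{x : f(x) = c} = #{y : y² = c}` for all `c`, and `θ ≠ 0` is such that `θ^{q+1}`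
is a nonsquare in the subfield `F` of order `q`, then for all `a b` the number of
`x` with `f(x+a) − b ∈ θF` is `1` if `b ∈ θF` and `q+1` otherwise; hence `U_θ`
is a unital in `Π(f)`. -/
theorem stmt2 (p n q : ℕ) (hp : Nat.Prime p) (hpodd : Odd p) (hn : 0 < n) (hq : q = p ^ n)
    (K : Type) [Field K] [Fintype K] (hcard : Fintype.card K = q ^ 2)
    (f : K → K)
    (hplanar : ∀ a : K, a ≠ 0 → Function.Bijective (fun x : K => f (x + a) - f x))
    (hfibers : ∀ c : K, {x : K | f x = c}.ncard = {y : K | y ^ 2 = c}.ncard)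
    (θ : K) (hθ : θ ≠ 0)
    (hns : ¬ ∃ s : K, s ^ q = s ∧ s ^ 2 = θ ^ (q + 1)) :
    (∀ a b : K,
      (b ∈ scalarSet K q θ → {x : K | f (x + a) - b ∈ scalarSet K q θ}.ncard = 1) ∧
      (b ∉ scalarSet K q θ → {x : K | f (x + a) - b ∈ scalarSet K q θ}.ncard = q + 1)) ∧
    (∀ L ∈ shiftLines K f,
      (L ∩ unitalSet K q θ).ncard = 1 ∨ (L ∩ unitalSet K q θ).ncard = q + 1) := by
  classical
  obtain ⟨hFcard, hNcount⟩ := aux_main p n q hp hpodd hn hq K hcard θ hθ hns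
  -- fibers of f equal fibers of squaring, as Finset cards
  have hfib' : ∀ c : K, (Finset.univ.filter fun x : K => f x = c).card
      = (Finset.univ.filter fun y : K => y ^ 2 = c).card := by
    intro c
    have := hfibers c
    rwa [ncard_filter, ncard_filter] at this
  -- fibers of x ↦ f (x + a)
  have hfibshift : ∀ (a : K) (c : K), (Finset.univ.filter fun x : K => f (x + a) = c).card
      = (Finset.univ.filter fun y : K => y ^ 2 = c).card := by
    intro a c
    rw [← hfib' c]
    refine Finset.card_bij' (fun x _ => x + a) (fun x _ => x - a) ?_ ?_ ?_ ?_
    · intro x hx; simpa using (by simpa using hx : f (x + a) = c)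
    · intro x hx
      simp only [Finset.mem_filter, Finset.mem_univ, true_and] at hx ⊢
      rw [sub_add_cancel]
      exact hx
    · intro x _; ring
    · intro x _; ring
  -- the main count for f
  have hmain : ∀ a b : K, (Finset.univ.filter fun x : K => f (x + a) - b ∈ scalarSet K q θ).card
      = (Finset.univ.filter fun y : K => y ^ 2 - b ∈ scalarSet K q θ).card := by
    intro a b
    have h1 : (Finset.univ.filter fun x : K => f (x + a) - b ∈ scalarSet K q θ)
        = (Finset.univ.filter fun x : K =>
            f (x + a) ∈ Finset.univ.filter (fun c : K => c - b ∈ scalarSet K q θ)) := by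
      ext x; simp
    have h2 : (Finset.univ.filter fun y : K => y ^ 2 - b ∈ scalarSet K q θ)
        = (Finset.univ.filter fun y : K =>
            y ^ 2 ∈ Finset.univ.filter (fun c : K => c - b ∈ scalarSet K q θ)) := by
      ext y; simp
    rw [h1, h2]
    exact fiber_transfer _ _ _ (hfibshift a)
  have hpart1 : ∀ a b : K,
      (b ∈ scalarSet K q θ → {x : K | f (x + a) - b ∈ scalarSet K q θ}.ncard = 1) ∧
      (b ∉ scalarSet K q θ → {x : K | f (x + a) - b ∈ scalarSet K q θ}.ncard = q + 1) := by
    intro a b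
    obtain ⟨hin, hout⟩ := hNcount b
    constructor
    · intro hb
      rw [ncard_filter, hmain a b]
      exact hin hb
    · intro hb
      rw [ncard_filter, hmain a b]
      exact hout hb
  refine ⟨hpart1, ?_⟩
  intro L hL
  rcases hL with ⟨a, b, rfl⟩ | ⟨a, rfl⟩ | rfl
  · -- affine line
    have hset : affLine K f a b ∩ unitalSet K q θ
        = Sum.inl '' ((fun x => (x, f (x + a) - b)) '' {x : K | f (x + a) - b ∈ scalarSet K q θ}) := by
      ext P
      constructor
      · rintro ⟨hLm, hU⟩
        rcases hLm with ⟨x, rfl⟩ | rfl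
        · rcases hU with ⟨x', t, ht, heq⟩ | heq
          · rw [Sum.inl.injEq, Prod.mk.injEq] at heq
            exact Set.mem_image_of_mem _ (Set.mem_image_of_mem _ ⟨t, ht, heq.2⟩)
          · exact absurd heq (by simp)
        · rcases hU with ⟨x', t, ht, heq⟩ | heq
          · exact absurd heq (by simp)
          · exact absurd heq (by simp)
      · rintro ⟨pt, ⟨x, hx, rfl⟩, rfl⟩
        obtain ⟨t, ht, htθ⟩ := hx
        exact ⟨Or.inl ⟨x, rfl⟩, Or.inl ⟨x, t, ht, by simp only [htθ]⟩⟩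
    rw [hset, Set.ncard_image_of_injective _ Sum.inl_injective,
      Set.ncard_image_of_injective _ (fun x y hxy => congrArg Prod.fst hxy)]
    obtain ⟨hin, hout⟩ := hpart1 a b
    by_cases hb : b ∈ scalarSet K q θ
    · exact Or.inl (hin hb)
    · exact Or.inr (hout hb)
  · -- vertical line
    right
    have hset : vertLine K a ∩ unitalSet K q θ
        = insert (Sum.inr (Sum.inr ()) : ShiftPt K)
            (Sum.inl '' ((fun t => (a, t * θ)) '' {t : K | t ^ q = t})) := by
      ext P
      simp only [vertLine, unitalSet, Set.mem_inter_iff, Set.mem_setOf_eq, Set.mem_insert_iff,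
        Set.mem_image]
      constructor
      · rintro ⟨(⟨y, rfl⟩ | rfl), hU⟩
        · rcases hU with ⟨x', t, ht, heq⟩ | heq
          · simp only [Sum.inl.injEq, Prod.mk.injEq] at heq
            right
            exact ⟨(a, t * θ), ⟨t, ht, rfl⟩, by rw [heq.2]⟩
          · simp at heq
        · exact Or.inl rfl
      · rintro (rfl | ⟨⟨x', y'⟩, ⟨t, ht, heq⟩, rfl⟩)
        · exact ⟨Or.inr rfl, Or.inr rfl⟩
        · cases heq
          exact ⟨Or.inl ⟨t * θ, rfl⟩, Or.inl ⟨a, t, ht, rfl⟩⟩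
    rw [hset, Set.ncard_insert_of_notMem (by rintro ⟨_, _, h⟩; simp at h),
      Set.ncard_image_of_injective _ Sum.inl_injective,
      Set.ncard_image_of_injective _
        (fun s t hst => mul_right_cancel₀ hθ (congrArg Prod.snd hst))]
    rw [ncard_filter, hFcard]
  · -- line at infinity
    left
    have hset : lineAtInf K ∩ unitalSet K q θ = {Sum.inr (Sum.inr ())} := by
      ext P
      simp only [lineAtInf, unitalSet, Set.mem_inter_iff, Set.mem_setOf_eq,
        Set.mem_singleton_iff]
      constructor
      · rintro ⟨⟨s, rfl⟩, hU⟩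
        rcases hU with ⟨x, t, ht, heq⟩ | heq
        · simp at heq
        · exact heq
      · rintro rfl
        exact ⟨⟨Sum.inr (), rfl⟩, Or.inr rfl⟩
    rw [hset, Set.ncard_singleton]
end

section
/- Let q be an odd prime power, K a finite field with q² elements, F its subfield of order q, and θ ∈ K \ {0} with θ^{q+1} a nonsquare in F. Then for all a, b ∈ K the number of x ∈ K with (x+a)² − b ∈ θF equals 1 if b ∈ θF and equals q+1 if b ∉ θF; hence U_θ = {(x, tθ) : x ∈ K, t ∈ F} ∪ {(∞)} is a unital in the Desarguesian shift plane Π(f) for f(x) = x². -/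
open Finset Polynomial

private lemma ncard_setOf {K : Type} [Fintype K] (pr : K → Prop) [DecidablePred pr] :
    {x : K | pr x}.ncard = (Finset.univ.filter pr).card := by
  rw [← Set.ncard_coe_finset]
  congr 1
  ext x
  simp

private theorem core3 (p n q : ℕ) (hp : Nat.Prime p) (hpodd : Odd p) (hn : 0 < n) (hq : q = p ^ n)
    (K : Type) [Field K] [Fintype K] (hcard : Fintype.card K = q ^ 2)
    (θ : K) (hθ : θ ≠ 0)
    (hns : ¬ ∃ s : K, s ^ q = s ∧ s ^ 2 = θ ^ (q + 1)) :
    ({t : K | t ^ q = t}).ncard = q ∧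
    ∀ a b : K,
      (b ∈ scalarSet K q θ → {x : K | (x + a) ^ 2 - b ∈ scalarSet K q θ}.ncard = 1) ∧
      (b ∉ scalarSet K q θ → {x : K | (x + a) ^ 2 - b ∈ scalarSet K q θ}.ncard = q + 1) := by
  classical
  -- basic numeric facts
  have hq1 : 1 < q := by
    rw [hq]; exact Nat.one_lt_pow hn.ne' hp.one_lt
  have hq0 : q ≠ 0 := by omega
  have hqodd : Odd q := by rw [hq]; exact hpodd.pow
  have hq2odd : Odd (q ^ 2) := hqodd.pow
  -- characteristic
  haveI : CharP K (ringChar K) := ringChar.charP K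
  obtain ⟨m, hrprime, hm⟩ := FiniteField.card K (ringChar K)
  have hrp : ringChar K = p := by
    have h1 : ringChar K ∣ q ^ 2 := by
      rw [← hcard, hm]
      exact dvd_pow_self _ (by exact_mod_cast m.ne_zero)
    have h2 : ringChar K ∣ p := by
      have h3 : ringChar K ∣ p ^ (n * 2) := by rwa [hq, ← pow_mul] at h1
      exact hrprime.dvd_of_dvd_pow h3
    exact (Nat.prime_dvd_prime_iff_eq hrprime hp).mp h2
  haveI hcp : CharP K p := by rw [← hrp]; infer_instance
  haveI : Fact p.Prime := ⟨hp⟩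
  have hp2 : p ≠ 2 := by
    rintro rfl
    exact (by norm_num : ¬ Odd 2) hpodd
  have hchar2 : ringChar K ≠ 2 := by rw [hrp]; exact hp2
  have h2K : (2 : K) ≠ 0 := by
    intro h
    have := (CharP.cast_eq_zero_iff K p 2).mp (by exact_mod_cast h)
    exact hp2 ((Nat.prime_dvd_prime_iff_eq hp Nat.prime_two).mp this)
  -- Frobenius
  have hfrob : ∀ x y : K, (x + y) ^ q = x ^ q + y ^ q := by
    intro x y; rw [hq]; exact add_pow_char_pow x y p n
  have hqq : ∀ z : K, z ^ q ^ 2 = z := by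
    intro z; rw [← hcard]; exact FiniteField.pow_card z
  have hpqq : ∀ z : K, (z ^ q) ^ q = z := by
    intro z; rw [← pow_mul, ← pow_two]; exact hqq z
  -- closure facts for F
  have hFneg : ∀ x : K, (-x) ^ q = -x ^ q := fun x => hqodd.neg_pow x
  have hFsub : ∀ x y : K, (x - y) ^ q = x ^ q - y ^ q := by
    intro x y
    rw [sub_eq_add_neg, hfrob, hFneg, sub_eq_add_neg]
  have h2F : (2 : K) ^ q = 2 := by
    rw [← one_add_one_eq_two, hfrob]; simp
  -- the norm lands in F
  have hnormF : ∀ z : K, (z ^ (q + 1)) ^ q = z ^ (q + 1) := by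
    intro z
    have h1 : z ^ (q + 1) = z ^ q * z := pow_succ z q
    rw [h1, mul_pow, hpqq, mul_comm]
  -- A = θ^{q+1}
  set A : K := θ ^ (q + 1) with hA
  have hA0 : A ≠ 0 := pow_ne_zero _ hθ
  have hA' : A = θ ^ q * θ := pow_succ θ q
  have hAF : A ^ q = A := hnormF θ
  -- no nonzero square in θF
  have sqThetaF : ∀ y t : K, t ^ q = t → y ^ 2 = t * θ → y = 0 := by
    intro y t ht hyt
    by_contra hy0
    have ht0 : t ≠ 0 := by
      rintro rfl
      rw [zero_mul, pow_eq_zero_iff (by norm_num)] at hyt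
      exact hy0 hyt
    refine hns ⟨y ^ (q + 1) * t⁻¹, ?_, ?_⟩
    · rw [mul_pow, hnormF, inv_pow, ht]
    · have h1 : (y ^ (q + 1)) ^ 2 = (y ^ 2) ^ (q + 1) := by
        rw [← pow_mul, ← pow_mul, mul_comm]
      have h2 : t ^ (q + 1) = t ^ 2 := by
        rw [pow_succ, ht, pow_two]
      field_simp
      rw [h1, hyt, mul_pow, h2]
  -- θ^(q²-1) = 1
  have hθ1 : θ ^ (q ^ 2 - 1) = 1 := by
    rw [← hcard]; exact FiniteField.pow_card_sub_one_eq_one θ hθ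
  -- A^((q²-1)/2) = 1
  have hexp1 : A ^ ((q ^ 2 - 1) / 2) = 1 := by
    obtain ⟨k, hk⟩ := hqodd
    have hsq : q ^ 2 = 4 * (k * k) + 4 * k + 1 := by rw [hk]; ring
    have ha : q ^ 2 - 1 = 2 * (2 * (k * k) + 2 * k) := by omega
    have hb : q + 1 = 2 * (k + 1) := by omega
    have e : (q + 1) * ((q ^ 2 - 1) / 2) = (q ^ 2 - 1) * ((q + 1) / 2) := by
      rw [ha, hb, Nat.mul_div_cancel_left _ two_pos, Nat.mul_div_cancel_left _ two_pos]
      ring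
    rw [hA, ← pow_mul, e, pow_mul, hθ1, one_pow]
  have hqodd : Odd q := by rw [hq]; exact hpodd.pow
  have hcard2 : Fintype.card K / 2 = (q ^ 2 - 1) / 2 := by
    rw [hcard]
    obtain ⟨j, hj⟩ := hq2odd
    omega
  have hsqA : IsSquare A := by
    rw [FiniteField.isSquare_iff hchar2 hA0, hcard2]
    exact hexp1
  obtain ⟨α, hαmul⟩ := hsqA
  have hα2 : α ^ 2 = A := by rw [pow_two, ← hαmul]
  have hα0 : α ≠ 0 := by
    intro h
    apply hA0
    rw [← hα2, h]
    ring
  have hαq : α ^ q = -α := by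
    have h1 : α ^ q * α ^ q = α * α := by
      rw [← mul_pow, ← hαmul, hAF, hαmul]
    rcases mul_self_eq_mul_self_iff.mp h1 with h | h
    · exact absurd ⟨α, h, hα2⟩ hns
    · exact h
  -- decomposition of K as F ⊕ Fα
  have decompE : ∀ z : K, ∃ u v : K, u ^ q = u ∧ v ^ q = v ∧ z = u + v * α := by
    intro z
    refine ⟨(z + z ^ q) / 2, (z - z ^ q) / (2 * α), ?_, ?_, ?_⟩
    · rw [div_pow, hfrob, hpqq, h2F, add_comm (z ^ q) z]
    · rw [div_pow, hFsub, hpqq, mul_pow, h2F, hαq]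
      field_simp
      ring
    · field_simp
      ring
  have decompU : ∀ u v u' v' : K, u ^ q = u → v ^ q = v → u' ^ q = u' → v' ^ q = v' →
      u + v * α = u' + v' * α → u = u' ∧ v = v' := by
    intro u v u' v' hu hv hu' hv' heq
    by_cases hvv : v = v'
    · subst hvv
      exact ⟨by linear_combination heq, rfl⟩
    · exfalso
      have hα' : α = (u' - u) / (v - v') := by
        field_simp [sub_ne_zero.mpr hvv]
        linear_combination heq
      have hfix : α ^ q = α := by
        rw [hα', div_pow, hFsub, hFsub, hu, hv, hu', hv']
      rw [hαq] at hfix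
      apply hα0
      have h2 : (2 : K) * α = 0 := by linear_combination -hfix
      rcases mul_eq_zero.mp h2 with h | h
      · exact absurd h h2K
      · exact h
  -- the subfield F as a finset
  set Ff : Finset K := univ.filter (fun t : K => t ^ q = t) with hFf
  have cardFfsq : Ff.card * Ff.card = q ^ 2 := by
    have hbij : (Ff ×ˢ Ff).card = (univ : Finset K).card := by
      apply Finset.card_bij (fun pr _ => pr.1 + pr.2 * α)
      · intro pr _; exact mem_univ _
      · intro pr hpr pr' hpr' heq
        simp only [hFf, mem_product, mem_filter, mem_univ, true_and] at hpr hpr'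
        obtain ⟨h1, h2⟩ := decompU _ _ _ _ hpr.1 hpr.2 hpr'.1 hpr'.2 heq
        exact Prod.ext h1 h2
      · intro z _
        obtain ⟨u, v, hu, hv, hz⟩ := decompE z
        exact ⟨(u, v), by simp [hFf, hu, hv], hz.symm⟩
    rw [card_product] at hbij
    rw [hbij, card_univ, hcard]
  have cardFf : Ff.card = q := by
    have h1 : Ff.card ^ 2 = q ^ 2 := by rw [pow_two, cardFfsq]
    exact Nat.pow_left_injective (by norm_num) h1
  -- fiber bound for the norm map
  have fiberBound : ∀ c : K, (univ.filter (fun z : K => z ^ (q + 1) = c)).card ≤ q + 1 := by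
    intro c
    have hne : (X ^ (q + 1) - C c : K[X]) ≠ 0 := X_pow_sub_C_ne_zero (by omega) c
    calc (univ.filter (fun z : K => z ^ (q + 1) = c)).card
        ≤ (X ^ (q + 1) - C c : K[X]).roots.toFinset.card := by
          apply Finset.card_le_card
          intro z hz
          simp only [mem_filter, mem_univ, true_and] at hz
          rw [Multiset.mem_toFinset, mem_roots hne]
          simp [IsRoot, hz, sub_eq_zero]
      _ ≤ Multiset.card (X ^ (q + 1) - C c : K[X]).roots := Multiset.toFinset_card_le _
      _ ≤ (X ^ (q + 1) - C c : K[X]).natDegree := card_roots' _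
      _ = q + 1 := natDegree_X_pow_sub_C
  -- exact norm fiber count
  have normFiber : ∀ c : K, c ^ q = c → c ≠ 0 →
      (univ.filter (fun z : K => z ^ (q + 1) = c)).card = q + 1 := by
    intro c hcF hc0
    set s : Finset K := univ.filter (fun z : K => z ≠ 0) with hs
    set t : Finset K := univ.filter (fun w : K => w ^ q = w ∧ w ≠ 0) with ht
    have hst : ∀ z ∈ s, z ^ (q + 1) ∈ t := by
      intro z hz
      simp only [hs, mem_filter, mem_univ, true_and] at hz
      simp only [ht, mem_filter, mem_univ, true_and]
      exact ⟨hnormF z, pow_ne_zero _ hz⟩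
    have hsum := Finset.card_eq_sum_card_fiberwise hst
    have hscard : s.card = q ^ 2 - 1 := by
      rw [hs, filter_ne', card_erase_of_mem (mem_univ 0), card_univ, hcard]
    have htcard : t.card = q - 1 := by
      have he : t = Ff.erase 0 := by
        rw [← filter_ne']
        ext w
        simp only [ht, hFf, mem_filter, mem_univ, true_and, and_comm]
      rw [he, card_erase_of_mem, cardFf]
      simp [hFf, zero_pow hq0]
    have hle : ∀ w ∈ t, (s.filter (fun z => z ^ (q + 1) = w)).card ≤ q + 1 := by
      intro w _
      calc (s.filter (fun z => z ^ (q + 1) = w)).card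
          ≤ (univ.filter (fun z : K => z ^ (q + 1) = w)).card :=
            Finset.card_le_card (filter_subset_filter _ (subset_univ s))
        _ ≤ q + 1 := fiberBound w
    have htotal : (q - 1) * (q + 1) = q ^ 2 - 1 := by
      obtain ⟨m', hm'⟩ : ∃ m', q = m' + 1 := ⟨q - 1, by omega⟩
      subst hm'
      simp only [Nat.add_sub_cancel]
      have h2 : (m' + 1) ^ 2 = m' * m' + 2 * m' + 1 := by ring
      have h3 : m' * (m' + 1 + 1) = m' * m' + 2 * m' := by ring
      omega
    have hkey : ∑ w ∈ t, (s.filter (fun z => z ^ (q + 1) = w)).card = ∑ w ∈ t, (q + 1) := by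
      rw [← hsum, hscard, Finset.sum_const, smul_eq_mul, htcard, htotal]
    have hall := (Finset.sum_eq_sum_iff_of_le hle).mp hkey
    have hfil : univ.filter (fun z : K => z ^ (q + 1) = c)
        = s.filter (fun z => z ^ (q + 1) = c) := by
      ext z
      simp only [hs, mem_filter, mem_univ, true_and, filter_filter]
      constructor
      · intro h
        refine ⟨?_, h⟩
        intro h0
        rw [h0, zero_pow (by omega)] at h
        exact hc0 h.symm
      · tauto
    rw [hfil]
    exact hall c (by simp [ht, hcF, hc0])
  -- conic count
  have conic : ∀ c : K, c ^ q = c → c ≠ 0 →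
      ((Ff ×ˢ Ff).filter (fun pr : K × K => pr.1 ^ 2 - A * pr.2 ^ 2 = c)).card = q + 1 := by
    intro c hcF hc0
    rw [← normFiber c hcF hc0]
    have hnorm : ∀ u v : K, u ^ q = u → v ^ q = v →
        (u + v * α) ^ (q + 1) = u ^ 2 - A * v ^ 2 := by
      intro u v hu hv
      have h1 : (u + v * α) ^ q = u - v * α := by
        rw [hfrob, mul_pow, hu, hv, hαq]
        ring
      rw [pow_succ, h1, ← hα2]
      ring
    apply Finset.card_bij (fun pr _ => pr.1 + pr.2 * α)
    · intro pr hpr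
      simp only [mem_filter, mem_product, mem_univ, true_and, hFf] at hpr
      obtain ⟨⟨hu, hv⟩, heq⟩ := hpr
      simp only [mem_filter, mem_univ, true_and]
      rw [hnorm _ _ hu hv, heq]
    · intro pr hpr pr' hpr' heq
      simp only [mem_filter, mem_product, mem_univ, true_and, hFf] at hpr hpr'
      obtain ⟨h1, h2⟩ := decompU _ _ _ _ hpr.1.1 hpr.1.2 hpr'.1.1 hpr'.1.2 heq
      exact Prod.ext h1 h2
    · intro z hz
      simp only [mem_filter, mem_univ, true_and] at hz
      obtain ⟨u, v, hu, hv, hzuv⟩ := decompE z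
      refine ⟨(u, v), ?_, hzuv.symm⟩
      simp only [mem_filter, mem_product, mem_univ, true_and, hFf]
      refine ⟨⟨hu, hv⟩, ?_⟩
      rw [← hnorm _ _ hu hv, ← hzuv, hz]
  -- square-root count transfer
  have sqrtTransfer : ∀ w : K, w ≠ 0 →
      (univ.filter (fun y : K => y ^ 2 = w)).card
        = (univ.filter (fun y : K => y ^ q = y ∧ y ^ 2 = w ^ (q + 1))).card := by
    intro w hw
    have hsqswap : ∀ y : K, (y ^ (q + 1)) ^ 2 = (y ^ 2) ^ (q + 1) := by
      intro y
      rw [← pow_mul, ← pow_mul, mul_comm]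
    by_cases hcase : ∃ s : K, s ^ q = s ∧ s ^ 2 = w ^ (q + 1)
    · obtain ⟨s, hsF, hs2⟩ := hcase
      have hs0 : s ≠ 0 := by
        rintro rfl
        apply pow_ne_zero (q + 1) hw
        rw [← hs2, zero_pow (by norm_num : (2:ℕ) ≠ 0)]
      have hsne : s ≠ -s := by
        intro h
        apply hs0
        have h2 : (2 : K) * s = 0 := by linear_combination h
        rcases mul_eq_zero.mp h2 with h' | h'
        · exact absurd h' h2K
        · exact h'
      have hR : univ.filter (fun y : K => y ^ q = y ∧ y ^ 2 = w ^ (q + 1)) = {s, -s} := by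
        ext y
        simp only [mem_filter, mem_univ, true_and, mem_insert, mem_singleton]
        constructor
        · rintro ⟨hyF, hy2⟩
          have h1 : y * y = s * s := by
            rw [← pow_two, ← pow_two, hy2, hs2]
          exact mul_self_eq_mul_self_iff.mp h1
        · rintro (rfl | rfl)
          · exact ⟨hsF, hs2⟩
          · exact ⟨by rw [hFneg, hsF], by rw [neg_sq]; exact hs2⟩
      have hs1 : s ^ (q - 1) = 1 := by
        have h1 : s * s ^ (q - 1) = s * 1 := by
          rw [mul_one, ← pow_succ']
          have he : q - 1 + 1 = q := by omega
          rw [he, hsF]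
        exact mul_left_cancel₀ hs0 h1
      have hwpow : w ^ ((q ^ 2 - 1) / 2) = 1 := by
        obtain ⟨k, hk⟩ := hqodd
        have hsq : q ^ 2 = 4 * (k * k) + 4 * k + 1 := by rw [hk]; ring
        have h3 : (q - 1) / 2 = k := by omega
        have h4 : (q + 1) * k = 2 * (k * k) + 2 * k := by rw [hk]; ring
        have h5 : (q ^ 2 - 1) / 2 = (q + 1) * ((q - 1) / 2) := by
          rw [h3]; omega
        have h6 : 2 * ((q - 1) / 2) = q - 1 := by omega
        rw [h5, pow_mul]
        calc (w ^ (q + 1)) ^ ((q - 1) / 2) = (s ^ 2) ^ ((q - 1) / 2) := by rw [hs2]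
          _ = s ^ (2 * ((q - 1) / 2)) := by rw [← pow_mul]
          _ = s ^ (q - 1) := by rw [h6]
          _ = 1 := hs1
      have hsqw : IsSquare w := by
        rw [FiniteField.isSquare_iff hchar2 hw, hcard2]
        exact hwpow
      obtain ⟨r, hr⟩ := hsqw
      have hr2 : r ^ 2 = w := by rw [pow_two, ← hr]
      have hr0 : r ≠ 0 := by
        rintro rfl
        apply hw
        rw [← hr2, zero_pow (by norm_num : (2:ℕ) ≠ 0)]
      have hrne : r ≠ -r := by
        intro h
        apply hr0
        have h2 : (2 : K) * r = 0 := by linear_combination h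
        rcases mul_eq_zero.mp h2 with h' | h'
        · exact absurd h' h2K
        · exact h'
      have hL : univ.filter (fun y : K => y ^ 2 = w) = {r, -r} := by
        ext y
        simp only [mem_filter, mem_univ, true_and, mem_insert, mem_singleton]
        constructor
        · intro hy2
          have h1 : y * y = r * r := by
            rw [← pow_two, ← pow_two, hy2, hr2]
          exact mul_self_eq_mul_self_iff.mp h1
        · rintro (rfl | rfl)
          · exact hr2
          · rw [neg_sq]; exact hr2
      rw [hL, hR, card_pair hrne, card_pair hsne]
    · have hR : univ.filter (fun y : K => y ^ q = y ∧ y ^ 2 = w ^ (q + 1)) = ∅ := by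
        rw [Finset.filter_eq_empty_iff]
        intro y _ hy
        exact hcase ⟨y, hy⟩
      have hL : univ.filter (fun y : K => y ^ 2 = w) = ∅ := by
        rw [Finset.filter_eq_empty_iff]
        intro y _ hy2
        refine hcase ⟨y ^ (q + 1), hnormF y, ?_⟩
        rw [hsqswap, hy2]
      rw [hL, hR]
  -- main count for b ∉ θF
  have countMain : ∀ b : K, b ∉ scalarSet K q θ →
      (univ.filter (fun y : K => ∃ t : K, t ^ q = t ∧ y ^ 2 - b = t * θ)).card = q + 1 := by
    intro b hbn
    set B : K := b * θ ^ q + b ^ q * θ with hB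
    have hBF : B ^ q = B := by
      rw [hB, hfrob, mul_pow, mul_pow, hpqq, hpqq, add_comm]
    set Cc : K := b ^ (q + 1) with hCc
    have hCcF : Cc ^ q = Cc := hnormF b
    have hCc' : Cc = b ^ q * b := pow_succ b q
    set δ : K := b * θ ^ q - b ^ q * θ with hδ
    have hδ0 : δ ≠ 0 := by
      rw [hδ, sub_ne_zero]
      intro hδeq
      apply hbn
      refine ⟨b * θ⁻¹, ?_, by field_simp⟩
      rw [mul_pow, inv_pow]
      field_simp
      linear_combination -hδeq
    have hΔ : B ^ 2 - 4 * (A * Cc) = δ ^ 2 := by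
      rw [hB, hδ, hA', hCc']
      ring
    set C' : K := Cc - B ^ 2 / (4 * A) with hC'
    have h4K : (4 : K) ≠ 0 := by
      intro h4
      apply h2K
      have h44 : (2 : K) * 2 = 0 := by linear_combination h4
      rcases mul_eq_zero.mp h44 with h | h <;> exact h
    have h4A0 : (4 : K) * A ≠ 0 := mul_ne_zero h4K hA0
    have hC'0 : C' ≠ 0 := by
      intro h0
      apply pow_ne_zero 2 hδ0
      have h1 : C' * (4 * A) = 4 * (A * Cc) - B ^ 2 := by
        rw [hC']
        field_simp
      rw [h0, zero_mul] at h1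
      linear_combination h1 + hΔ
    have h4F : (4 : K) ^ q = 4 := by
      have h44 : (4 : K) = 2 * 2 := by norm_num
      rw [h44, mul_pow, h2F]
    have hBq2 : (B ^ 2) ^ q = B ^ 2 := by
      rw [← pow_mul, mul_comm, pow_mul, hBF]
    have hC'F : C' ^ q = C' := by
      rw [hC', hFsub, hCcF, div_pow, mul_pow, h4F, hAF, hBq2]
    -- the quadratic expansion of the norm
    have hnormq : ∀ t : K, t ^ q = t → (b + t * θ) ^ (q + 1) = A * t ^ 2 + B * t + Cc := by
      intro t htt
      have h1 : (b + t * θ) ^ q = b ^ q + t * θ ^ q := by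
        rw [hfrob, mul_pow, htt]
      rw [pow_succ, h1, hA', hB, hCc']
      ring
    -- step A: fiberwise decomposition over t
    set S : Finset K := univ.filter (fun y : K => ∃ t : K, t ^ q = t ∧ y ^ 2 - b = t * θ)
      with hS
    have hfmem : ∀ y ∈ S, (y ^ 2 - b) * θ⁻¹ ∈ Ff := by
      intro y hy
      simp only [hS, mem_filter, mem_univ, true_and] at hy
      obtain ⟨t, htt, hyt⟩ := hy
      simp only [hFf, mem_filter, mem_univ, true_and]
      rw [hyt]
      field_simp
      exact htt
    have hA1 := Finset.card_eq_sum_card_fiberwise hfmem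
    have hfib : ∀ t ∈ Ff, (S.filter (fun y => (y ^ 2 - b) * θ⁻¹ = t))
        = univ.filter (fun y : K => y ^ 2 = b + t * θ) := by
      intro t htt
      simp only [hFf, mem_filter, mem_univ, true_and] at htt
      ext y
      simp only [hS, mem_filter, mem_univ, true_and, filter_filter]
      constructor
      · rintro ⟨⟨t', ht', hyt'⟩, hft⟩
        have hyb : y ^ 2 - b = t * θ := by
          rw [← hft]
          field_simp
        linear_combination hyb
      · intro hy2
        refine ⟨⟨t, htt, by rw [hy2]; ring⟩, ?_⟩
        rw [hy2]
        field_simp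
        ring
    have hB2 : ∀ t ∈ Ff, (univ.filter (fun y : K => y ^ 2 = b + t * θ)).card
        = (univ.filter (fun y : K => y ^ q = y ∧ y ^ 2 = (b + t * θ) ^ (q + 1))).card := by
      intro t htt
      simp only [hFf, mem_filter, mem_univ, true_and] at htt
      apply sqrtTransfer
      intro h0
      apply hbn
      refine ⟨-t, by rw [hFneg, htt], ?_⟩
      linear_combination h0
    -- step C: back to a product set
    have hC2 : ((Ff ×ˢ Ff).filter
          (fun pr : K × K => pr.2 ^ 2 = (b + pr.1 * θ) ^ (q + 1))).card
        = ∑ t ∈ Ff, (univ.filter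
            (fun y : K => y ^ q = y ∧ y ^ 2 = (b + t * θ) ^ (q + 1))).card := by
      have hmem : ∀ pr ∈ (Ff ×ˢ Ff).filter
          (fun pr : K × K => pr.2 ^ 2 = (b + pr.1 * θ) ^ (q + 1)), pr.1 ∈ Ff := by
        intro pr hpr
        simp only [mem_filter, mem_product] at hpr
        exact hpr.1.1
      rw [Finset.card_eq_sum_card_fiberwise hmem]
      refine Finset.sum_congr rfl fun t htt => ?_
      apply Finset.card_bij (fun pr _ => pr.2)
      · intro pr hpr
        simp only [mem_filter, mem_product, hFf, mem_univ, true_and] at hpr ⊢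
        obtain ⟨⟨⟨hu, hv⟩, heq⟩, hfst⟩ := hpr
        rw [← hfst]
        exact ⟨hv, heq⟩
      · intro pr hpr pr' hpr' heq
        simp only [mem_filter, mem_product, hFf, mem_univ, true_and] at hpr hpr'
        exact Prod.ext (hpr.2.trans hpr'.2.symm) heq
      · intro y hy
        simp only [mem_filter, mem_univ, true_and] at hy
        refine ⟨(t, y), ?_, rfl⟩
        simp only [mem_filter, mem_product, hFf, mem_univ, true_and] at htt ⊢
        exact ⟨⟨⟨htt, hy.1⟩, hy.2⟩, trivial⟩
    -- step E: completing the square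
    have hE : ((Ff ×ˢ Ff).filter
          (fun pr : K × K => pr.2 ^ 2 = (b + pr.1 * θ) ^ (q + 1))).card
        = ((Ff ×ˢ Ff).filter (fun pr : K × K => pr.1 ^ 2 - A * pr.2 ^ 2 = C')).card := by
      have h2A0 : (2 : K) * A ≠ 0 := mul_ne_zero h2K hA0
      set X : K := B / (2 * A) with hXdef
      have hBA : X ^ q = X := by
        rw [hXdef, div_pow, hBF, mul_pow, h2F, hAF]
      have hX1 : 2 * A * X = B := by
        rw [hXdef]; field_simp
      have hmulBB : (4 * A) * (B ^ 2 / (4 * A)) = B ^ 2 := by field_simp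
      have hC'2 : 4 * A * C' = 4 * A * Cc - B ^ 2 := by
        rw [hC']
        linear_combination -hmulBB
      apply Finset.card_bij (fun pr _ => (pr.2, pr.1 + X))
      · intro pr hpr
        simp only [mem_filter, mem_product, hFf, mem_univ, true_and] at hpr ⊢
        obtain ⟨⟨htf, hyf⟩, heq⟩ := hpr
        refine ⟨⟨hyf, by rw [hfrob, htf, hBA]⟩, ?_⟩
        rw [hnormq pr.1 htf] at heq
        apply mul_left_cancel₀ h4A0
        linear_combination (4 * A) * heq + (-(4 * A * pr.1) - 2 * A * X - B) * hX1 - hC'2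
      · intro pr hpr pr' hpr' heq
        simp only [Prod.mk.injEq] at heq
        have h1 : pr.1 = pr'.1 := add_right_cancel heq.2
        exact Prod.ext h1 heq.1
      · intro pr hpr
        simp only [mem_filter, mem_product, hFf, mem_univ, true_and] at hpr
        obtain ⟨⟨huf, hvf⟩, heq⟩ := hpr
        refine ⟨(pr.2 - X, pr.1), ?_, ?_⟩
        · simp only [mem_filter, mem_product, hFf, mem_univ, true_and]
          have htf : (pr.2 - X) ^ q = pr.2 - X := by
            rw [hFsub, hvf, hBA]
          refine ⟨⟨htf, huf⟩, ?_⟩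
          rw [hnormq _ htf]
          apply mul_left_cancel₀ h4A0
          linear_combination (4 * A) * heq + (4 * A * pr.2 - (2 * A * X - B)) * hX1 + hC'2
        · exact Prod.ext rfl (by ring)
      -- end card_bij
    -- conclusion
    calc S.card
        = ∑ t ∈ Ff, (S.filter (fun y => (y ^ 2 - b) * θ⁻¹ = t)).card := hA1
      _ = ∑ t ∈ Ff, (univ.filter
            (fun y : K => y ^ q = y ∧ y ^ 2 = (b + t * θ) ^ (q + 1))).card := by
          refine Finset.sum_congr rfl fun t htt => ?_
          rw [hfib t htt, hB2 t htt]
      _ = ((Ff ×ˢ Ff).filter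
            (fun pr : K × K => pr.2 ^ 2 = (b + pr.1 * θ) ^ (q + 1))).card := hC2.symm
      _ = ((Ff ×ˢ Ff).filter (fun pr : K × K => pr.1 ^ 2 - A * pr.2 ^ 2 = C')).card := hE
      _ = q + 1 := conic C' hC'F hC'0
  -- final assembly
  constructor
  · rw [ncard_setOf]
    exact cardFf
  · intro a b
    constructor
    · intro hb
      obtain ⟨t₀, ht₀, hbt₀⟩ := hb
      have hset : {x : K | (x + a) ^ 2 - b ∈ scalarSet K q θ} = {-a} := by
        ext x
        simp only [Set.mem_setOf_eq, Set.mem_singleton_iff]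
        constructor
        · rintro ⟨t, htt, hxt⟩
          have h1 : (x + a) ^ 2 = (t + t₀) * θ := by
            rw [hbt₀] at hxt
            linear_combination hxt
          have h2 : (t + t₀) ^ q = t + t₀ := by rw [hfrob, htt, ht₀]
          have h3 := sqThetaF (x + a) (t + t₀) h2 h1
          linear_combination h3
        · rintro rfl
          refine ⟨-t₀, by rw [hFneg, ht₀], ?_⟩
          rw [hbt₀]
          ring
      rw [hset]
      exact Set.ncard_singleton _
    · intro hbn
      have himg : {x : K | (x + a) ^ 2 - b ∈ scalarSet K q θ}
          = (fun y : K => y - a) '' {y : K | y ^ 2 - b ∈ scalarSet K q θ} := by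
        ext x
        simp only [Set.mem_image, Set.mem_setOf_eq]
        constructor
        · intro hx
          exact ⟨x + a, hx, by ring⟩
        · rintro ⟨y, hy, rfl⟩
          have hya : y - a + a = y := by ring
          rw [hya]
          exact hy
      have hinj : Function.Injective (fun y : K => y - a) := by
        intro x y h
        simpa using congrArg (fun z => z + a) h
      rw [himg, Set.ncard_image_of_injective _ hinj]
      have hpred : {y : K | y ^ 2 - b ∈ scalarSet K q θ}
          = {y : K | ∃ t : K, t ^ q = t ∧ y ^ 2 - b = t * θ} := rfl
      rw [hpred, ncard_setOf]
      exact countMain b hbn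

/-- Theorem 2.4 (a).  For `f(x) = x²` on `K = F_{q²}` (`q` odd) and
`θ ≠ 0` with `θ^{q+1}` a nonsquare in the subfield `F` of order `q`, the number of
`x` with `(x+a)² − b ∈ θF` is `1` if `b ∈ θF` and `q+1` otherwise; hence `U_θ` is
a unital in the Desarguesian shift plane `Π(x²)`. -/
theorem stmt3 (p n q : ℕ) (hp : Nat.Prime p) (hpodd : Odd p) (hn : 0 < n) (hq : q = p ^ n)
    (K : Type) [Field K] [Fintype K] (hcard : Fintype.card K = q ^ 2)
    (θ : K) (hθ : θ ≠ 0)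
    (hns : ¬ ∃ s : K, s ^ q = s ∧ s ^ 2 = θ ^ (q + 1)) :
    (∀ a b : K,
      (b ∈ scalarSet K q θ →
        {x : K | (x + a) ^ 2 - b ∈ scalarSet K q θ}.ncard = 1) ∧
      (b ∉ scalarSet K q θ →
        {x : K | (x + a) ^ 2 - b ∈ scalarSet K q θ}.ncard = q + 1)) ∧
    (∀ L ∈ shiftLines K (fun x : K => x ^ 2),
      (L ∩ unitalSet K q θ).ncard = 1 ∨ (L ∩ unitalSet K q θ).ncard = q + 1) := by
  obtain ⟨hFcard, hcount⟩ := core3 p n q hp hpodd hn hq K hcard θ hθ hns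
  refine ⟨hcount, ?_⟩
  intro L hL
  rcases hL with ⟨a, b, rfl⟩ | ⟨a, rfl⟩ | rfl
  · -- affine line
    have himg : affLine K (fun x : K => x ^ 2) a b ∩ unitalSet K q θ
        = (fun x : K => (Sum.inl (x, (x + a) ^ 2 - b) : ShiftPt K)) ''
            {x : K | (x + a) ^ 2 - b ∈ scalarSet K q θ} := by
      ext P
      constructor
      · rintro ⟨hPL, hPU⟩
        rcases hPL with ⟨x, rfl⟩ | rfl
        · rcases hPU with ⟨x', t, ht, hPeq⟩ | hPeq
          · simp only [Sum.inl.injEq, Prod.mk.injEq] at hPeq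
            exact ⟨x, ⟨t, ht, hPeq.2⟩, rfl⟩
          · simp at hPeq
        · rcases hPU with ⟨x', t, ht, hPeq⟩ | hPeq
          · simp at hPeq
          · simp at hPeq
      · rintro ⟨x, ⟨t, ht, hxt⟩, rfl⟩
        refine ⟨Or.inl ⟨x, rfl⟩, Or.inl ⟨x, t, ht, ?_⟩⟩
        show (Sum.inl (x, (x + a) ^ 2 - b) : ShiftPt K) = Sum.inl (x, t * θ)
        rw [hxt]
    have hinj : Function.Injective
        (fun x : K => (Sum.inl (x, (x + a) ^ 2 - b) : ShiftPt K)) := by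
      intro x y h
      simp only [Sum.inl.injEq, Prod.mk.injEq] at h
      exact h.1
    rw [himg, Set.ncard_image_of_injective _ hinj]
    by_cases hb : b ∈ scalarSet K q θ
    · left; exact (hcount a b).1 hb
    · right; exact (hcount a b).2 hb
  · -- vertical line
    right
    have heq : vertLine K a ∩ unitalSet K q θ
        = insert (Sum.inr (Sum.inr ()) : ShiftPt K)
            ((fun t : K => (Sum.inl (a, t * θ) : ShiftPt K)) '' {t : K | t ^ q = t}) := by
      ext P
      simp only [Set.mem_inter_iff, Set.mem_insert_iff, Set.mem_image, Set.mem_setOf_eq]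
      constructor
      · rintro ⟨hPL, hPU⟩
        rcases hPL with ⟨y, rfl⟩ | rfl
        · rcases hPU with ⟨x', t, ht, hPeq⟩ | hPeq
          · simp only [Sum.inl.injEq, Prod.mk.injEq] at hPeq
            right
            exact ⟨t, ht, by rw [hPeq.2]⟩
          · simp at hPeq
        · left; rfl
      · rintro (rfl | ⟨t, ht, rfl⟩)
        · exact ⟨Or.inr rfl, Or.inr rfl⟩
        · exact ⟨Or.inl ⟨t * θ, rfl⟩, Or.inl ⟨a, t, ht, rfl⟩⟩
    have hinj : Function.Injective (fun t : K => (Sum.inl (a, t * θ) : ShiftPt K)) := by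
      intro x y h
      simp only [Sum.inl.injEq, Prod.mk.injEq] at h
      exact mul_right_cancel₀ hθ h.2
    have hnotmem : (Sum.inr (Sum.inr ()) : ShiftPt K)
        ∉ (fun t : K => (Sum.inl (a, t * θ) : ShiftPt K)) '' {t : K | t ^ q = t} := by
      rintro ⟨t, _, h⟩
      simp at h
    rw [heq, Set.ncard_insert_of_notMem hnotmem (Set.toFinite _),
      Set.ncard_image_of_injective _ hinj, hFcard]
  · -- line at infinity
    left
    have heq : lineAtInf K ∩ unitalSet K q θ = {(Sum.inr (Sum.inr ()) : ShiftPt K)} := by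
      ext P
      simp only [Set.mem_inter_iff, Set.mem_singleton_iff]
      constructor
      · rintro ⟨⟨s, rfl⟩, hPU⟩
        rcases hPU with ⟨x', t, ht, hPeq⟩ | hPeq
        · simp at hPeq
        · exact hPeq
      · rintro rfl
        exact ⟨⟨Sum.inr (), rfl⟩, Or.inr rfl⟩
    rw [heq]
    exact Set.ncard_singleton _
end

section
/- Let p be an odd prime, n a positive integer, q = pⁿ, and K a finite field with q² = p^{2n} elements with F its subfield of order q. Let k be an integer with 1 ≤ k ≤ n such that 2n/gcd(2n,k) is odd, and set f(x) = x^{p^k+1}. Then for every c ∈ K the number of x ∈ K with f(x) = c equals the number of y ∈ K with y² = c, and for every θ ∈ K \ {0} with θ^{q+1} a nonsquare in F and all a, b ∈ K, the number of x ∈ K with (x+a)^{p^k+1} − b ∈ θF equals 1 if b ∈ θF and equals q+1 if b ∉ θF; hence U_θ = {(x, tθ) : x ∈ K, t ∈ F} ∪ {(∞)} is a unital in the Albert commutative twisted field plane Π(f). -/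
section Helpers

open Finset Polynomial
open scoped Classical

lemma nt_main (p n k : ℕ) (hp : Nat.Prime p) (hpodd : Odd p) (hn : 0 < n) (hk1 : 1 ≤ k)
    (hkodd : Odd (2 * n / Nat.gcd (2 * n) k)) :
    ∃ r : ℕ, Odd r ∧ p ^ k + 1 = 2 * r ∧ Nat.Coprime r (p ^ (2 * n) - 1) := by
  set g := Nat.gcd (2 * n) k with hgdef
  have hgpos : 0 < g := Nat.gcd_pos_of_pos_right _ hk1
  obtain ⟨m, hm⟩ : g ∣ 2 * n := Nat.gcd_dvd_left _ _
  obtain ⟨k', hk'⟩ : g ∣ k := Nat.gcd_dvd_right _ _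
  have hmodd : Odd m := by
    have : 2 * n / g = m := by rw [hm, Nat.mul_div_cancel_left _ hgpos]
    rwa [this] at hkodd
  have hcop2m : Nat.Coprime 2 m := by
    rw [Nat.prime_two.coprime_iff_not_dvd]
    exact fun h => (Nat.not_even_iff_odd.mpr hmodd) (even_iff_two_dvd.mpr h)
  have hcopmk' : Nat.Coprime m k' := by
    have h1 : g * Nat.gcd m k' = g := by
      rw [← Nat.gcd_mul_left, ← hm, ← hk']
    have := Nat.eq_of_mul_eq_mul_left hgpos (h1.trans (mul_one g).symm)
    exact this
  have h2g : 2 ∣ g := by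
    have h2 : 2 ∣ g * m := ⟨n, by omega⟩
    exact (Nat.Coprime.dvd_of_dvd_mul_right hcop2m h2)
  have hkeven : 2 ∣ k := h2g.trans ⟨k', hk'⟩
  have hgcd2 : Nat.gcd (2 * n) (2 * k) = g := by
    have : 2 * k = g * (2 * k') := by rw [hk']; ring
    rw [hm, this, Nat.gcd_mul_left]
    have : Nat.gcd m (2 * k') = Nat.gcd m k' := Nat.Coprime.gcd_mul_left_cancel_right k' hcop2m
    rw [this, hcopmk', mul_one]
  -- p^k ≡ 1 mod 4
  obtain ⟨i, hi⟩ := hpodd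
  obtain ⟨k₂, hk₂⟩ := hkeven
  have hp2 : p ^ 2 % 4 = 1 := by
    have : p ^ 2 = 4 * (i * i + i) + 1 := by subst hi; ring
    omega
  have hpk4 : p ^ k % 4 = 1 := by
    have h1 : p ^ k = (p ^ 2) ^ k₂ := by rw [← pow_mul, ← hk₂]
    rw [h1, Nat.pow_mod, hp2, one_pow]
    omega
  refine ⟨(p ^ k + 1) / 2, ?_, ?_, ?_⟩
  · rw [Nat.odd_iff]; omega
  · omega
  · by_contra hnc
    obtain ⟨ℓ, hℓp, hℓr, hℓN⟩ := Nat.Prime.not_coprime_iff_dvd.mp hnc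
    have hℓ2 : ℓ ≠ 2 := by
      intro h
      obtain ⟨c, hc⟩ := hℓr
      rw [h] at hc
      omega
    have hℓpk : ℓ ∣ p ^ k + 1 := by
      refine hℓr.trans ⟨2, by omega⟩
    haveI : Fact ℓ.Prime := ⟨hℓp⟩
    have h1le : 1 ≤ p ^ (2 * n) := Nat.one_le_pow _ _ hp.pos
    have hx1 : (p : ZMod ℓ) ^ (2 * n) = 1 := by
      have h0 : ((p ^ (2 * n) - 1 : ℕ) : ZMod ℓ) = 0 := by
        rw [ZMod.natCast_eq_zero_iff]; exact hℓN
      have := Nat.cast_sub h1le (R := ZMod ℓ)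
      rw [this] at h0
      push_cast at h0
      linear_combination h0
    have hxneg : (p : ZMod ℓ) ^ k = -1 := by
      have h0 : ((p ^ k + 1 : ℕ) : ZMod ℓ) = 0 := by
        rw [ZMod.natCast_eq_zero_iff]; exact hℓpk
      push_cast at h0
      linear_combination h0
    have ho1 : orderOf (p : ZMod ℓ) ∣ 2 * n := orderOf_dvd_of_pow_eq_one hx1
    have ho2 : orderOf (p : ZMod ℓ) ∣ 2 * k := by
      apply orderOf_dvd_of_pow_eq_one
      rw [mul_comm, pow_mul, hxneg]
      ring
    have hok : orderOf (p : ZMod ℓ) ∣ k := by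
      have := Nat.dvd_gcd ho1 ho2
      rw [hgcd2] at this
      exact this.trans ⟨k', hk'⟩
    have hxk1 : (p : ZMod ℓ) ^ k = 1 := orderOf_dvd_iff_pow_eq_one.mp hok
    have h20 : ((2 : ℕ) : ZMod ℓ) = 0 := by
      push_cast
      rw [hxk1] at hxneg
      linear_combination hxneg
    have : ℓ ∣ 2 := (ZMod.natCast_eq_zero_iff 2 ℓ).mp h20
    exact hℓ2 ((Nat.prime_dvd_prime_iff_eq hℓp Nat.prime_two).mp this)

lemma exists_prim (K : Type) [Field K] [Fintype K] {m : ℕ} (hm : 0 < m)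
    (hdvd : m ∣ Fintype.card K - 1) : ∃ ζ : K, IsPrimitiveRoot ζ m := by
  obtain ⟨g, hg⟩ := IsCyclic.exists_generator (α := Kˣ)
  have hord : orderOf g = Fintype.card K - 1 := by
    rw [orderOf_eq_card_of_forall_mem_zpowers hg, Nat.card_eq_fintype_card, Fintype.card_units]
  have hprim : IsPrimitiveRoot g (Fintype.card K - 1) := hord ▸ IsPrimitiveRoot.orderOf g
  obtain ⟨d, hd⟩ := hdvd
  have hpos : 0 < Fintype.card K - 1 := by
    have := Fintype.one_lt_card (α := K)
    omega
  have hprim2 : IsPrimitiveRoot (g ^ d) m := hprim.pow hpos (by rw [hd, mul_comm])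
  exact ⟨((g ^ d : Kˣ) : K), IsPrimitiveRoot.coe_units_iff.mpr hprim2⟩

lemma count_pow (K : Type) [Field K] [Fintype K] {m : ℕ} (hm : 0 < m)
    (hdvd : m ∣ Fintype.card K - 1) (c : K) (hc : c ≠ 0) :
    (univ.filter fun z : K => z ^ m = c).card = if ∃ α : K, α ^ m = c then m else 0 := by
  classical
  obtain ⟨ζ, hζ⟩ := exists_prim K hm hdvd
  have hset : (univ.filter fun z : K => z ^ m = c) = (nthRoots m c).toFinset := by
    ext z
    simp [Polynomial.mem_nthRoots hm]
  rw [hset, Multiset.toFinset_card_of_nodup (hζ.nthRoots_nodup hc), hζ.card_nthRoots]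
  congr 1

lemma count_pow_one (K : Type) [Field K] [Fintype K] {m : ℕ} (hm : 0 < m)
    (hdvd : m ∣ Fintype.card K - 1) :
    (univ.filter fun z : K => z ^ m = 1).card = m := by
  rw [count_pow K hm hdvd 1 one_ne_zero, if_pos ⟨1, one_pow m⟩]

lemma norm_fiber (K : Type) [Field K] [Fintype K] (q : ℕ) (hq3 : 3 ≤ q)
    (hcard : Fintype.card K = q ^ 2) (c : K) (hc : c ^ (q - 1) = 1) :
    (univ.filter fun z : K => z ^ (q + 1) = c).card = q + 1 := by
  classical
  have hq10 : q - 1 ≠ 0 := by omega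
  have hc0 : c ≠ 0 := by
    intro h; rw [h, zero_pow hq10] at hc; exact zero_ne_one hc
  have hM : Fintype.card K - 1 = (q + 1) * (q - 1) := by
    rw [hcard, ← Nat.sq_sub_sq q 1, one_pow]
  have hdvd1 : (q + 1) ∣ Fintype.card K - 1 := ⟨q - 1, hM⟩
  have hdvd2 : (q - 1) ∣ Fintype.card K - 1 := ⟨q + 1, by rw [hM, mul_comm]⟩
  set μ := univ.filter fun d : K => d ^ (q - 1) = 1 with hμ
  have hμcard : μ.card = q - 1 := count_pow_one K (by omega) hdvd2
  have hd0 : ∀ d ∈ μ, d ≠ 0 := by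
    intro d hd h0
    rw [hμ, mem_filter] at hd
    rw [h0, zero_pow hq10] at hd
    exact zero_ne_one hd.2
  have key : ∀ d ∈ μ, (univ.filter fun z : K => z ^ (q + 1) = d).card
      = if ∃ α : K, α ^ (q + 1) = d then q + 1 else 0 := fun d hd =>
    count_pow K (by omega) hdvd1 d (hd0 d hd)
  -- fiberwise sum
  have hmem : ∀ z ∈ univ.filter (fun z : K => z ≠ 0), z ^ (q + 1) ∈ μ := by
    intro z hz
    rw [mem_filter] at hz
    rw [hμ, mem_filter]
    refine ⟨mem_univ _, ?_⟩
    rw [← pow_mul, ← hM, FiniteField.pow_card_sub_one_eq_one z hz.2]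
  have hsum := Finset.card_eq_sum_card_fiberwise hmem
  have hA : (univ.filter fun z : K => z ≠ 0).card = q ^ 2 - 1 := by
    rw [Finset.filter_ne', Finset.card_erase_of_mem (mem_univ 0), Finset.card_univ, hcard]
  have hfib : ∀ d ∈ μ, ((univ.filter fun z : K => z ≠ 0).filter fun z => z ^ (q + 1) = d)
      = univ.filter fun z : K => z ^ (q + 1) = d := by
    intro d hd
    rw [Finset.filter_filter]
    apply Finset.filter_congr
    intro z _
    constructor
    · exact fun h => h.2
    · intro h
      refine ⟨fun h0 => hd0 d hd ?_, h⟩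
      rw [h0, zero_pow (by omega : q + 1 ≠ 0)] at h
      exact h.symm
  rw [hA] at hsum
  have hsum2 : ∑ d ∈ μ, (univ.filter fun z : K => z ^ (q + 1) = d).card = q ^ 2 - 1 := by
    have e3 : ∑ d ∈ μ, (univ.filter fun z : K => z ^ (q + 1) = d).card
        = ∑ d ∈ μ, ((univ.filter fun z : K => z ≠ 0).filter fun z => z ^ (q + 1) = d).card :=
      Finset.sum_congr rfl (fun d hd => by rw [hfib d hd])
    rw [e3]
    exact hsum.symm
  -- c ∈ μ
  have hcμ : c ∈ μ := by rw [hμ, mem_filter]; exact ⟨mem_univ _, hc⟩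
  -- existence of a (q+1)-th root of c
  have hex : ∃ α : K, α ^ (q + 1) = c := by
    by_contra hne
    have hzero : (univ.filter fun z : K => z ^ (q + 1) = c).card = 0 := by
      rw [key c hcμ, if_neg hne]
    rw [← Finset.add_sum_erase μ _ hcμ, hzero, zero_add] at hsum2
    have hbound : ∑ d ∈ μ.erase c, (univ.filter fun z : K => z ^ (q + 1) = d).card
        ≤ (μ.erase c).card * (q + 1) := by
      apply Finset.sum_le_card_nsmul
      intro d hd
      rw [key d (Finset.mem_of_mem_erase hd)]
      split <;> omega
    rw [Finset.card_erase_of_mem hcμ, hμcard] at hbound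
    rw [hsum2] at hbound
    -- q^2 - 1 ≤ (q - 1 - 1) * (q + 1) : contradiction
    have e1 : (q - 1 - 1) * (q + 1) + (q + 1) = (q - 1) * (q + 1) := by
      rw [← add_one_mul]
      congr 1
      omega
    have e2 : (q - 1) * (q + 1) = q ^ 2 - 1 := by rw [mul_comm, ← hM, hcard]
    omega
  rw [key c hcμ, if_pos hex]

section SQ

variable {K : Type} [Field K] [Fintype K] {q : ℕ}

-- basic exponent arithmetic helpers
lemma pow_q_sub_one (hq1 : 1 ≤ q) (x : K) (hx : x ≠ 0) (hxq : x ^ q = x) :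
    x ^ (q - 1) = 1 := by
  have h1 : x ^ (q - 1) * x = 1 * x := by
    rw [one_mul, ← pow_succ, (by omega : q - 1 + 1 = q), hxq]
  exact mul_right_cancel₀ hx h1

lemma norm_mem (hcard : Fintype.card K = q ^ 2) (x : K) : (x ^ (q + 1)) ^ q = x ^ (q + 1) := by
  have hx2 : x ^ q ^ 2 = x := by rw [← hcard]; exact FiniteField.pow_card x
  rw [← pow_mul]
  have h : (q + 1) * q = q ^ 2 + q := by ring
  rw [h, pow_add, hx2, ← pow_succ']

lemma char_ne_two (hq3 : 3 ≤ q) (hqodd : Odd q) (hcard : Fintype.card K = q ^ 2) :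
    (2 : K) ≠ 0 := by
  have hodd : Fintype.card K % 2 = 1 := by
    rw [hcard]
    obtain ⟨j, hj⟩ := hqodd
    have : q ^ 2 = 2 * (2 * (j * j) + 2 * j) + 1 := by subst hj; ring
    omega
  have hchar : ringChar K ≠ 2 := by
    intro h
    rw [FiniteField.even_card_iff_char_two.mp h] at hodd
    omega
  intro h2
  have : ringChar K ∣ 2 := ringChar.dvd (by exact_mod_cast h2)
  rcases (Nat.dvd_prime Nat.prime_two).mp this with h | h
  · exact (CharP.ringChar_ne_one (R := K)) h
  · exact hchar h

/-- number of square roots of `c ≠ 0` in `K` equals number of square roots of the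
norm `c^(q+1)` inside the subfield `F = {t : t^q = t}`. -/
lemma fiber_eq (hq3 : 3 ≤ q) (hqodd : Odd q) (hcard : Fintype.card K = q ^ 2)
    (c : K) (hc : c ≠ 0) :
    (univ.filter fun y : K => y ^ 2 = c).card
      = ((univ.filter fun t : K => t ^ q = t).filter fun s => s ^ 2 = c ^ (q + 1)).card := by
  have h2K : (2 : K) ≠ 0 := char_ne_two hq3 hqodd hcard
  have hchar : ringChar K ≠ 2 := by
    intro h
    have : (2 : K) = 0 := by
      have := CharP.cast_eq_zero K (ringChar K)
      rwa [h] at this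
      
    exact h2K this
  by_cases hex : ∃ y : K, y ^ 2 = c
  · obtain ⟨y₀, hy₀⟩ := hex
    have hy₀0 : y₀ ≠ 0 := by intro h; rw [h] at hy₀; simp at hy₀; exact hc hy₀.symm
    have hy₀ne : y₀ ≠ -y₀ := by
      intro h
      apply hy₀0
      have : (2 : K) * y₀ = 0 := by linear_combination h
      rcases mul_eq_zero.mp this with h' | h'
      · exact absurd h' h2K
      · exact h'
    have hL : (univ.filter fun y : K => y ^ 2 = c) = {y₀, -y₀} := by
      ext y
      simp only [mem_filter, mem_univ, true_and, mem_insert, mem_singleton]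
      constructor
      · intro hy
        have : y * y = y₀ * y₀ := by
          rw [← pow_two, ← pow_two, hy, hy₀]
        exact mul_self_eq_mul_self_iff.mp this
      · rintro (rfl | rfl)
        · exact hy₀
        · rw [neg_pow, hy₀]; simp
    set s₀ := y₀ ^ (q + 1) with hs₀def
    have hs₀F : s₀ ^ q = s₀ := norm_mem hcard y₀
    have hs₀sq : s₀ ^ 2 = c ^ (q + 1) := by
      rw [hs₀def, ← pow_mul, mul_comm (q+1) 2, pow_mul, hy₀]
    have hs₀0 : s₀ ≠ 0 := pow_ne_zero _ hy₀0
    have hs₀ne : s₀ ≠ -s₀ := by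
      intro h
      apply hs₀0
      have : (2 : K) * s₀ = 0 := by linear_combination h
      rcases mul_eq_zero.mp this with h' | h'
      · exact absurd h' h2K
      · exact h'
    have hR : ((univ.filter fun t : K => t ^ q = t).filter fun s => s ^ 2 = c ^ (q + 1))
        = {s₀, -s₀} := by
      ext s
      simp only [mem_filter, mem_univ, true_and, mem_insert, mem_singleton]
      constructor
      · rintro ⟨-, hs⟩
        have : s * s = s₀ * s₀ := by
          rw [← pow_two, ← pow_two, hs, hs₀sq]
        exact mul_self_eq_mul_self_iff.mp this
      · rintro (rfl | rfl)
        · exact ⟨hs₀F, hs₀sq⟩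
        · constructor
          · rw [Odd.neg_pow hqodd, hs₀F]
          · rw [neg_pow, hs₀sq]; simp
    rw [hL, hR]
    rw [Finset.card_insert_of_notMem (by simpa using hy₀ne),
      Finset.card_insert_of_notMem (by simpa using hs₀ne)]
    simp
  · -- no square root of c: RHS also empty
    have hL : (univ.filter fun y : K => y ^ 2 = c) = ∅ := by
      rw [Finset.filter_eq_empty_iff]
      intro y _
      exact fun h => hex ⟨y, h⟩
    have hR : ((univ.filter fun t : K => t ^ q = t).filter fun s => s ^ 2 = c ^ (q + 1)) = ∅ := by
      rw [Finset.filter_eq_empty_iff]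
      rintro s hs hssq
      rw [mem_filter] at hs
      have hs0 : s ≠ 0 := by
        intro h
        rw [h] at hssq
        have : c ^ (q + 1) = 0 := by simpa using hssq.symm
        exact pow_ne_zero (q+1) hc this
      -- c is a square : contradiction
      apply hex
      have hsq1 : s ^ (q - 1) = 1 := pow_q_sub_one (by omega) s hs0 hs.2
      obtain ⟨j, hj⟩ := hqodd
      have key2 : Fintype.card K / 2 = (q + 1) * ((q - 1) / 2) := by
        rw [hcard]
        have h1 : q ^ 2 = 2 * (2 * (j * j) + 2 * j) + 1 := by subst hj; ring
        have h2 : (q + 1) * ((q - 1) / 2) = 2 * (j * j) + 2 * j := by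
          have e1 : (q - 1) / 2 = j := by omega
          have e2 : q + 1 = 2 * j + 2 := by omega
          rw [e1, e2]; ring
        omega
      have hcp : c ^ (Fintype.card K / 2) = 1 := by
        rw [key2, pow_mul, ← hssq, ← pow_mul]
        have : 2 * ((q - 1) / 2) = q - 1 := by omega
        rw [this, hsq1]
      obtain ⟨y, hy⟩ := (FiniteField.isSquare_iff hchar hc).mpr hcp
      exact ⟨y, by rw [pow_two, ← hy]⟩
    rw [hL, hR]

lemma count_notmem (hq3 : 3 ≤ q) (hqodd : Odd q) (hcard : Fintype.card K = q ^ 2)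
    (hfrob : ∀ x y : K, (x + y) ^ q = x ^ q + y ^ q)
    (hFcard : (univ.filter fun t : K => t ^ q = t).card = q)
    (hnorm_fiber : ∀ c : K, c ^ (q - 1) = 1 →
      (univ.filter fun z : K => z ^ (q + 1) = c).card = q + 1)
    (hfiber_eq : ∀ c : K, c ≠ 0 →
      (univ.filter fun y : K => y ^ 2 = c).card
        = ((univ.filter fun t : K => t ^ q = t).filter fun s => s ^ 2 = c ^ (q + 1)).card)
    (h2K : (2 : K) ≠ 0) (hchar : ringChar K ≠ 2)
    (θ : K) (hθ : θ ≠ 0) (hns : ¬ ∃ s : K, s ^ q = s ∧ s ^ 2 = θ ^ (q + 1)) (b : K)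
    (hb : ¬ ∃ t : K, t ^ q = t ∧ b = t * θ) :
    (univ.filter fun y : K => ∃ t : K, t ^ q = t ∧ y ^ 2 - b = t * θ).card = q + 1 := by
  have hq1 : 1 ≤ q := by omega
  have hqq : ∀ x : K, (x ^ q) ^ q = x := by
    intro x
    rw [← pow_mul, ← pow_two, ← hcard]
    exact FiniteField.pow_card x
  have hsubq : ∀ x y : K, (x - y) ^ q = x ^ q - y ^ q := by
    intro x y
    have h1 : x - y + y = x := by ring
    have h2 := hfrob (x - y) y
    rw [h1] at h2
    linear_combination -h2
  have hnegq : ∀ x : K, (-x) ^ q = -x ^ q := fun x => Odd.neg_pow hqodd x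
  have h2q : (2 : K) ^ q = 2 := by
    have := hfrob 1 1
    norm_num at this
    exact this
  have h4K : (4 : K) ≠ 0 := by
    have h : (4 : K) = 2 * 2 := by norm_num
    rw [h]; exact mul_ne_zero h2K h2K
  have h4q : (4 : K) ^ q = 4 := by
    have h : (4 : K) = 2 * 2 := by norm_num
    rw [h, mul_pow, h2q]
  -- β ≠ 0
  have hβ : b * θ ^ q - b ^ q * θ ≠ 0 := by
    intro h0
    apply hb
    refine ⟨b * θ⁻¹, ?_, ?_⟩
    · rw [mul_pow, inv_pow]
      have hθq : θ ^ q ≠ 0 := pow_ne_zero _ hθ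
      field_simp
      linear_combination -h0
    · field_simp
  -- A = θ^(q+1) and its square root lam with lam^q = -lam
  set A : K := θ ^ (q + 1) with hAdef
  have hA0 : A ≠ 0 := pow_ne_zero _ hθ
  have hAq : A ^ q = A := norm_mem hcard θ
  have hA1 : A ^ (q - 1) = 1 := pow_q_sub_one hq1 A hA0 hAq
  obtain ⟨j, hj⟩ := hqodd
  have key1 : Fintype.card K / 2 = (q - 1) * ((q + 1) / 2) := by
    rw [hcard]
    have h1 : q ^ 2 = 2 * (2 * (j * j) + 2 * j) + 1 := by subst hj; ring
    have h2 : (q - 1) * ((q + 1) / 2) = 2 * (j * j) + 2 * j := by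
      have e1 : (q + 1) / 2 = j + 1 := by omega
      have e2 : q - 1 = 2 * j := by omega
      rw [e1, e2]; ring
    omega
  have hAsq : IsSquare A := by
    apply (FiniteField.isSquare_iff hchar hA0).mpr
    rw [key1, pow_mul, hA1, one_pow]
  obtain ⟨lam, hlam⟩ := hAsq
  have hlam0 : lam ≠ 0 := by
    intro h; rw [h, mul_zero] at hlam; exact hA0 hlam
  have hlamq : lam ^ q = -lam := by
    have hsq : lam ^ q * lam ^ q = lam * lam := by
      rw [← mul_pow, ← hlam, hAq, hlam]
    rcases mul_self_eq_mul_self_iff.mp hsq with h | h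
    · exact absurd ⟨lam, h, by rw [pow_two, ← hlam]⟩ hns
    · exact h
  -- B, C, C'
  set B : K := b * θ ^ q + b ^ q * θ with hBdef
  set C : K := b ^ (q + 1) with hCdef
  have hBq : B ^ q = B := by
    rw [hBdef, hfrob, mul_pow, mul_pow, hqq b, hqq θ]; ring
  have hCq : C ^ q = C := norm_mem hcard b
  have hnorm : ∀ t : K, t ^ q = t → (b + t * θ) ^ (q + 1) = A * t ^ 2 + B * t + C := by
    intro t ht
    rw [pow_succ, hfrob b (t * θ), mul_pow, ht, hAdef, hBdef, hCdef, pow_succ]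
    ring
  have hbt0 : ∀ t : K, t ^ q = t → b + t * θ ≠ 0 := by
    intro t ht h0
    exact hb ⟨-t, by rw [hnegq, ht], by linear_combination h0⟩
  set C' : K := C - B ^ 2 * (4 * A)⁻¹ with hC'def
  have h4A : (4 : K) * A ≠ 0 := mul_ne_zero h4K hA0
  have hC'val : C' = -(b * θ ^ q - b ^ q * θ) ^ 2 * (4 * A)⁻¹ := by
    rw [hC'def, hAdef, hBdef, hCdef]
    field_simp
    ring
  have hC'0 : C' ≠ 0 := by
    rw [hC'val]
    exact mul_ne_zero (neg_ne_zero.mpr (pow_ne_zero _ hβ)) (inv_ne_zero h4A)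
  have hC'q : C' ^ q = C' := by
    have hB2 : (B ^ 2) ^ q = (B ^ q) ^ 2 := by
      rw [← pow_mul, ← pow_mul, mul_comm]
    rw [hC'def, hsubq, mul_pow, hB2, hBq, inv_pow, mul_pow, h4q, hAq, hCq]
  have hC'1 : C' ^ (q - 1) = 1 := pow_q_sub_one hq1 C' hC'0 hC'q
  -- injectivity of (u,s) ↦ s - u·lam on F × F
  have hkey_inj : ∀ u₁ s₁ u₂ s₂ : K, u₁ ^ q = u₁ → s₁ ^ q = s₁ → u₂ ^ q = u₂ → s₂ ^ q = s₂ →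
      s₁ - u₁ * lam = s₂ - u₂ * lam → u₁ = u₂ ∧ s₁ = s₂ := by
    intro u₁ s₁ u₂ s₂ hu₁ hs₁ hu₂ hs₂ heq
    by_cases hu : u₁ = u₂
    · exact ⟨hu, by subst hu; linear_combination heq⟩
    · exfalso
      have hne : u₁ - u₂ ≠ 0 := sub_ne_zero.mpr hu
      have hlamval : lam = (s₁ - s₂) * (u₁ - u₂)⁻¹ := by
        field_simp
        linear_combination -heq
      have hlF : lam ^ q = lam := by
        rw [hlamval, mul_pow, inv_pow, hsubq s₁ s₂, hsubq u₁ u₂, hs₁, hs₂, hu₁, hu₂]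
      rw [hlamq] at hlF
      have h2l : (2 : K) * lam = 0 := by linear_combination -hlF
      rcases mul_eq_zero.mp h2l with h | h
      · exact h2K h
      · exact hlam0 h
  -- surjectivity of the decomposition
  have hdecomp_surj : ∀ z : K, ∃ u s : K, u ^ q = u ∧ s ^ q = s ∧ z = s - u * lam := by
    have hinj : Set.InjOn (fun ts : K × K => ts.2 - ts.1 * lam)
        ↑((univ.filter fun t : K => t ^ q = t) ×ˢ (univ.filter fun t : K => t ^ q = t)) := by
      rintro ⟨u₁, s₁⟩ h1 ⟨u₂, s₂⟩ h2 heq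
      simp only [coe_product, Set.mem_prod, mem_coe, mem_filter, mem_univ, true_and] at h1 h2
      obtain ⟨he1, he2⟩ := hkey_inj u₁ s₁ u₂ s₂ h1.1 h1.2 h2.1 h2.2 heq
      exact Prod.ext he1 he2
    have himg : ((univ.filter fun t : K => t ^ q = t) ×ˢ
        (univ.filter fun t : K => t ^ q = t)).image (fun ts : K × K => ts.2 - ts.1 * lam)
        = univ := by
      apply Finset.eq_univ_of_card
      rw [Finset.card_image_of_injOn hinj, Finset.card_product, hFcard, hcard, pow_two]
    intro z
    have hz : z ∈ ((univ.filter fun t : K => t ^ q = t) ×ˢ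
        (univ.filter fun t : K => t ^ q = t)).image (fun ts : K × K => ts.2 - ts.1 * lam) := by
      rw [himg]; exact mem_univ z
    obtain ⟨⟨u, s⟩, hmem, heq⟩ := Finset.mem_image.mp hz
    rw [Finset.mem_product, mem_filter, mem_filter] at hmem
    exact ⟨u, s, hmem.1.2, hmem.2.2, heq.symm⟩
  -- z-power computation
  have h2A : (2 : K) * A ≠ 0 := mul_ne_zero h2K hA0
  have hz_pow : ∀ u s : K, u ^ q = u → s ^ q = s →
      (s - u * lam) ^ (q + 1) = s ^ 2 - A * u ^ 2 := by
    intro u s hu hs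
    have hzq : (s - u * lam) ^ q = s + u * lam := by
      rw [hsubq, mul_pow, hu, hlamq, hs]; ring
    rw [pow_succ, hzq]
    linear_combination (u ^ 2) * hlam
  -- completing the square identity
  have hkey_id : ∀ t : K, A * (t + B * (2 * A)⁻¹) ^ 2 - B ^ 2 * (4 * A)⁻¹ = A * t ^ 2 + B * t := by
    intro t
    field_simp
    ring
  have hiden : ∀ t s : K, (s ^ 2 = A * t ^ 2 + B * t + C) ↔
      (s ^ 2 - A * (t + B * (2 * A)⁻¹) ^ 2 = C') := by
    intro t s
    rw [hC'def]
    constructor <;> intro h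
    · linear_combination h - hkey_id t
    · linear_combination h + hkey_id t
  have huF : ∀ t : K, t ^ q = t → (t + B * (2 * A)⁻¹) ^ q = t + B * (2 * A)⁻¹ := by
    intro t ht
    rw [hfrob, ht, mul_pow, inv_pow, mul_pow, h2q, hAq, hBq]
  -- Step 4 : pairs ↔ norm fiber
  have step4 : (((univ.filter fun t : K => t ^ q = t) ×ˢ (univ.filter fun t : K => t ^ q = t)).filter
        fun ts : K × K => ts.2 ^ 2 = A * ts.1 ^ 2 + B * ts.1 + C).card
      = (univ.filter fun z : K => z ^ (q + 1) = C').card := by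
    apply Finset.card_bij (fun ts _ => ts.2 - (ts.1 + B * (2 * A)⁻¹) * lam)
    · rintro ⟨t, s⟩ hts
      simp only [mem_filter, Finset.mem_product, mem_univ, true_and] at hts
      obtain ⟨⟨ht, hs⟩, hQ⟩ := hts
      simp only [mem_filter, mem_univ, true_and]
      rw [hz_pow _ _ (huF t ht) hs]
      exact (hiden t s).mp hQ
    · rintro ⟨t₁, s₁⟩ h1 ⟨t₂, s₂⟩ h2 heq
      simp only [mem_filter, Finset.mem_product, mem_univ, true_and] at h1 h2
      obtain ⟨hu, hs⟩ := hkey_inj _ _ _ _ (huF t₁ h1.1.1) h1.1.2 (huF t₂ h2.1.1) h2.1.2 heq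
      have ht : t₁ = t₂ := by
        have := hu
        exact add_right_cancel this
      exact Prod.ext ht hs
    · intro z hz
      simp only [mem_filter, mem_univ, true_and] at hz
      obtain ⟨u, s, hu, hs, hzeq⟩ := hdecomp_surj z
      have htF : (u - B * (2 * A)⁻¹) ^ q = u - B * (2 * A)⁻¹ := by
        rw [hsubq, hu, mul_pow, inv_pow, mul_pow, h2q, hAq, hBq]
      refine ⟨⟨u - B * (2 * A)⁻¹, s⟩, ?_, ?_⟩
      · simp only [mem_filter, Finset.mem_product, mem_univ, true_and]
        refine ⟨⟨htF, hs⟩, ?_⟩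
        apply (hiden _ s).mpr
        have he : u - B * (2 * A)⁻¹ + B * (2 * A)⁻¹ = u := by ring
        rw [he, ← hz_pow u s hu hs, ← hzeq, hz]
      · simp only
        rw [(by ring : u - B * (2 * A)⁻¹ + B * (2 * A)⁻¹ = u), ← hzeq]
  -- Step 1 : fiberwise decomposition over t
  have step1 : (univ.filter fun y : K => ∃ t : K, t ^ q = t ∧ y ^ 2 - b = t * θ).card
      = ∑ t ∈ (univ.filter fun t : K => t ^ q = t),
          (univ.filter fun y : K => y ^ 2 = b + t * θ).card := by
    have hmapsto : ∀ y ∈ (univ.filter fun y : K => ∃ t : K, t ^ q = t ∧ y ^ 2 - b = t * θ),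
        (y ^ 2 - b) * θ⁻¹ ∈ (univ.filter fun t : K => t ^ q = t) := by
      intro y hy
      rw [mem_filter] at hy ⊢
      obtain ⟨-, t, ht, hyt⟩ := hy
      refine ⟨mem_univ _, ?_⟩
      rw [hyt, mul_inv_cancel_right₀ hθ, ht]
    rw [Finset.card_eq_sum_card_fiberwise hmapsto]
    apply Finset.sum_congr rfl
    intro t ht
    rw [mem_filter] at ht
    congr 1
    rw [Finset.filter_filter]
    apply Finset.filter_congr
    intro y _
    constructor
    · rintro ⟨⟨t', ht', hyt'⟩, hft⟩
      rw [hyt', mul_inv_cancel_right₀ hθ] at hft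
      subst hft
      linear_combination hyt'
    · intro hy
      have hyb : y ^ 2 - b = t * θ := by linear_combination hy
      exact ⟨⟨t, ht.2, hyb⟩, by rw [hyb, mul_inv_cancel_right₀ hθ]⟩
  -- Step 2 : pointwise count of square roots via the norm
  have step2 : ∀ t ∈ (univ.filter fun t : K => t ^ q = t),
      (univ.filter fun y : K => y ^ 2 = b + t * θ).card
        = ((univ.filter fun t' : K => t' ^ q = t').filter
            fun s => s ^ 2 = A * t ^ 2 + B * t + C).card := by
    intro t ht
    rw [mem_filter] at ht
    rw [hfiber_eq (b + t * θ) (hbt0 t ht.2), hnorm t ht.2]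
  -- Step 3 : sum over t = number of pairs
  have step3 : ∑ t ∈ (univ.filter fun t : K => t ^ q = t),
      ((univ.filter fun t' : K => t' ^ q = t').filter
          fun s => s ^ 2 = A * t ^ 2 + B * t + C).card
      = (((univ.filter fun t : K => t ^ q = t) ×ˢ (univ.filter fun t : K => t ^ q = t)).filter
          fun ts : K × K => ts.2 ^ 2 = A * ts.1 ^ 2 + B * ts.1 + C).card := by
    have hmapsto : ∀ ts ∈ (((univ.filter fun t : K => t ^ q = t) ×ˢ
        (univ.filter fun t : K => t ^ q = t)).filter
          fun ts : K × K => ts.2 ^ 2 = A * ts.1 ^ 2 + B * ts.1 + C),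
        ts.1 ∈ (univ.filter fun t : K => t ^ q = t) := by
      rintro ⟨t, s⟩ hts
      simp only [mem_filter, Finset.mem_product, mem_univ, true_and] at hts ⊢
      exact hts.1.1
    rw [Finset.card_eq_sum_card_fiberwise hmapsto]
    apply Finset.sum_congr rfl
    intro t ht
    symm
    apply Finset.card_bij (fun ts _ => ts.2)
    · rintro ⟨t', s⟩ hts
      simp only [mem_filter, Finset.mem_product, mem_univ, true_and] at hts ⊢
      obtain ⟨⟨⟨-, hs⟩, hQ⟩, hfst⟩ := hts
      subst hfst
      exact ⟨hs, hQ⟩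
    · rintro ⟨t₁, s₁⟩ h1 ⟨t₂, s₂⟩ h2 heq
      simp only [mem_filter, Finset.mem_product, mem_univ, true_and] at h1 h2
      simp only at heq
      exact Prod.ext (h1.2.trans h2.2.symm) heq
    · intro s hs
      simp only [mem_filter, mem_univ, true_and] at hs
      rw [mem_filter] at ht
      refine ⟨(t, s), ?_, rfl⟩
      simp only [mem_filter, Finset.mem_product, mem_univ, true_and]
      exact ⟨⟨⟨ht.2, hs.1⟩, hs.2⟩, trivial⟩
  rw [step1, Finset.sum_congr rfl step2, step3, step4, hnorm_fiber C' hC'1]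

lemma F_card {K : Type} [Field K] [Fintype K] {q : ℕ} (hq3 : 3 ≤ q)
    (hcard : Fintype.card K = q ^ 2) :
    (univ.filter fun t : K => t ^ q = t).card = q := by
  have hM : Fintype.card K - 1 = (q + 1) * (q - 1) := by
    rw [hcard, ← Nat.sq_sub_sq q 1, one_pow]
  have heq : (univ.filter fun t : K => t ^ q = t)
      = insert (0 : K) (univ.filter fun t : K => t ^ (q - 1) = 1) := by
    ext t
    simp only [mem_filter, mem_univ, true_and, mem_insert]
    constructor
    · intro h
      by_cases ht : t = 0
      · exact Or.inl ht
      · exact Or.inr (pow_q_sub_one (by omega) t ht h)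
    · rintro (rfl | h)
      · exact zero_pow (by omega)
      · calc t ^ q = t ^ (q - 1) * t := by rw [← pow_succ, (by omega : q - 1 + 1 = q)]
        _ = t := by rw [h, one_mul]
  rw [heq, Finset.card_insert_of_notMem, count_pow_one K (by omega) ⟨q + 1, by rw [hM, mul_comm]⟩]
  · omega
  · rintro hmem
    rw [mem_filter] at hmem
    rw [zero_pow (by omega : q - 1 ≠ 0)] at hmem
    exact zero_ne_one hmem.2

lemma count_mem {K : Type} [Field K] [Fintype K] {q : ℕ} (hqodd : Odd q)
    (hcard : Fintype.card K = q ^ 2)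
    (hfrob : ∀ x y : K, (x + y) ^ q = x ^ q + y ^ q)
    (θ : K) (hθ : θ ≠ 0) (hns : ¬ ∃ s : K, s ^ q = s ∧ s ^ 2 = θ ^ (q + 1))
    (b t₀ : K) (ht₀ : t₀ ^ q = t₀) (hb : b = t₀ * θ) :
    (univ.filter fun y : K => ∃ t : K, t ^ q = t ∧ y ^ 2 - b = t * θ).card = 1 := by
  have hfilter : (univ.filter fun y : K => ∃ t : K, t ^ q = t ∧ y ^ 2 - b = t * θ) = {0} := by
    ext y
    simp only [mem_filter, mem_univ, true_and, mem_singleton]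
    constructor
    · rintro ⟨t, ht, hyt⟩
      by_contra hy0
      have ht' : (t + t₀) ^ q = t + t₀ := by rw [hfrob, ht, ht₀]
      have hy2 : y ^ 2 = (t + t₀) * θ := by
        rw [hb] at hyt
        linear_combination hyt
      have ht'0 : t + t₀ ≠ 0 := by
        intro h
        rw [h, zero_mul] at hy2
        exact hy0 ((pow_eq_zero_iff (two_ne_zero)).mp hy2)
      apply hns
      refine ⟨y ^ (q + 1) * (t + t₀)⁻¹, ?_, ?_⟩
      · rw [mul_pow, inv_pow, norm_mem hcard y, ht']
      · have h1 : (y ^ (q + 1)) ^ 2 = ((t + t₀) * θ) ^ (q + 1) := by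
          rw [← pow_mul, mul_comm (q + 1) 2, pow_mul, hy2]
        have h2 : ((t + t₀) * θ) ^ (q + 1) = (t + t₀) ^ 2 * θ ^ (q + 1) := by
          rw [mul_pow]
          congr 1
          rw [pow_succ, ht', pow_two]
        rw [mul_pow, h1, h2, inv_pow]
        field_simp
    · rintro rfl
      exact ⟨-t₀, by rw [Odd.neg_pow hqodd, ht₀], by rw [hb]; ring⟩
  rw [hfilter, card_singleton]

end SQ

end Helpers

open Finset Polynomial in
open scoped Classical in
/-- Theorem 2.4 (b).  For `f(x) = x^{p^k+1}` on `K = F_{q²}` with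
`q = pⁿ`, `1 ≤ k ≤ n` and `2n/gcd(2n,k)` odd (an Albert commutative twisted field
plane), every `c` satisfies `#{x : f(x) = c} = #{y : y² = c}`, and for every
`θ ≠ 0` with `θ^{q+1}` a nonsquare in the subfield `F` of order `q` and all `a b`,
the number of `x` with `(x+a)^{p^k+1} − b ∈ θF` is `1` if `b ∈ θF` and `q+1`
otherwise; hence `U_θ` is a unital in `Π(f)`. -/
theorem stmt4 (p n q : ℕ) (hp : Nat.Prime p) (hpodd : Odd p) (hn : 0 < n) (hq : q = p ^ n)
    (K : Type) [Field K] [Fintype K] (hcard : Fintype.card K = q ^ 2)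
    (k : ℕ) (hk1 : 1 ≤ k) (hkn : k ≤ n) (hkodd : Odd (2 * n / Nat.gcd (2 * n) k)) :
    (∀ c : K,
      {x : K | x ^ (p ^ k + 1) = c}.ncard = {y : K | y ^ 2 = c}.ncard) ∧
    (∀ θ : K, θ ≠ 0 → (¬ ∃ s : K, s ^ q = s ∧ s ^ 2 = θ ^ (q + 1)) →
      (∀ a b : K,
        (b ∈ scalarSet K q θ →
          {x : K | (x + a) ^ (p ^ k + 1) - b ∈ scalarSet K q θ}.ncard = 1) ∧
        (b ∉ scalarSet K q θ →
          {x : K | (x + a) ^ (p ^ k + 1) - b ∈ scalarSet K q θ}.ncard = q + 1)) ∧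
      (∀ L ∈ shiftLines K (fun x : K => x ^ (p ^ k + 1)),
        (L ∩ unitalSet K q θ).ncard = 1 ∨ (L ∩ unitalSet K q θ).ncard = q + 1)) := by
  have hp3 : 3 ≤ p := by
    have h2 := hp.two_le
    rcases Nat.lt_or_ge p 3 with h | h
    · interval_cases p
      · exact absurd hpodd (by decide)
    · exact h
  have hq3 : 3 ≤ q := by
    rw [hq]
    calc 3 ≤ p := hp3
    _ = p ^ 1 := (pow_one p).symm
    _ ≤ p ^ n := Nat.pow_le_pow_right (by omega) hn
  have hqodd : Odd q := hq ▸ hpodd.pow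
  have hq2n : q ^ 2 = p ^ (2 * n) := by rw [hq, ← pow_mul, mul_comm]
  -- characteristic
  have hpK : (p : K) = 0 := by
    have h := FiniteField.cast_card_eq_zero K
    rw [hcard, hq2n] at h
    push_cast at h
    exact pow_eq_zero_iff (by omega : 2 * n ≠ 0) |>.mp h
  haveI hFact : Fact p.Prime := ⟨hp⟩
  haveI hcharP : CharP K p := (CharP.charP_iff_prime_eq_zero hp).mpr hpK
  have hfrob : ∀ x y : K, (x + y) ^ q = x ^ q + y ^ q := by
    intro x y
    rw [hq]
    exact add_pow_char_pow x y p n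
  have h2Kne : (2 : K) ≠ 0 := char_ne_two hq3 hqodd hcard
  have hchar2 : ringChar K ≠ 2 := by
    rw [CharP.ringChar_of_prime_eq_zero hp hpK]
    omega
  -- the odd part r of p^k + 1
  obtain ⟨r, hrodd, h2r, hrcop⟩ := nt_main p n k hp hpodd hn hk1 hkodd
  have hrpos : 0 < r := by
    have h1 : 1 ≤ p ^ k := Nat.one_le_pow _ _ hp.pos
    omega
  have hpowinj : Function.Injective (fun u : K => u ^ r) := by
    intro u v huv
    simp only at huv
    by_cases hv : v = 0
    · subst hv
      rw [zero_pow hrpos.ne'] at huv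
      exact pow_eq_zero_iff hrpos.ne' |>.mp huv
    by_cases hu : u = 0
    · subst hu
      rw [zero_pow hrpos.ne'] at huv
      exact absurd ((pow_eq_zero_iff hrpos.ne').mp huv.symm) hv
    have hw : (u * v⁻¹) ^ r = 1 := by
      rw [mul_pow, inv_pow, huv, mul_inv_cancel₀ (pow_ne_zero _ hv)]
    have hw2 : (u * v⁻¹) ^ (Fintype.card K - 1) = 1 :=
      FiniteField.pow_card_sub_one_eq_one _ (mul_ne_zero hu (inv_ne_zero hv))
    have hMeq : Fintype.card K - 1 = p ^ (2 * n) - 1 := by rw [hcard, hq2n]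
    have ho1 : orderOf (u * v⁻¹) ∣ r := orderOf_dvd_of_pow_eq_one hw
    have ho2 : orderOf (u * v⁻¹) ∣ p ^ (2 * n) - 1 :=
      hMeq ▸ orderOf_dvd_of_pow_eq_one hw2
    have hdvd1 : orderOf (u * v⁻¹) ∣ 1 := hrcop ▸ Nat.dvd_gcd ho1 ho2
    have hord1 : u * v⁻¹ = 1 := orderOf_eq_one_iff.mp (Nat.dvd_one.mp hdvd1)
    field_simp at hord1
    exact hord1
  have hpowsurj : Function.Surjective (fun u : K => u ^ r) :=
    Finite.surjective_of_injective hpowinj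
  -- ncard of a set-of equals a filter card
  have hncard : ∀ P : K → Prop, {x : K | P x}.ncard = (univ.filter P).card := by
    intro P
    rw [← Set.ncard_coe_finset (univ.filter P)]
    congr 1
    ext x
    simp
  have hpow2r : ∀ u : K, u ^ (p ^ k + 1) = (u ^ r) ^ 2 := by
    intro u
    rw [h2r, mul_comm 2 r, pow_mul]
  have htrans : ∀ R : K → Prop, {u : K | R (u ^ r)}.ncard = {y : K | R y}.ncard := by
    intro R
    have himg : (fun u : K => u ^ r) '' {u : K | R (u ^ r)} = {y : K | R y} := by
      ext y
      constructor
      · rintro ⟨u, hu, rfl⟩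
        exact hu
      · intro hy
        obtain ⟨u, rfl⟩ := hpowsurj y
        exact ⟨u, hy, rfl⟩
    rw [← himg, Set.ncard_image_of_injective _ hpowinj]
  -- Part 1
  have part1 : ∀ c : K, {x : K | x ^ (p ^ k + 1) = c}.ncard = {y : K | y ^ 2 = c}.ncard := by
    intro c
    have he : {x : K | x ^ (p ^ k + 1) = c} = {x : K | (x ^ r) ^ 2 = c} := by
      ext x
      simp only [Set.mem_setOf_eq, hpow2r]
    rw [he]
    exact htrans (fun y : K => y ^ 2 = c)
  refine ⟨part1, ?_⟩
  intro θ hθ hns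
  -- main counting reduction
  have hsetform : ∀ a b : K, {x : K | (x + a) ^ (p ^ k + 1) - b ∈ scalarSet K q θ}.ncard
      = (univ.filter fun y : K => ∃ t : K, t ^ q = t ∧ y ^ 2 - b = t * θ).card := by
    intro a b
    have hshift : {x : K | (x + a) ^ (p ^ k + 1) - b ∈ scalarSet K q θ}.ncard
        = {u : K | ∃ t : K, t ^ q = t ∧ u ^ (p ^ k + 1) - b = t * θ}.ncard := by
      have himg : (fun x : K => x + a) '' {x : K | (x + a) ^ (p ^ k + 1) - b ∈ scalarSet K q θ}
          = {u : K | ∃ t : K, t ^ q = t ∧ u ^ (p ^ k + 1) - b = t * θ} := by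
        ext u
        constructor
        · rintro ⟨x, hx, rfl⟩
          exact hx
        · intro hu
          refine ⟨u - a, ?_, by ring⟩
          show (u - a + a) ^ (p ^ k + 1) - b ∈ scalarSet K q θ
          rw [(by ring : u - a + a = u)]
          exact hu
      rw [← himg, Set.ncard_image_of_injective _ (add_left_injective a)]
    rw [hshift]
    have he : {u : K | ∃ t : K, t ^ q = t ∧ u ^ (p ^ k + 1) - b = t * θ}
        = {u : K | ∃ t : K, t ^ q = t ∧ (u ^ r) ^ 2 - b = t * θ} := by
      ext u
      simp only [Set.mem_setOf_eq, hpow2r]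
    rw [he, htrans (fun y : K => ∃ t : K, t ^ q = t ∧ y ^ 2 - b = t * θ),
      hncard (fun y : K => ∃ t : K, t ^ q = t ∧ y ^ 2 - b = t * θ)]
    apply congrArg Finset.card
    ext y
    simp only [Finset.mem_filter]
  have hcount : ∀ a b : K,
      (b ∈ scalarSet K q θ →
        {x : K | (x + a) ^ (p ^ k + 1) - b ∈ scalarSet K q θ}.ncard = 1) ∧
      (b ∉ scalarSet K q θ →
        {x : K | (x + a) ^ (p ^ k + 1) - b ∈ scalarSet K q θ}.ncard = q + 1) := by
    intro a b
    constructor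
    · rintro ⟨t₀, ht₀, hb⟩
      rw [hsetform]
      rw [← count_mem hqodd hcard hfrob θ hθ hns b t₀ ht₀ hb]
    · intro hb
      rw [hsetform]
      rw [← count_notmem hq3 hqodd hcard hfrob (F_card hq3 hcard)
        (fun c hc => norm_fiber K q hq3 hcard c hc)
        (fun c hc => fiber_eq hq3 hqodd hcard c hc) h2Kne hchar2 θ hθ hns b hb]
  refine ⟨hcount, ?_⟩
  -- Part 3 : intersections with lines
  intro L hL
  rcases hL with ⟨a, b, rfl⟩ | ⟨a, rfl⟩ | rfl
  · -- affine line
    have hIntEq : affLine K (fun x : K => x ^ (p ^ k + 1)) a b ∩ unitalSet K q θ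
        = (fun x : K => (Sum.inl (x, (x + a) ^ (p ^ k + 1) - b) : ShiftPt K)) ''
            {x : K | (x + a) ^ (p ^ k + 1) - b ∈ scalarSet K q θ} := by
      ext P
      constructor
      · rintro ⟨hP1, hP2⟩
        rcases hP1 with ⟨x, rfl⟩ | rfl
        · rcases hP2 with ⟨x', t, ht, hPt⟩ | hP2
          · simp only [Sum.inl.injEq, Prod.mk.injEq] at hPt
            exact ⟨x, ⟨t, ht, hPt.2⟩, rfl⟩
          · exact absurd hP2 (by simp)
        · rcases hP2 with ⟨x', t, ht, hPt⟩ | hP2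
          · exact absurd hPt (by simp)
          · exact absurd hP2 (by simp)
      · rintro ⟨x, hx, rfl⟩
        refine ⟨Or.inl ⟨x, rfl⟩, ?_⟩
        obtain ⟨t, ht, hxt⟩ := hx
        refine Or.inl ⟨x, t, ht, ?_⟩
        show Sum.inl (x, (x + a) ^ (p ^ k + 1) - b) = Sum.inl (x, t * θ)
        rw [hxt]
    rw [hIntEq, Set.ncard_image_of_injective _ (by
      intro x₁ x₂ h
      simp only [Sum.inl.injEq, Prod.mk.injEq] at h
      exact h.1)]
    by_cases hb : b ∈ scalarSet K q θ
    · exact Or.inl ((hcount a b).1 hb)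
    · exact Or.inr ((hcount a b).2 hb)
  · -- vertical line
    right
    have hEq : vertLine K a ∩ unitalSet K q θ
        = insert (Sum.inr (Sum.inr ()) : ShiftPt K)
            ((fun t : K => (Sum.inl (a, t * θ) : ShiftPt K)) '' {t : K | t ^ q = t}) := by
      ext P
      constructor
      · rintro ⟨hP1, hP2⟩
        rcases hP2 with ⟨x, t, ht, rfl⟩ | rfl
        · rcases hP1 with ⟨y, hy⟩ | h
          · simp only [Sum.inl.injEq, Prod.mk.injEq] at hy
            right
            exact ⟨t, ht, by rw [hy.1]⟩
          · exact absurd h (by simp)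
        · exact Or.inl rfl
      · rintro (rfl | ⟨t, ht, rfl⟩)
        · exact ⟨Or.inr rfl, Or.inr rfl⟩
        · exact ⟨Or.inl ⟨t * θ, rfl⟩, Or.inl ⟨a, t, ht, rfl⟩⟩
    rw [hEq]
    rw [Set.ncard_insert_of_notMem (by rintro ⟨t, -, h⟩; exact absurd h (by simp))
      (Set.toFinite _)]
    rw [Set.ncard_image_of_injective _ (by
      intro t₁ t₂ h
      simp only [Sum.inl.injEq, Prod.mk.injEq] at h
      exact mul_right_cancel₀ hθ h.2)]
    rw [hncard (fun t : K => t ^ q = t), F_card hq3 hcard]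
  · -- line at infinity
    left
    have hEq : lineAtInf K ∩ unitalSet K q θ = {(Sum.inr (Sum.inr ()) : ShiftPt K)} := by
      ext P
      constructor
      · rintro ⟨⟨s, rfl⟩, hP2⟩
        rcases hP2 with ⟨x, t, ht, h⟩ | h
        · exact absurd h (by simp)
        · rw [h]; rfl
      · rintro rfl
        exact ⟨⟨Sum.inr (), rfl⟩, Or.inr rfl⟩
    rw [hEq, Set.ncard_singleton]
end

section
/- Let p = 3, n a positive integer, q = 3ⁿ, and K a finite field with q² = 3^{2n} elements with F its subfield of order q. Let k be an integer with gcd(k, 2n) = 1 and set f(x) = x^{(3^k+1)/2} (a Coulter–Matthews planar function). Then for every c ∈ K the number of x ∈ K with f(x) = c equals the number of y ∈ K with y² = c, and for every θ ∈ K \ {0} with θ^{q+1} a nonsquare in F and all a, b ∈ K, the number of x ∈ K with f(x+a) − b ∈ θF equals 1 if b ∈ θF and equals q+1 if b ∉ θF; hence U_θ = {(x, tθ) : x ∈ K, t ∈ F} ∪ {(∞)} is a unital in the Coulter–Matthews plane Π(f). -/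
lemma aux_nt (n k d : ℕ) (hk : Nat.gcd k (2 * n) = 1)
    (hd : 2 * d = 3 ^ k + 1) :
    ∃ d₁ : ℕ, d = 2 * d₁ ∧ Nat.Coprime d₁ (3 ^ (2 * n) - 1) := by
  -- k is odd
  have hk2 : k % 2 = 1 := by
    rcases Nat.even_or_odd k with he | ho
    · exfalso
      obtain ⟨j, rfl⟩ := he
      have h2 : 2 ∣ Nat.gcd (j + j) (2 * n) := Nat.dvd_gcd ⟨j, by ring⟩ ⟨n, rfl⟩
      omega
    · exact Nat.odd_iff.mp ho
  obtain ⟨j, hj⟩ : ∃ j, k = 2 * j + 1 := ⟨k / 2, by omega⟩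
  have h9 : 9 ^ j % 8 = 1 := by
    have : (9 : ℕ) ^ j ≡ 1 ^ j [MOD 8] := Nat.ModEq.pow j (by decide)
    simpa [Nat.ModEq] using this
  have h3k : 3 ^ k = 3 * 9 ^ j := by
    subst hj; rw [pow_succ, pow_mul]; norm_num [mul_comm]
  have h84 : (3 ^ k + 1) % 8 = 4 := by rw [h3k]; omega
  have hd4 : d % 4 = 2 := by omega
  refine ⟨d / 2, by omega, ?_⟩
  set d₁ := d / 2 with hd₁
  set M := 3 ^ (2 * n) - 1 with hM
  set G := Nat.gcd (3 ^ k + 1) M with hG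
  have hGpos : 0 < G := Nat.gcd_pos_of_pos_left _ (by positivity)
  haveI : NeZero G := ⟨hGpos.ne'⟩
  have h2k : 3 ^ (2 * k) - 1 = (3 ^ k + 1) * (3 ^ k - 1) := by
    obtain ⟨s, hs⟩ : ∃ s, 3 ^ k = s + 1 :=
      ⟨3 ^ k - 1, by have := Nat.one_le_pow k 3 (by norm_num); omega⟩
    have h2 : 3 ^ (2 * k) = (s + 1) * (s + 1) := by rw [two_mul, pow_add, hs]
    rw [h2, hs]
    have h3 : (s + 1) * (s + 1) = (s + 1 + 1) * s + 1 := by ring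
    simp only [Nat.add_sub_cancel]
    omega
  have hdvd1 : G ∣ 3 ^ (2 * k) - 1 := by
    rw [h2k]; exact dvd_trans (Nat.gcd_dvd_left _ _) (dvd_mul_right _ _)
  have hdvd2 : G ∣ M := Nat.gcd_dvd_right _ _
  have hz1 : (3 : ZMod G) ^ (2 * k) = 1 := by
    have h1le : 1 ≤ 3 ^ (2 * k) := Nat.one_le_pow _ _ (by norm_num)
    have h0 : ((3 ^ (2 * k) - 1 : ℕ) : ZMod G) = 0 :=
      (ZMod.natCast_eq_zero_iff _ _).mpr hdvd1
    rw [Nat.cast_sub h1le] at h0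
    push_cast at h0
    linear_combination h0
  have hz2 : (3 : ZMod G) ^ (2 * n) = 1 := by
    have h1le : 1 ≤ 3 ^ (2 * n) := Nat.one_le_pow _ _ (by norm_num)
    have h0 : ((M : ℕ) : ZMod G) = 0 := (ZMod.natCast_eq_zero_iff _ _).mpr hdvd2
    rw [hM, Nat.cast_sub h1le] at h0
    push_cast at h0
    linear_combination h0
  have hz : (3 : ZMod G) ^ Nat.gcd (2 * k) (2 * n) = 1 := pow_gcd_eq_one.mpr ⟨hz1, hz2⟩
  have hgcd2 : Nat.gcd (2 * k) (2 * n) = 2 := by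
    rw [Nat.gcd_mul_left]
    have h1 : Nat.gcd k n ∣ 1 := by
      rw [← hk]; exact Nat.dvd_gcd (Nat.gcd_dvd_left _ _)
        ((Nat.gcd_dvd_right _ _).trans ⟨2, by ring⟩)
    have := Nat.dvd_one.mp h1
    omega
  have h8 : G ∣ 8 := by
    have h9' : ((8 : ℕ) : ZMod G) = 0 := by
      rw [hgcd2] at hz
      push_cast
      linear_combination hz
    exact (ZMod.natCast_eq_zero_iff 8 G).mp h9'
  -- now the coprimality
  have hcd : Nat.gcd d₁ M ∣ d₁ := Nat.gcd_dvd_left _ _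
  have hc8 : Nat.gcd d₁ M ∣ 8 := by
    refine dvd_trans (Nat.dvd_gcd ?_ (Nat.gcd_dvd_right _ _)) h8
    exact hcd.trans ⟨4, by omega⟩
  have hodd : ¬ 2 ∣ Nat.gcd d₁ M := fun h2 => by
    have := h2.trans hcd; omega
  have hco2 : Nat.Coprime 2 (Nat.gcd d₁ M) :=
    (Nat.Prime.coprime_iff_not_dvd Nat.prime_two).mpr hodd
  have : Nat.Coprime (Nat.gcd d₁ M) 8 := by
    have := (hco2.pow_left 3).symm
    norm_num at this
    exact this
  exact this.eq_one_of_dvd hc8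

lemma ncard_preimage_of_bijective {α β : Type*} {f : α → β} (hf : Function.Bijective f)
    (T : Set β) : (f ⁻¹' T).ncard = T.ncard := by
  conv_rhs => rw [← Set.image_preimage_eq T hf.surjective]
  rw [Set.ncard_image_of_injective _ hf.injective]

lemma count_pow_s5 (K : Type) [Field K] [Fintype K] {m : ℕ} (hm : 0 < m)
    (hdvd : m ∣ Fintype.card K - 1) {w : K} (hw : w ≠ 0) (hex : ∃ α : K, α ^ m = w) :
    {z : K | z ^ m = w}.ncard = m := by
  classical
  obtain ⟨g, hg⟩ := IsCyclic.exists_generator (α := Kˣ)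
  have horder : orderOf g = Fintype.card K - 1 := by
    rw [orderOf_eq_card_of_forall_mem_zpowers hg, Nat.card_eq_fintype_card, Fintype.card_units]
  obtain ⟨r, hr⟩ := hdvd
  have hrpos : 0 < r := by
    rcases Nat.eq_zero_or_pos r with rfl | h
    · exfalso
      have h1 : 1 < Fintype.card K := Fintype.one_lt_card
      omega
    · exact h
  have hordζ : orderOf (g ^ r) = m := by
    rw [orderOf_pow, horder, hr, Nat.gcd_eq_right ⟨m, by ring⟩, Nat.mul_div_cancel _ hrpos]
  have hζ : IsPrimitiveRoot (((g ^ r : Kˣ) : K)) m := by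
    have h := IsPrimitiveRoot.orderOf (((g ^ r : Kˣ) : K))
    rwa [orderOf_units, hordζ] at h
  have hcardroots := hζ.card_nthRoots w
  rw [if_pos hex] at hcardroots
  have hnodup := hζ.nthRoots_nodup (a := w) hw
  have hset : {z : K | z ^ m = w} = ↑(Polynomial.nthRoots m w).toFinset := by
    ext z
    simp [Polynomial.mem_nthRoots hm]
  rw [hset, Set.ncard_coe_finset, Multiset.toFinset_card_of_nodup hnodup, hcardroots]

lemma exists_pow_root (K : Type) [Field K] [Fintype K] (q : ℕ) (hq3 : 3 ≤ q)
    (hM : Fintype.card K - 1 = (q + 1) * (q - 1)) {w : K} (hw0 : w ≠ 0) (hw : w ^ q = w)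
    {m : ℕ} (hm : m ∣ q + 1) : ∃ α : K, α ^ m = w := by
  classical
  obtain ⟨g, hg⟩ := IsCyclic.exists_generator (α := Kˣ)
  have horder : orderOf g = (q + 1) * (q - 1) := by
    rw [orderOf_eq_card_of_forall_mem_zpowers hg, Nat.card_eq_fintype_card,
      Fintype.card_units, hM]
  obtain ⟨j, hj⟩ : Units.mk0 w hw0 ∈ Submonoid.powers g := by
    rw [mem_powers_iff_mem_zpowers]; exact hg _
  have hj' : g ^ j = Units.mk0 w hw0 := hj
  have hw1 : (Units.mk0 w hw0) ^ (q - 1) = 1 := by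
    have hK : w ^ (q - 1) = 1 := by
      have h1 : w ^ (q - 1) * w = 1 * w := by
        rw [one_mul, ← pow_succ, show q - 1 + 1 = q by omega]; exact hw
      exact mul_right_cancel₀ hw0 h1
    apply Units.ext
    rw [Units.val_pow_eq_pow_val]
    simpa using hK
  have hdvd : (q + 1) * (q - 1) ∣ j * (q - 1) := by
    rw [← horder]
    apply orderOf_dvd_of_pow_eq_one
    rw [pow_mul, hj', hw1]
  obtain ⟨t, ht⟩ := hdvd
  have hq1 : j = (q + 1) * t := by
    have h2 : 0 < q - 1 := by omega
    apply Nat.eq_of_mul_eq_mul_right h2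
    rw [ht]; ring
  obtain ⟨s, hs⟩ := hm
  refine ⟨((g ^ (s * t) : Kˣ) : K), ?_⟩
  have hu : (g ^ (s * t)) ^ m = Units.mk0 w hw0 := by
    rw [← pow_mul, show s * t * m = j by rw [hq1, hs]; ring, hj']
  rw [← Units.val_pow_eq_pow_val, hu, Units.val_mk0]


/-- Theorem 2.4 (c).  For the Coulter–Matthews planar function
`f(x) = x^{(3^k+1)/2}` on `K = F_{3^{2n}}` with `gcd(k,2n) = 1` and `q = 3ⁿ`,
every `c` satisfies `#{x : f(x) = c} = #{y : y² = c}`, and for every `θ ≠ 0`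
with `θ^{q+1}` a nonsquare in the subfield `F` of order `q` and all `a b`, the
number of `x` with `f(x+a) − b ∈ θF` is `1` if `b ∈ θF` and `q+1` otherwise;
hence `U_θ` is a unital in the Coulter–Matthews plane `Π(f)`. -/
theorem stmt5 (n q : ℕ) (hn : 0 < n) (hq : q = 3 ^ n)
    (K : Type) [Field K] [Fintype K] (hcard : Fintype.card K = q ^ 2)
    (k d : ℕ) (hk : Nat.gcd k (2 * n) = 1) (hd : 2 * d = 3 ^ k + 1) :
    (∀ c : K,
      {x : K | x ^ d = c}.ncard = {y : K | y ^ 2 = c}.ncard) ∧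
    (∀ θ : K, θ ≠ 0 → (¬ ∃ s : K, s ^ q = s ∧ s ^ 2 = θ ^ (q + 1)) →
      (∀ a b : K,
        (b ∈ scalarSet K q θ →
          {x : K | (x + a) ^ d - b ∈ scalarSet K q θ}.ncard = 1) ∧
        (b ∉ scalarSet K q θ →
          {x : K | (x + a) ^ d - b ∈ scalarSet K q θ}.ncard = q + 1)) ∧
      (∀ L ∈ shiftLines K (fun x : K => x ^ d),
        (L ∩ unitalSet K q θ).ncard = 1 ∨ (L ∩ unitalSet K q θ).ncard = q + 1)) := by
  classical
  have hq3 : 3 ≤ q := by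
    rw [hq]
    calc 3 = 3 ^ 1 := (pow_one 3).symm
      _ ≤ 3 ^ n := Nat.pow_le_pow_right (by norm_num) hn
  have hqodd : q % 2 = 1 := by
    rw [hq]; exact Nat.odd_iff.mp (Odd.pow (⟨1, by norm_num⟩ : Odd 3))
  have hcards : Fintype.card K = 3 ^ (2 * n) := by
    rw [hcard, hq, ← pow_mul, mul_comm]
  have hM1 : Fintype.card K - 1 = (q + 1) * (q - 1) := by
    rw [hcard]
    obtain ⟨s, hs⟩ : ∃ s, q = s + 1 := ⟨q - 1, by omega⟩
    subst hs
    have h2 : (s + 1) ^ 2 = (s + 1 + 1) * s + 1 := by ring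
    simp only [Nat.add_sub_cancel]
    omega
  haveI hp3 : CharP K 3 := by
    obtain ⟨m, hp, hc⟩ := FiniteField.card K (ringChar K)
    have h3 : ringChar K = 3 := by
      have hdvd : ringChar K ∣ 3 ^ (2 * n) := by
        rw [← hcards, hc]
        exact dvd_pow_self _ (by exact_mod_cast m.ne_zero)
      exact (Nat.prime_dvd_prime_iff_eq hp (by norm_num)).mp (hp.dvd_of_dvd_pow hdvd)
    rw [← h3]; exact ringChar.charP K
  haveI : Fact (Nat.Prime 3) := ⟨by norm_num⟩
  have eadd : ∀ u v : K, (u + v) ^ q = u ^ q + v ^ q := by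
    intro u v; rw [hq]; exact add_pow_char_pow u v 3 n
  have esub : ∀ u v : K, (u - v) ^ q = u ^ q - v ^ q := by
    intro u v; rw [hq]; exact sub_pow_char_pow u v n
  have hpc : ∀ x : K, (x ^ q) ^ q = x := by
    intro x
    rw [← pow_mul, show q * q = q ^ 2 from (pow_two q).symm, ← hcard]
    exact FiniteField.pow_card x
  obtain ⟨d₁, hdd, hcop⟩ := aux_nt n k d hk hd
  have hcopM : Nat.Coprime d₁ (Fintype.card K - 1) := by rwa [hcards]
  have hd₁pos : 0 < d₁ := by
    rcases Nat.eq_zero_or_pos d₁ with rfl | h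
    · exfalso
      have h1 : Fintype.card K - 1 = 1 := (Nat.coprime_zero_left _).mp hcopM
      have h2 : 3 * 3 ≤ q * q := Nat.mul_le_mul hq3 hq3
      rw [hcard, pow_two] at h1
      omega
    · exact h
  have hσ : Function.Bijective (fun x : K => x ^ d₁) := by
    rw [← Finite.injective_iff_bijective]
    intro x y hxy
    simp only at hxy
    by_cases hx : x = 0
    · subst hx
      rw [zero_pow hd₁pos.ne', eq_comm] at hxy
      exact ((pow_eq_zero_iff hd₁pos.ne').mp hxy).symm
    · by_cases hy : y = 0
      · subst hy
        rw [zero_pow hd₁pos.ne'] at hxy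
        exact (pow_eq_zero_iff hd₁pos.ne').mp hxy
      · have hcop' : (Nat.card Kˣ).Coprime d₁ := by
          rw [Nat.card_units, Nat.card_eq_fintype_card]
          exact hcopM.symm
        have hu : (Units.mk0 x hx) ^ d₁ = (Units.mk0 y hy) ^ d₁ := by
          apply Units.ext
          rw [Units.val_pow_eq_pow_val, Units.val_pow_eq_pow_val]
          simpa using hxy
        have h2 := (powCoprime hcop').injective hu
        simpa using congrArg Units.val h2
  have hpart1 : ∀ c : K, {x : K | x ^ d = c}.ncard = {y : K | y ^ 2 = c}.ncard := by
    intro c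
    have hset : {x : K | x ^ d = c} = (fun x : K => x ^ d₁) ⁻¹' {y : K | y ^ 2 = c} := by
      ext x
      simp only [Set.mem_setOf_eq, Set.mem_preimage]
      rw [hdd, mul_comm, pow_mul]
    rw [hset, ncard_preimage_of_bijective hσ]
  have hnorm : ∀ w : K, w ^ q = w →
      {z : K | z ^ (q + 1) = w}.ncard = if w = 0 then 1 else q + 1 := by
    intro w hw
    by_cases hw0 : w = 0
    · subst hw0
      rw [if_pos rfl]
      have hzset : {z : K | z ^ (q + 1) = 0} = {(0 : K)} := by
        ext z
        simp [pow_eq_zero_iff (Nat.succ_ne_zero q)]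
      rw [hzset, Set.ncard_singleton]
    · rw [if_neg hw0]
      exact count_pow_s5 K (Nat.succ_pos q) ⟨q - 1, hM1⟩ hw0
        (exists_pow_root K q hq3 hM1 hw0 hw dvd_rfl)
  have hFcard : {t : K | t ^ q = t}.ncard = q := by
    have h1 : {t : K | t ^ (q - 1) = 1}.ncard = q - 1 :=
      count_pow_s5 K (by omega) ⟨q + 1, by rw [hM1]; ring⟩ one_ne_zero ⟨1, one_pow _⟩
    have h0 : (0 : K) ∉ {t : K | t ^ (q - 1) = 1} := by
      simp [zero_pow (show q - 1 ≠ 0 by omega)]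
    have hset : {t : K | t ^ q = t} = insert (0 : K) {t : K | t ^ (q - 1) = 1} := by
      ext t
      simp only [Set.mem_setOf_eq, Set.mem_insert_iff]
      constructor
      · intro h
        by_cases ht : t = 0
        · exact Or.inl ht
        · refine Or.inr ?_
          have h1' : t ^ (q - 1) * t = 1 * t := by
            rw [one_mul, ← pow_succ, show q - 1 + 1 = q by omega]; exact h
          exact mul_right_cancel₀ ht h1'
      · rintro (rfl | h)
        · rw [zero_pow (show q ≠ 0 by omega)]
        · rw [show q = q - 1 + 1 by omega, pow_succ, h, one_mul]
    rw [hset, Set.ncard_insert_of_notMem h0 (Set.toFinite _), h1]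
    omega
  refine ⟨hpart1, fun θ hθ hns => ?_⟩
  have hθq0 : θ ^ q ≠ 0 := pow_ne_zero _ hθ
  have hν0 : θ ^ (q + 1) ≠ 0 := pow_ne_zero _ hθ
  have hνq : (θ ^ (q + 1)) ^ q = θ ^ (q + 1) := by
    rw [← pow_mul, show (q + 1) * q = q * q + q by ring, pow_add,
      show q * q = q ^ 2 from (pow_two q).symm, ← hcard, FiniteField.pow_card, pow_succ]
    ring
  obtain ⟨β, hβ2⟩ := exists_pow_root K q hq3 hM1 hν0 hνq (⟨(q + 1) / 2, by omega⟩ : 2 ∣ q + 1)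
  have hβ0 : β ≠ 0 := by
    intro h
    rw [h, zero_pow two_ne_zero] at hβ2
    exact hν0 hβ2.symm
  have hν' : β ^ 2 = θ ^ q * θ := by rw [hβ2, pow_succ]
  have hβq : β ^ q = -β := by
    have h1 : (β ^ q) ^ 2 = β ^ 2 := by
      calc (β ^ q) ^ 2 = (β ^ 2) ^ q := by rw [pow_right_comm]
        _ = (θ ^ (q + 1)) ^ q := by rw [hβ2]
        _ = θ ^ (q + 1) := hνq
        _ = β ^ 2 := hβ2.symm
    have h2 : (β ^ q - β) * (β ^ q + β) = 0 := by linear_combination h1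
    rcases mul_eq_zero.mp h2 with h | h
    · exact absurd ⟨β, by linear_combination h, hβ2⟩ hns
    · linear_combination h
  have hLzero : ∀ y : K, θ * y ^ q + β * y = 0 → y = 0 := by
    intro y hy
    by_contra hy0
    have h2 : θ ^ q * y - β * y ^ q = 0 := by
      have hq' := congrArg (fun z : K => z ^ q) hy
      rw [eadd, mul_pow, mul_pow, hpc, hβq, zero_pow (show q ≠ 0 by omega)] at hq'
      linear_combination hq'
    have h3 : (2 * (θ ^ q * θ)) * y ^ q = 0 := by
      linear_combination θ ^ q * hy - β * h2 - y ^ q * hν'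
    have h2ne : (2 : K) * (θ ^ q * θ) ≠ 0 := by
      apply mul_ne_zero
      · have h31 : ((3 : ℕ) : K) = 0 := CharP.cast_eq_zero K 3
        intro h20
        have h10 : (1 : K) = 0 := by
          push_cast at h31
          linear_combination h31 - h20
        exact one_ne_zero h10
      · exact mul_ne_zero hθq0 hθ
    have h4 := (mul_eq_zero.mp h3).resolve_left h2ne
    exact hy0 ((pow_eq_zero_iff (show q ≠ 0 by omega)).mp h4)
  have hLinj : Function.Injective (fun y : K => θ * y ^ q + β * y) := by
    intro y z hyz
    simp only at hyz
    have h0 : θ * (y - z) ^ q + β * (y - z) = 0 := by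
      rw [esub]; linear_combination hyz
    exact sub_eq_zero.mp (hLzero _ h0)
  have hLbij := Finite.injective_iff_bijective.mp hLinj
  have hmemS : ∀ z : K, z ∈ scalarSet K q θ ↔ z ^ q * θ = z * θ ^ q := by
    intro z
    constructor
    · rintro ⟨t, ht, rfl⟩
      rw [mul_pow, ht]; ring
    · intro h
      refine ⟨z * θ⁻¹, ?_, by field_simp⟩
      rw [mul_pow, inv_pow]
      field_simp
      linear_combination h
  have hsubq : ∀ y b : K, (y ^ 2 - b) ^ q = (y ^ q) ^ 2 - b ^ q := by
    intro y b; rw [esub, pow_right_comm]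
  have hLpow : ∀ y : K,
      (θ * y ^ q + β * y) ^ (q + 1) = -β * (θ * (y ^ q) ^ 2 - θ ^ q * y ^ 2) := by
    intro y
    have h1 : (θ * y ^ q + β * y) ^ q = θ ^ q * y - β * y ^ q := by
      rw [eadd, mul_pow, mul_pow, hpc, hβq]; ring
    rw [pow_succ, h1]
    linear_combination (-(y * y ^ q)) * hν'
  have hkey : ∀ y b : K, (y ^ 2 - b ∈ scalarSet K q θ) ↔
      (θ * y ^ q + β * y) ^ (q + 1) = β * b * θ ^ q - β * b ^ q * θ := by
    intro y b
    rw [hmemS, hsubq, hLpow]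
    constructor
    · intro h; linear_combination -β * h
    · intro h
      have h2 : -β * (((y ^ q) ^ 2 - b ^ q) * θ - (y ^ 2 - b) * θ ^ q) = 0 := by
        linear_combination h
      have h3 := (mul_eq_zero.mp h2).resolve_left (neg_ne_zero.mpr hβ0)
      linear_combination h3
  have hwq : ∀ b : K, (β * b * θ ^ q - β * b ^ q * θ) ^ q = β * b * θ ^ q - β * b ^ q * θ := by
    intro b
    rw [esub, mul_pow, mul_pow, mul_pow, mul_pow, hβq, hpc, hpc]
    ring
  have hw0iff : ∀ b : K, (β * b * θ ^ q - β * b ^ q * θ = 0) ↔ b ∈ scalarSet K q θ := by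
    intro b
    rw [hmemS]
    constructor
    · intro hw
      have h2 : β * (b * θ ^ q - b ^ q * θ) = 0 := by linear_combination hw
      have h3 := (mul_eq_zero.mp h2).resolve_left hβ0
      linear_combination -h3
    · intro hb
      linear_combination -β * hb
  have hcount : ∀ a b : K,
      {x : K | (x + a) ^ d - b ∈ scalarSet K q θ}.ncard
        = if b ∈ scalarSet K q θ then 1 else q + 1 := by
    intro a b
    have hsets : {x : K | (x + a) ^ d - b ∈ scalarSet K q θ}
        = (fun x : K => θ * ((x + a) ^ d₁) ^ q + β * ((x + a) ^ d₁))
          ⁻¹' {z : K | z ^ (q + 1) = β * b * θ ^ q - β * b ^ q * θ} := by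
      ext x
      simp only [Set.mem_setOf_eq, Set.mem_preimage]
      rw [show (x + a) ^ d = ((x + a) ^ d₁) ^ 2 by rw [hdd, mul_comm, pow_mul]]
      exact hkey ((x + a) ^ d₁) b
    have hbij : Function.Bijective
        (fun x : K => θ * ((x + a) ^ d₁) ^ q + β * ((x + a) ^ d₁)) :=
      (hLbij.comp hσ).comp (Equiv.addRight a).bijective
    rw [hsets, ncard_preimage_of_bijective hbij, hnorm _ (hwq b)]
    by_cases hb : b ∈ scalarSet K q θ
    · rw [if_pos ((hw0iff b).mpr hb), if_pos hb]
    · rw [if_neg (fun h => hb ((hw0iff b).mp h)), if_neg hb]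
  refine ⟨fun a b => ⟨fun hb => by rw [hcount a b, if_pos hb],
    fun hb => by rw [hcount a b, if_neg hb]⟩, ?_⟩
  intro L hL
  rcases hL with ⟨a, b, rfl⟩ | ⟨a, rfl⟩ | rfl
  · have himg : affLine K (fun x : K => x ^ d) a b ∩ unitalSet K q θ
        = (fun x : K => (Sum.inl (x, (x + a) ^ d - b) : ShiftPt K))
          '' {x : K | (x + a) ^ d - b ∈ scalarSet K q θ} := by
      ext P
      simp only [affLine, unitalSet, Set.mem_inter_iff, Set.mem_setOf_eq, Set.mem_image]
      constructor
      · rintro ⟨hPL, hPU⟩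
        rcases hPL with ⟨x, rfl⟩ | rfl
        · rcases hPU with ⟨x', t, ht, hP⟩ | hP
          · simp only [Sum.inl.injEq, Prod.mk.injEq] at hP
            exact ⟨x, ⟨t, ht, hP.2⟩, rfl⟩
          · simp at hP
        · rcases hPU with ⟨x', t, ht, hP⟩ | hP <;> simp at hP
      · rintro ⟨x, ⟨t, ht, heq⟩, rfl⟩
        exact ⟨Or.inl ⟨x, rfl⟩, Or.inl ⟨x, t, ht, by rw [heq]⟩⟩
    have hinj : Function.Injective
        (fun x : K => (Sum.inl (x, (x + a) ^ d - b) : ShiftPt K)) := by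
      intro x y hxy
      simp only [Sum.inl.injEq, Prod.mk.injEq] at hxy
      exact hxy.1
    rw [himg, Set.ncard_image_of_injective _ hinj, hcount a b]
    by_cases hb : b ∈ scalarSet K q θ
    · rw [if_pos hb]; left; rfl
    · rw [if_neg hb]; right; rfl
  · have heq : vertLine K a ∩ unitalSet K q θ
        = insert (Sum.inr (Sum.inr ()) : ShiftPt K)
            ((fun t : K => (Sum.inl (a, t * θ) : ShiftPt K)) '' {t : K | t ^ q = t}) := by
      ext P
      simp only [vertLine, unitalSet, Set.mem_inter_iff, Set.mem_setOf_eq,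
        Set.mem_insert_iff, Set.mem_image]
      constructor
      · rintro ⟨hPL, hPU⟩
        rcases hPL with ⟨y, rfl⟩ | rfl
        · rcases hPU with ⟨x', t, ht, hP⟩ | hP
          · simp only [Sum.inl.injEq, Prod.mk.injEq] at hP
            exact Or.inr ⟨t, ht, by rw [hP.2]⟩
          · simp at hP
        · exact Or.inl rfl
      · rintro (rfl | ⟨t, ht, rfl⟩)
        · exact ⟨Or.inr rfl, Or.inr rfl⟩
        · exact ⟨Or.inl ⟨t * θ, rfl⟩, Or.inl ⟨a, t, ht, rfl⟩⟩
    have hninj : Function.Injective (fun t : K => (Sum.inl (a, t * θ) : ShiftPt K)) := by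
      intro t s hts
      simp only [Sum.inl.injEq, Prod.mk.injEq] at hts
      exact mul_right_cancel₀ hθ hts.2
    have hnm : (Sum.inr (Sum.inr ()) : ShiftPt K)
        ∉ (fun t : K => (Sum.inl (a, t * θ) : ShiftPt K)) '' {t : K | t ^ q = t} := by
      rintro ⟨t, ht, h⟩
      simp at h
    rw [heq, Set.ncard_insert_of_notMem hnm (Set.toFinite _),
      Set.ncard_image_of_injective _ hninj, hFcard]
    right; rfl
  · have heq : lineAtInf K ∩ unitalSet K q θ = {(Sum.inr (Sum.inr ()) : ShiftPt K)} := by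
      ext P
      simp only [lineAtInf, unitalSet, Set.mem_inter_iff, Set.mem_setOf_eq,
        Set.mem_singleton_iff]
      constructor
      · rintro ⟨⟨s, rfl⟩, hPU⟩
        rcases hPU with ⟨x, t, ht, hP⟩ | hP
        · simp at hP
        · exact hP
      · rintro rfl
        exact ⟨⟨Sum.inr (), rfl⟩, Or.inr rfl⟩
    rw [heq, Set.ncard_singleton]
    left; rfl
end

section
/- Let p be an odd prime, n a positive integer, q = pⁿ with q ≡ 1 (mod 4), and K a finite field with q² elements with F its subfield of order q. Let α be a nonsquare in F and ξ ∈ K with ξ² = α, so every x ∈ K is uniquely x = x₀ + x₁ξ with x₀, x₁ ∈ F. Let i, k be integers with 0 < i < n, 0 ≤ k < n, and n/gcd(n,k) odd, and define f : K → K by f(x₀ + x₁ξ) = (x₀^{p^k+1} + α x₁^{(p^k+1)p^i}) + 2x₀x₁ξ (the planar function of a Dickson semifield when k = 0, and of a Pott–Zhou semifield when k > 0). Then for all a, b ∈ K the number of x ∈ K with f(x+a) − b ∈ ξF equals 1 if b ∈ ξF and equals q+1 if b ∉ ξF; hence U_ξ = {(x, tξ) : x ∈ K, t ∈ F} ∪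 {(∞)} is a unital in the commutative semifield plane Π(f). -/
private lemma gcd_pow_sub_one (P : ℕ) (hP : 2 ≤ P) :
    ∀ a b : ℕ, Nat.gcd (P ^ a - 1) (P ^ b - 1) = P ^ (Nat.gcd a b) - 1 := by
  have expand : ∀ a b : ℕ, 0 < a → a ≤ b →
      P ^ b - 1 = P ^ (b - a) * (P ^ a - 1) + (P ^ (b-a) - 1) := by
    intro a b ha hle
    have h1 : 1 ≤ P ^ a := Nat.one_le_pow _ _ (by omega)
    have h2 : 1 ≤ P ^ (b-a) := Nat.one_le_pow _ _ (by omega)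
    have h0 : 1 ≤ P ^ b := Nat.one_le_pow _ _ (by omega)
    have h3 : P ^ (b-a) * P ^ a = P ^ b := by rw [← pow_add]; congr 1; omega
    zify [h0, h1, h2]
    push_cast at h3
    nlinarith [h3]
  have key : ∀ s : ℕ, ∀ a b : ℕ, a + b ≤ s →
      Nat.gcd (P ^ a - 1) (P ^ b - 1) = P ^ (Nat.gcd a b) - 1 := by
    intro s
    induction s with
    | zero => intro a b h
              have : a = 0 := by omega
              have hb : b = 0 := by omega
              subst this; subst hb; simp
    | succ s ih =>
      intro a b hab
      rcases Nat.eq_zero_or_pos a with ha | ha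
      · subst ha; simp
      rcases Nat.eq_zero_or_pos b with hb | hb
      · subst hb; simp
      rcases le_or_gt a b with hle | hlt
      · rw [expand a b ha hle, add_comm, Nat.gcd_add_mul_right_right,
          ih a (b - a) (by omega)]
        congr 1
        rw [Nat.gcd_comm a (b-a), Nat.gcd_sub_self_left hle, Nat.gcd_comm]
      · rw [Nat.gcd_comm, Nat.gcd_comm a b, expand b a hb hlt.le, add_comm,
          Nat.gcd_add_mul_right_right, ih b (a - b) (by omega)]
        congr 1
        rw [Nat.gcd_comm b (a-b), Nat.gcd_sub_self_left hlt.le, Nat.gcd_comm]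
  exact fun a b => key (a+b) a b le_rfl

private lemma gcd_pk_two (p n k : ℕ) (hp : Nat.Prime p) (hpodd : Odd p) (hn : 0 < n)
    (hkn : k < n) (hkodd : Odd (n / Nat.gcd n k)) :
    Nat.gcd (p ^ k + 1) (p ^ n - 1) = 2 := by
  have hp2 : 2 ≤ p := hp.two_le
  have hpk_odd : Odd (p ^ k) := hpodd.pow
  have hpn_odd : Odd (p ^ n) := hpodd.pow
  have h1pn : 1 ≤ p ^ n := Nat.one_le_pow _ _ (by omega)
  have h1pk : 1 ≤ p ^ k := Nat.one_le_pow _ _ (by omega)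
  have h2dvd1 : 2 ∣ p ^ k + 1 := by obtain ⟨c, hc⟩ := hpk_odd; omega
  have h2dvd2 : 2 ∣ p ^ n - 1 := by obtain ⟨c, hc⟩ := hpn_odd; omega
  rcases Nat.eq_zero_or_pos k with hk0 | hk0
  · subst hk0
    simp only [pow_zero]
    have h12 : (1 + 1 : ℕ) = 2 := rfl
    rw [h12]
    exact Nat.gcd_eq_left h2dvd2
  -- k ≥ 1 case
  set d := Nat.gcd n k with hd
  have hdpos : 0 < d := Nat.gcd_pos_of_pos_left _ hn
  have hgcd2k : Nat.gcd (2 * k) n = Nat.gcd k n := by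
    set e := Nat.gcd (2 * k) n with he
    have hd_dvd_e : Nat.gcd k n ∣ e := Nat.dvd_gcd ((Nat.gcd_dvd_left k n).mul_left 2) (Nat.gcd_dvd_right k n)
    have he_dvd : e ∣ 2 * Nat.gcd k n := by
      have : e ∣ Nat.gcd (2 * k) (2 * n) := Nat.dvd_gcd (Nat.gcd_dvd_left _ _) ((Nat.gcd_dvd_right (2*k) n).mul_left 2)
      rwa [Nat.gcd_mul_left] at this
    have hkn' : Nat.gcd k n = d := Nat.gcd_comm k n ▸ rfl
    rw [hkn'] at hd_dvd_e he_dvd ⊢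
    obtain ⟨t, ht⟩ := hd_dvd_e
    have ht2 : t ∣ 2 := by
      have : d * t ∣ d * 2 := by rw [← ht]; simpa [mul_comm] using he_dvd
      exact (mul_dvd_mul_iff_left (by omega : d ≠ 0)).mp this
    rcases (Nat.prime_two.eq_one_or_self_of_dvd t ht2) with h1 | h2
    · rw [ht, h1, mul_one]
    · exfalso
      rw [h2] at ht
      have hen : e ∣ n := Nat.gcd_dvd_right _ _
      rw [ht] at hen
      have hdn : d ∣ n := Nat.gcd_dvd_left n k
      obtain ⟨m, hm⟩ := hdn
      have hmodd : Odd m := by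
        have hnd : n / d = m := by rw [hm]; exact Nat.mul_div_cancel_left m hdpos
        rwa [hnd] at hkodd
      rw [hm] at hen
      have h2m : 2 ∣ m := (mul_dvd_mul_iff_left (by omega : d ≠ 0)).mp hen
      obtain ⟨c, hc⟩ := hmodd; omega
  set g := Nat.gcd (p ^ k + 1) (p ^ n - 1) with hg
  have hg_dvd_2k : g ∣ p ^ (2 * k) - 1 := by
    have hfac : p ^ (2 * k) - 1 = (p ^ k + 1) * (p ^ k - 1) := by
      have hsq : p ^ (2*k) = p ^ k * p ^ k := by rw [two_mul, pow_add]
      have h1q : 1 ≤ p ^ (2*k) := Nat.one_le_pow _ _ (by omega)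
      zify [h1q, h1pk]
      push_cast at hsq
      nlinarith [hsq]
    exact dvd_trans (Nat.gcd_dvd_left _ _) (hfac ▸ Dvd.intro _ rfl)
  have hg_dvd : g ∣ p ^ d - 1 := by
    have : g ∣ Nat.gcd (p ^ (2*k) - 1) (p ^ n - 1) :=
      Nat.dvd_gcd hg_dvd_2k (Nat.gcd_dvd_right _ _)
    rwa [gcd_pow_sub_one p hp2, Nat.gcd_comm (2*k) n, Nat.gcd_comm n (2*k), hgcd2k,
      Nat.gcd_comm k n] at this
  have hdk : d ∣ k := Nat.gcd_dvd_right n k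
  have hpd_dvd : p ^ d - 1 ∣ p ^ k - 1 := by
    obtain ⟨t, ht⟩ := hdk
    calc p ^ d - 1 ∣ (p ^ d) ^ t - 1 ^ t := by
          exact Nat.sub_dvd_pow_sub_pow (p ^ d) 1 t
      _ = p ^ k - 1 := by rw [← pow_mul, ← ht, one_pow]
  have hg_dvd_k : g ∣ p ^ k - 1 := hg_dvd.trans hpd_dvd
  have hg_dvd_pk1 : g ∣ p ^ k + 1 := Nat.gcd_dvd_left _ _
  have h2g : 2 ∣ g := Nat.dvd_gcd h2dvd1 h2dvd2
  have : g ∣ 2 := by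
    have := Nat.dvd_sub hg_dvd_pk1 hg_dvd_k
    have h : p ^ k + 1 - (p ^ k - 1) = 2 := by omega
    rwa [h] at this
  exact Nat.dvd_antisymm this h2g

open Polynomial in
private lemma root_bound {L : Type} [Field L] [Fintype L] (N : ℕ) (hN : 0 < N) (c : L) :
    {x : L | x ^ N = c}.ncard ≤ N := by
  classical
  have hsub : {x : L | x ^ N = c} ⊆ ↑(Polynomial.nthRoots N c).toFinset := by
    intro x hx
    simp only [Finset.coe_sort_coe, Multiset.mem_toFinset, Finset.mem_coe]
    exact (Polynomial.mem_nthRoots hN).mpr hx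
  calc {x : L | x ^ N = c}.ncard ≤ (↑(Polynomial.nthRoots N c).toFinset : Set L).ncard :=
        Set.ncard_le_ncard hsub (Set.toFinite _)
    _ = (Polynomial.nthRoots N c).toFinset.card := Set.ncard_coe_finset _
    _ ≤ Multiset.card (Polynomial.nthRoots N c) := Multiset.toFinset_card_le _
    _ ≤ N := Polynomial.card_nthRoots N c

private lemma pow_one_count {L : Type} [Field L] [Fintype L] (N M : ℕ) (hN : 0 < N)
    (hNM : N * M = Fintype.card L - 1) : {x : L | x ^ N = 1}.ncard = N := by
  classical
  have hM : 0 < M := by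
    rcases Nat.eq_zero_or_pos M with h | h
    · exfalso; rw [h, mul_zero] at hNM
      have := Fintype.one_lt_card (α := L); omega
    · exact h
  obtain ⟨g, hg⟩ := IsCyclic.exists_monoid_generator (α := Lˣ)
  have hord : orderOf g = N * M := by
    rw [hNM, ← Fintype.card_units (α := L), ← Nat.card_eq_fintype_card]
    apply orderOf_eq_card_of_forall_mem_zpowers
    intro x
    obtain ⟨m, hm⟩ := hg x
    have hm' : g ^ m = x := hm
    exact ⟨(m : ℤ), by show g ^ (m : ℤ) = x; rw [zpow_natCast]; exact hm'⟩
  refine le_antisymm (root_bound N hN 1) ?_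
  set φ : Fin N → L := fun j => ((g ^ (M * j.val) : Lˣ) : L) with hφ
  have hinj : Function.Injective φ := by
    intro j j' hjj
    have hunit : g ^ (M * j.val) = g ^ (M * j'.val) := Units.ext hjj
    have hmod := (pow_eq_pow_iff_modEq).mp hunit
    rw [hord] at hmod
    have h1 : M * j.val < N * M := by
      have := j.isLt; calc M * j.val < M * N := (Nat.mul_lt_mul_left hM).mpr this
        _ = N * M := Nat.mul_comm _ _
    have h1' : M * j'.val < N * M := by
      have := j'.isLt; calc M * j'.val < M * N := (Nat.mul_lt_mul_left hM).mpr this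
        _ = N * M := Nat.mul_comm _ _
    have heq : M * j.val = M * j'.val := by
      have := Nat.ModEq.eq_of_lt_of_lt hmod h1 h1'
      exact this
    exact Fin.ext (Nat.eq_of_mul_eq_mul_left hM heq)
  have hrange : Set.range φ ⊆ {x : L | x ^ N = 1} := by
    rintro _ ⟨j, rfl⟩
    show ((g ^ (M * j.val) : Lˣ) : L) ^ N = 1
    have : (g ^ (M * j.val)) ^ N = 1 := by
      rw [← pow_mul]
      have : M * j.val * N = (N * M) * j.val := by ring
      rw [this, pow_mul, ← hord, pow_orderOf_eq_one, one_pow]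
    calc ((g ^ (M * j.val) : Lˣ) : L) ^ N = (((g ^ (M * j.val)) ^ N : Lˣ) : L) := by push_cast; ring
      _ = 1 := by rw [this]; rfl
  calc N = (Set.range φ).ncard := by
        rw [← Set.image_univ, Set.ncard_image_of_injective _ hinj, Set.ncard_univ,
          Nat.card_eq_fintype_card, Fintype.card_fin]
    _ ≤ _ := Set.ncard_le_ncard hrange (Set.toFinite _)

private lemma pow_surj {L : Type} [Field L] [Fintype L] (N M : ℕ) (hN : 0 < N)
    (hNM : N * M = Fintype.card L - 1) (c : L) (hc : c ≠ 0) (hcM : c ^ M = 1) :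
    ∃ y : L, y ^ N = c := by
  classical
  obtain ⟨g, hg⟩ := IsCyclic.exists_monoid_generator (α := Lˣ)
  have hord : orderOf g = N * M := by
    rw [hNM, ← Fintype.card_units (α := L), ← Nat.card_eq_fintype_card]
    apply orderOf_eq_card_of_forall_mem_zpowers
    intro x
    obtain ⟨m, hm⟩ := hg x
    have hm' : g ^ m = x := hm
    exact ⟨(m : ℤ), by show g ^ (m : ℤ) = x; rw [zpow_natCast]; exact hm'⟩
  obtain ⟨s, hs0⟩ := hg (Units.mk0 c hc)
  have hs : g ^ s = Units.mk0 c hc := hs0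
  have hsM : (g ^ s) ^ M = 1 := by
    rw [hs]
    apply Units.ext
    push_cast
    exact hcM
  rw [← pow_mul] at hsM
  have hdvd : N * M ∣ s * M := by rw [← hord]; exact orderOf_dvd_of_pow_eq_one hsM
  have hM : 0 < M := by
    rcases Nat.eq_zero_or_pos M with h | h
    · exfalso; rw [h, mul_zero] at hNM
      have := Fintype.one_lt_card (α := L); omega
    · exact h
  have hNs : N ∣ s := by
    have := (Nat.mul_dvd_mul_iff_right hM).mp hdvd
    exact this
  obtain ⟨t, ht⟩ := hNs
  refine ⟨((g ^ t : Lˣ) : L), ?_⟩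
  have : (g ^ t) ^ N = Units.mk0 c hc := by
    rw [← pow_mul, mul_comm, ← ht, hs]
  calc ((g ^ t : Lˣ) : L) ^ N = (((g ^ t) ^ N : Lˣ) : L) := by push_cast; ring
    _ = c := by rw [this]; rfl

private lemma fiber_eq_ker {L : Type} [Field L] [Fintype L] (N : ℕ) (hN : 0 < N) (d : L)
    (hd : d ≠ 0) (w : L) (hw : w ^ N = d) :
    {x : L | x ^ N = d}.ncard = {x : L | x ^ N = 1}.ncard := by
  have hw0 : w ≠ 0 := by rintro rfl; rw [zero_pow hN.ne'] at hw; exact hd hw.symm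
  have himg : {x : L | x ^ N = d} = (fun t => w * t) '' {t : L | t ^ N = 1} := by
    ext x
    constructor
    · intro hx
      refine ⟨x / w, ?_, by field_simp⟩
      show (x / w) ^ N = 1
      rw [div_pow, hx, hw, div_self hd]
    · rintro ⟨t, ht, rfl⟩
      show (w * t) ^ N = d
      rw [mul_pow, hw, ht, mul_one]
  rw [himg, Set.ncard_image_of_injective _ (mul_right_injective₀ hw0)]

private lemma fiber_m_two {L : Type} [Field L] [Fintype L] (m : ℕ) (hm0 : 0 < m) (hm2 : 2 ∣ m)
    (hgcd : Nat.gcd m (Fintype.card L - 1) = 2) (d : L) :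
    {x : L | x ^ m = d}.ncard = {x : L | x ^ 2 = d}.ncard := by
  by_cases hd : d = 0
  · subst hd
    have h1 : {x : L | x ^ m = 0} = {0} := by
      ext x; simp [pow_eq_zero_iff hm0.ne']
    have h2 : {x : L | x ^ 2 = 0} = {0} := by
      ext x; simp [pow_eq_zero_iff (two_ne_zero)]
    rw [h1, h2]
  · have hker : {x : L | x ^ m = 1} = {x : L | x ^ 2 = 1} := by
      ext x
      simp only [Set.mem_setOf_eq]
      constructor
      · intro h
        have hx0 : x ≠ 0 := by
          rintro rfl; rw [zero_pow hm0.ne'] at h; exact one_ne_zero h.symm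
        have hcard : x ^ (Fintype.card L - 1) = 1 := FiniteField.pow_card_sub_one_eq_one x hx0
        have := pow_gcd_eq_one.mpr ⟨h, hcard⟩
        rwa [hgcd] at this
      · intro h
        obtain ⟨m', rfl⟩ := hm2
        rw [pow_mul, h, one_pow]
    by_cases hex : ∃ w : L, w ^ 2 = d
    · obtain ⟨w, hw⟩ := hex
      have hw0 : w ≠ 0 := by rintro rfl; rw [zero_pow two_ne_zero] at hw; exact hd hw.symm
      -- Bezout: produce an m-th root of d
      have hexm : ∃ w' : L, w' ^ m = d := by
        set c := Fintype.card L - 1 with hc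
        set A := Nat.gcdA m c with hA
        set B := Nat.gcdB m c with hB
        have key : (2 : ℤ) = m * A + c * B := by
          have := Nat.gcd_eq_gcd_ab m c
          rw [hgcd] at this
          exact_mod_cast this
        have h1 : w ^ c = 1 := FiniteField.pow_card_sub_one_eq_one w hw0
        refine ⟨w ^ A, ?_⟩
        have e1 : (w ^ A) ^ m = w ^ ((m : ℤ) * A) := by
          rw [mul_comm, zpow_mul, zpow_natCast]
        have e2 : w ^ ((c : ℤ) * B) = 1 := by
          rw [zpow_mul, zpow_natCast, h1, one_zpow]
        have e3 : w ^ ((m : ℤ) * A) * w ^ ((c : ℤ) * B) = w ^ (2 : ℤ) := by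
          rw [← zpow_add₀ hw0, ← key]
        have e4 : w ^ (2 : ℤ) = d := by
          rw [show (2 : ℤ) = ((2 : ℕ) : ℤ) by norm_num, zpow_natCast, hw]
        rw [e1, ← mul_one (w ^ ((m:ℤ) * A)), ← e2, e3, e4]
      obtain ⟨w', hw'⟩ := hexm
      rw [fiber_eq_ker m hm0 d hd w' hw', fiber_eq_ker 2 two_pos d hd w hw, hker]
    · have hexm : ¬ ∃ w' : L, w' ^ m = d := by
        rintro ⟨w', hw'⟩
        obtain ⟨m', rfl⟩ := hm2
        exact hex ⟨w' ^ m', by rw [← pow_mul, mul_comm m' 2, hw']⟩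
      have h1 : {x : L | x ^ m = d} = ∅ := by
        ext x; simp only [Set.mem_setOf_eq, Set.mem_empty_iff_false, iff_false]
        exact fun h => hexm ⟨x, h⟩
      have h2 : {x : L | x ^ 2 = d} = ∅ := by
        ext x; simp only [Set.mem_setOf_eq, Set.mem_empty_iff_false, iff_false]
        exact fun h => hex ⟨x, h⟩
      rw [h1, h2]

private lemma conv_count {L : Type} [Field L] [Fintype L] [DecidableEq L] (g h : L → L) (c : L) :
    {uv : L × L | g uv.1 + h uv.2 = c}.ncard =
      ∑ d : L, {u : L | g u = d}.ncard * {v : L | h v = c - d}.ncard := by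
  classical
  have hset : ∀ (P : L → Prop) [DecidablePred P], {x : L | P x}.ncard =
      (Finset.univ.filter P).card := by
    intro P _
    rw [← Set.ncard_coe_finset]
    congr 1
    ext x; simp
  have hset2 : ∀ (P : L × L → Prop) [DecidablePred P], {x : L × L | P x}.ncard =
      (Finset.univ.filter P).card := by
    intro P _
    rw [← Set.ncard_coe_finset]
    congr 1
    ext x; simp
  rw [hset2]
  rw [Finset.card_eq_sum_card_fiberwise
    (f := fun uv : L × L => g uv.1) (t := Finset.univ) (fun x _ => Finset.mem_univ _)]
  apply Finset.sum_congr rfl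
  intro d _
  have : (Finset.univ.filter (fun uv : L × L => g uv.1 + h uv.2 = c)).filter
      (fun uv => g uv.1 = d) =
      (Finset.univ.filter (fun u : L => g u = d)) ×ˢ
        (Finset.univ.filter (fun v : L => h v = c - d)) := by
    ext uv
    simp only [Finset.mem_filter, Finset.mem_univ, true_and, Finset.mem_product]
    constructor
    · rintro ⟨h1, h2⟩
      exact ⟨h2, by rw [← h1, h2]; ring⟩
    · rintro ⟨h1, h2⟩
      refine ⟨?_, h1⟩
      rw [h1, h2]; ring
  rw [this, Finset.card_product, hset, hset]

private def Esub (K : Type) [Field K] (q : ℕ) (hq0 : q ≠ 0) (hodd : Odd q)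
    (hadd : ∀ x y : K, (x + y) ^ q = x ^ q + y ^ q) : Subfield K where
  carrier := {x : K | x ^ q = x}
  mul_mem' := by intro a b ha hb; simp only [Set.mem_setOf_eq] at *; rw [mul_pow, ha, hb]
  one_mem' := by simp
  add_mem' := by intro a b ha hb; simp only [Set.mem_setOf_eq] at *; rw [hadd, ha, hb]
  zero_mem' := by simp [zero_pow hq0]
  neg_mem' := by intro a ha; simp only [Set.mem_setOf_eq] at *; rw [hodd.neg_pow, ha]
  inv_mem' := by intro a ha; simp only [Set.mem_setOf_eq] at *; rw [inv_pow, ha]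




/-- Theorem 2.5 (a),(b).  Let `q = pⁿ ≡ 1 (mod 4)`, `α` a nonsquare in
the subfield `F` of order `q`, `ξ² = α`, and `f(x₀ + x₁ξ) =
(x₀^{p^k+1} + α x₁^{(p^k+1)p^i}) + 2x₀x₁ξ` with `0 < i < n`, `0 ≤ k < n` and
`n/gcd(n,k)` odd (Dickson for `k = 0`, Pott–Zhou for `k > 0`).  Then for all `a b`
the number of `x` with `f(x+a) − b ∈ ξF` is `1` if `b ∈ ξF` and `q+1` otherwise;
hence `U_ξ` is a unital in the commutative semifield plane `Π(f)`. -/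
theorem stmt6 (p n q : ℕ) (hp : Nat.Prime p) (hpodd : Odd p) (hn : 0 < n) (hq : q = p ^ n)
    (hq4 : q % 4 = 1)
    (K : Type) [Field K] [Fintype K] (hcard : Fintype.card K = q ^ 2)
    (α : K) (hαF : α ^ q = α) (hαns : ¬ ∃ s : K, s ^ q = s ∧ s ^ 2 = α)
    (ξ : K) (hξ : ξ ^ 2 = α)
    (i k : ℕ) (hi0 : 0 < i) (hin : i < n) (hkn : k < n) (hkodd : Odd (n / Nat.gcd n k))
    (f : K → K)
    (hf : ∀ x0 x1 : K, x0 ^ q = x0 → x1 ^ q = x1 →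
      f (x0 + x1 * ξ) =
        (x0 ^ (p ^ k + 1) + α * x1 ^ ((p ^ k + 1) * p ^ i)) + 2 * x0 * x1 * ξ) :
    (∀ a b : K,
      (b ∈ scalarSet K q ξ → {x : K | f (x + a) - b ∈ scalarSet K q ξ}.ncard = 1) ∧
      (b ∉ scalarSet K q ξ → {x : K | f (x + a) - b ∈ scalarSet K q ξ}.ncard = q + 1)) ∧
    (∀ L ∈ shiftLines K f,
      (L ∩ unitalSet K q ξ).ncard = 1 ∨ (L ∩ unitalSet K q ξ).ncard = q + 1) := by
  classical
  -- ===== numerology =====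
  have hp2 : 2 ≤ p := hp.two_le
  have hq1 : 1 < q := by rw [hq]; exact Nat.one_lt_pow hn.ne' hp.one_lt
  have hq0 : q ≠ 0 := by omega
  have hqodd : Odd q := by rw [hq]; exact hpodd.pow
  haveI : Fact p.Prime := ⟨hp⟩
  haveI hchar : CharP K p := by
    haveI : CharP K (ringChar K) := ringChar.charP K
    obtain ⟨mm, hl, hcard'⟩ := FiniteField.card K (ringChar K)
    have hpq : p ^ (2 * n) = ringChar K ^ (mm : ℕ) := by
      rw [← hcard', hcard, hq, ← pow_mul, mul_comm n 2]
    have hdvd : p ∣ ringChar K ^ (mm : ℕ) := by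
      rw [← hpq]; exact dvd_pow_self p (by positivity)
    have hpeq : p = ringChar K :=
      (Nat.prime_dvd_prime_iff_eq hp hl).mp (hp.dvd_of_dvd_pow hdvd)
    rw [hpeq]; infer_instance
  have h2K : (2 : K) ≠ 0 := by
    have : ((2 : ℕ) : K) ≠ 0 := by
      rw [Ne, CharP.cast_eq_zero_iff K p 2]
      intro h
      have h2 := (Nat.prime_dvd_prime_iff_eq hp Nat.prime_two).mp h
      obtain ⟨c, hc⟩ := hpodd; omega
    simpa using this
  set m := p ^ k + 1 with hm
  have hm0 : 0 < m := by omega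
  have hm2 : 2 ∣ m := by
    have : Odd (p ^ k) := hpodd.pow
    obtain ⟨c, hc⟩ := this; omega
  have hgcdm : Nat.gcd m (q - 1) = 2 := by
    rw [hm, hq]; exact gcd_pk_two p n k hp hpodd hn hkn hkodd
  -- ===== Frobenius facts =====
  have hKq2 : ∀ x : K, (x ^ q) ^ q = x := by
    intro x
    rw [← pow_mul, ← pow_two, ← hcard]
    exact FiniteField.pow_card x
  have hadd : ∀ x y : K, (x + y) ^ q = x ^ q + y ^ q := by
    intro x y; rw [hq]; exact add_pow_char_pow x y p n
  have hsub : ∀ x y : K, (x - y) ^ q = x ^ q - y ^ q := by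
    intro x y
    rw [sub_eq_add_neg, hadd, hqodd.neg_pow, sub_eq_add_neg]
  have h2q : (2 : K) ^ q = 2 := by
    have := hadd 1 1
    norm_num at this
    convert this using 2 <;> norm_num
  -- ===== ξ facts =====
  have hα0 : α ≠ 0 := by
    intro h
    exact hαns ⟨0, by rw [zero_pow hq0], by rw [h]; exact zero_pow two_ne_zero⟩
  have hξ0 : ξ ≠ 0 := by
    intro h
    rw [h, zero_pow two_ne_zero] at hξ
    exact hα0 hξ.symm
  have hξq : ξ ^ q = -ξ := by
    have h1 : (ξ ^ q) ^ 2 = α := by rw [← pow_mul, mul_comm, pow_mul, hξ, hαF]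
    have h2 : (ξ ^ q - ξ) * (ξ ^ q + ξ) = 0 := by
      have : (ξ ^ q) ^ 2 - ξ ^ 2 = 0 := by rw [h1, hξ, sub_self]
      linear_combination this
    rcases mul_eq_zero.mp h2 with h | h
    · exfalso
      have hfix : ξ ^ q = ξ := by linear_combination h
      exact hαns ⟨ξ, hfix, hξ⟩
    · linear_combination h
  -- ===== scalarSet characterization =====
  have hscal : ∀ c : K, c ∈ scalarSet K q ξ ↔ c ^ q = -c := by
    intro c
    constructor
    · rintro ⟨t, ht, rfl⟩
      rw [mul_pow, ht, hξq]; ring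
    · intro hc
      refine ⟨c * ξ⁻¹, ?_, by field_simp⟩
      rw [mul_pow, hc, inv_pow, hξq]
      rw [inv_neg]
      field_simp
  -- ===== the subfield E =====
  set E : Subfield K := Esub K q hq0 hqodd hadd with hE
  have hmemE : ∀ x : K, x ∈ E ↔ x ^ q = x := fun x => Iff.rfl
  haveI instE : Fintype ↥E := Fintype.ofFinite ↥E
  have hFset : {x : K | x ^ q = x}.ncard = q := by
    have hNM : (q - 1) * (q + 1) = Fintype.card K - 1 := by
      rw [hcard]
      have h1 : 1 ≤ q := by omega
      have h2 : 1 ≤ q ^ 2 := Nat.one_le_pow 2 q (by omega)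
      zify [h1, h2]
      ring
    have h1 : {x : K | x ^ (q - 1) = 1}.ncard = q - 1 :=
      pow_one_count (q - 1) (q + 1) (by omega) hNM
    have hsplit : {x : K | x ^ q = x} = insert (0 : K) {x : K | x ^ (q - 1) = 1} := by
      ext x
      simp only [Set.mem_setOf_eq, Set.mem_insert_iff]
      constructor
      · intro h
        by_cases hx : x = 0
        · exact Or.inl hx
        · right
          have : x ^ (q - 1) * x = 1 * x := by
            rw [← pow_succ, one_mul]
            have : q - 1 + 1 = q := by omega
            rw [this, h]
          exact mul_right_cancel₀ hx this
      · rintro (rfl | h)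
        · exact zero_pow hq0
        · have hq' : q = q - 1 + 1 := by omega
          rw [hq', pow_succ, h, one_mul]
    rw [hsplit, Set.ncard_insert_of_notMem ?_ (Set.toFinite _)]
    · omega
    · simp only [Set.mem_setOf_eq]
      rw [zero_pow (by omega : q - 1 ≠ 0)]
      exact zero_ne_one
  have hcardE : Fintype.card ↥E = q := by
    rw [← Nat.card_eq_fintype_card]
    have : Nat.card ↥E = Nat.card (E : Set K) := rfl
    rw [this, Nat.card_coe_set_eq]
    exact hFset
  -- ===== decomposition (generic in θ) =====
  have hdecomp : ∀ θ : K, θ ≠ 0 → θ ^ q = -θ → ∀ y : K,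
      ((y + y ^ q) / 2) ^ q = (y + y ^ q) / 2 ∧
      ((y - y ^ q) / (2 * θ)) ^ q = (y - y ^ q) / (2 * θ) ∧
      y = (y + y ^ q) / 2 + ((y - y ^ q) / (2 * θ)) * θ := by
    intro θ hθ0 hθq y
    refine ⟨?_, ?_, ?_⟩
    · rw [div_pow, hadd, hKq2, h2q, add_comm]
    · rw [div_pow, hsub, hKq2, mul_pow, h2q, hθq]
      rw [show (2 : K) * -θ = -(2 * θ) by ring, div_neg, ← neg_div, neg_sub]
    · field_simp
      ring
  have hinjθ : ∀ θ : K, θ ≠ 0 → θ ^ q = -θ → ∀ u v u' v' : K,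
      u ^ q = u → v ^ q = v → u' ^ q = u' → v' ^ q = v' →
      u + v * θ = u' + v' * θ → u = u' ∧ v = v' := by
    intro θ hθ0 hθq u v u' v' hu hv hu' hv' heq
    have heq2 : u - v * θ = u' - v' * θ := by
      have h := congrArg (fun z : K => z ^ q) heq
      rw [hadd, hadd, mul_pow, mul_pow, hu, hv, hu', hv', hθq] at h
      linear_combination h
    have huu : u = u' := by
      have h2u : (2 : K) * u = 2 * u' := by linear_combination heq + heq2
      exact mul_left_cancel₀ h2K h2u
    refine ⟨huu, ?_⟩
    have hvθ : v * θ = v' * θ := by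
      rw [huu] at heq
      linear_combination heq
    exact mul_right_cancel₀ hθ0 hvθ
  -- ===== E-level fiber counting =====
  set αE : ↥E := ⟨α, hαF⟩ with hαEdef
  have hαEval : (αE : K) = α := rfl
  have hαE0 : αE ≠ 0 := by
    intro h
    exact hα0 (by rw [← hαEval, h]; rfl)
  have hgcdE : Nat.gcd m (Fintype.card ↥E - 1) = 2 := by rw [hcardE]; exact hgcdm
  have hfrobinj : Function.Injective (fun x : K => x ^ p ^ i) := by
    intro x y hxy
    apply (iterateFrobenius K p i).injective
    rw [iterateFrobenius_def, iterateFrobenius_def]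
    exact hxy
  set ψ : ↥E → ↥E := fun v => ⟨(v : K) ^ p ^ i, by
    rw [hmemE, pow_right_comm]
    have : (v : K) ^ q = v := v.2
    rw [this]⟩ with hψdef
  have hψinj : Function.Injective ψ := by
    intro v w h
    apply Subtype.ext
    exact hfrobinj (congrArg Subtype.val h)
  have hψsurj : Function.Surjective ψ := Finite.surjective_of_injective hψinj
  have hψpow : ∀ (v : ↥E), (ψ v) ^ m = v ^ (m * p ^ i) := by
    intro v
    apply Subtype.ext
    push_cast
    rw [← pow_mul, mul_comm (p ^ i) m]
  have hfib : ∀ d : ↥E, {u : ↥E | u ^ m = d}.ncard = {u : ↥E | u ^ 2 = d}.ncard :=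
    fun d => fiber_m_two m hm0 hm2 hgcdE d
  have hconv_alpha : ∀ (N : ℕ) (d : ↥E), {u : ↥E | αE * u ^ N = d} = {u : ↥E | u ^ N = αE⁻¹ * d} := by
    intro N d
    ext u
    simp only [Set.mem_setOf_eq]
    constructor
    · intro h; rw [← h]; exact (inv_mul_cancel_left₀ hαE0 _).symm
    · intro h; rw [h]; exact mul_inv_cancel_left₀ hαE0 _
  have hfib2 : ∀ d : ↥E,
      {v : ↥E | αE * v ^ (m * p ^ i) = d}.ncard = {v : ↥E | αE * v ^ 2 = d}.ncard := by
    intro d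
    have e1 : {v : ↥E | αE * v ^ (m * p ^ i) = d} = ψ ⁻¹' {u : ↥E | αE * u ^ m = d} := by
      ext v
      simp only [Set.mem_setOf_eq, Set.mem_preimage]
      rw [hψpow]
    have e2 : ∀ S : Set ↥E, (ψ ⁻¹' S).ncard = S.ncard := by
      intro S
      have h := Set.ncard_image_of_injective (ψ ⁻¹' S) hψinj
      rw [Set.image_preimage_eq S hψsurj] at h
      exact h.symm
    rw [e1, e2, hconv_alpha, hconv_alpha, hfib]
  -- ===== convolution: reduce to z² + α w² =====
  have hcount_pair : ∀ cE : ↥E,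
      {uv : ↥E × ↥E | uv.1 ^ m + αE * uv.2 ^ (m * p ^ i) = cE}.ncard =
      {uv : ↥E × ↥E | uv.1 ^ 2 + αE * uv.2 ^ 2 = cE}.ncard := by
    intro cE
    have e1 := conv_count (L := ↥E) (fun u => u ^ m) (fun v => αE * v ^ (m * p ^ i)) cE
    have e2 := conv_count (L := ↥E) (fun u => u ^ 2) (fun v => αE * v ^ 2) cE
    rw [e1, e2]
    apply Finset.sum_congr rfl
    intro d _
    rw [hfib d, hfib2 (cE - d)]
  -- ===== ζ with ζ² = −α =====
  obtain ⟨δE, hδE⟩ : IsSquare (-1 : ↥E) :=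
    FiniteField.isSquare_neg_one_iff.mpr (by rw [hcardE]; omega)
  set δ : K := (δE : K) with hδdef
  have hδq : δ ^ q = δ := (hmemE _).mp δE.2
  have hδδ : δ * δ = -1 := by
    have h := congrArg (Subtype.val : ↥E → K) hδE
    push_cast at h
    rw [← hδdef] at h
    linear_combination -h
  have hδ0 : δ ≠ 0 := by
    intro h
    rw [h, mul_zero] at hδδ
    exact zero_ne_one (by linear_combination -hδδ)
  set ζ : K := δ * ξ with hζdef
  have hζ0 : ζ ≠ 0 := mul_ne_zero hδ0 hξ0
  have hζq : ζ ^ q = -ζ := by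
    rw [hζdef, mul_pow, hδq, hξq]; ring
  have hζ2 : ζ ^ 2 = -α := by
    rw [hζdef, mul_pow, ← hξ]
    have : δ ^ 2 = -1 := by rw [pow_two]; exact hδδ
    rw [this]; ring
  -- ===== norm-fiber correspondence =====
  have hnorm : ∀ cE : ↥E,
      {uv : ↥E × ↥E | uv.1 ^ 2 + αE * uv.2 ^ 2 = cE}.ncard =
      {y : K | y ^ (q + 1) = (cE : K)}.ncard := by
    intro cE
    set Ψ : ↥E × ↥E → K := fun uv => (uv.1 : K) + (uv.2 : K) * ζ with hΨdef
    have hΨinj : Function.Injective Ψ := by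
      intro uv uv' h
      obtain ⟨h1, h2⟩ := hinjθ ζ hζ0 hζq _ _ _ _ uv.1.2 uv.2.2 uv'.1.2 uv'.2.2 h
      exact Prod.ext (Subtype.ext h1) (Subtype.ext h2)
    have himg : Ψ '' {uv : ↥E × ↥E | uv.1 ^ 2 + αE * uv.2 ^ 2 = cE} =
        {y : K | y ^ (q + 1) = (cE : K)} := by
      ext y
      constructor
      · rintro ⟨⟨u, v⟩, huv, rfl⟩
        simp only [Set.mem_setOf_eq] at huv ⊢
        have huvK : (u : K) ^ 2 + α * (v : K) ^ 2 = (cE : K) := by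
          have := congrArg (Subtype.val : ↥E → K) huv
          push_cast at this
          rw [← hαEval]
          exact this
        have hu : (u : K) ^ q = u := u.2
        have hv : (v : K) ^ q = v := v.2
        have hyq : ((u : K) + (v : K) * ζ) ^ q = (u : K) - (v : K) * ζ := by
          rw [hadd, mul_pow, hu, hv, hζq]; ring
        show ((u : K) + (v : K) * ζ) ^ (q + 1) = (cE : K)
        rw [pow_succ, hyq]
        linear_combination huvK - (v : K) ^ 2 * hζ2
      · intro hy
        simp only [Set.mem_setOf_eq] at hy
        obtain ⟨h0, h1, hyrep⟩ := hdecomp ζ hζ0 hζq y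
        set u : K := (y + y ^ q) / 2 with hu_def
        set v : K := (y - y ^ q) / (2 * ζ) with hv_def
        have hyq : y ^ q = u - v * ζ := by
          conv_lhs => rw [hyrep]
          rw [hadd, mul_pow, h0, h1, hζq]; ring
        have hprod : (u - v * ζ) * (u + v * ζ) = (cE : K) := by
          rw [← hyq, ← hyrep, ← pow_succ]
          exact hy
        have hKlevel : u ^ 2 + α * v ^ 2 = (cE : K) := by
          linear_combination hprod + v ^ 2 * hζ2
        refine ⟨(⟨u, h0⟩, ⟨v, h1⟩), ?_, ?_⟩
        · simp only [Set.mem_setOf_eq]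
          apply Subtype.coe_injective
          push_cast
          exact hKlevel
        · show u + v * ζ = y
          exact hyrep.symm
    rw [← himg, Set.ncard_image_of_injective _ hΨinj]
  -- ===== total count over E =====
  have hNM' : (q + 1) * (q - 1) = Fintype.card K - 1 := by
    rw [hcard]
    have h1 : 1 ≤ q := by omega
    have h2 : 1 ≤ q ^ 2 := Nat.one_le_pow 2 q (by omega)
    zify [h1, h2]; ring
  have hEcount : ∀ cE : ↥E,
      {uv : ↥E × ↥E | uv.1 ^ m + αE * uv.2 ^ (m * p ^ i) = cE}.ncard =
      if cE = 0 then 1 else q + 1 := by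
    intro cE
    rw [hcount_pair cE, hnorm cE]
    by_cases hc0 : cE = 0
    · subst hc0
      rw [if_pos rfl]
      have hzero : {y : K | y ^ (q + 1) = ((0 : ↥E) : K)} = {0} := by
        ext y
        simp only [Set.mem_setOf_eq, Set.mem_singleton_iff, ZeroMemClass.coe_zero]
        rw [pow_eq_zero_iff (by omega : q + 1 ≠ 0)]
      rw [hzero, Set.ncard_singleton]
    · rw [if_neg hc0]
      have hcK0 : (cE : K) ≠ 0 := by
        intro h
        exact hc0 (by exact_mod_cast h)
      have hcq : (cE : K) ^ q = (cE : K) := cE.2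
      have hpow1 : (cE : K) ^ (q - 1) = 1 := by
        have h := hcq
        have hq' : q = q - 1 + 1 := by omega
        rw [hq', pow_succ] at h
        have h2 : (cE : K) ^ (q - 1) * (cE : K) = 1 * (cE : K) := by rw [h, one_mul]
        exact mul_right_cancel₀ hcK0 h2
      obtain ⟨w, hw⟩ := pow_surj (q + 1) (q - 1) (by omega) hNM' (cE : K) hcK0 hpow1
      rw [fiber_eq_ker (q + 1) (by omega) (cE : K) hcK0 w hw,
        pow_one_count (q + 1) (q - 1) (by omega) hNM']
  -- ===== the main affine count =====
  have hmain : ∀ a b : K, {x : K | f (x + a) - b ∈ scalarSet K q ξ}.ncard =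
      if b ^ q = -b then 1 else q + 1 := by
    intro a b
    set b0 : K := (b + b ^ q) / 2 with hb0def
    have hb0E : b0 ^ q = b0 := (hdecomp ξ hξ0 hξq b).1
    have hcond : ∀ y : K, (f y - b ∈ scalarSet K q ξ) ↔
        ((y + y ^ q) / 2) ^ m + α * ((y - y ^ q) / (2 * ξ)) ^ (m * p ^ i) = b0 := by
      intro y
      obtain ⟨h0, h1, hyrep⟩ := hdecomp ξ hξ0 hξq y
      set u : K := (y + y ^ q) / 2 with hu_def
      set v : K := (y - y ^ q) / (2 * ξ) with hv_def
      have hfy : f y = (u ^ m + α * v ^ (m * p ^ i)) + 2 * u * v * ξ := by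
        conv_lhs => rw [hyrep]
        exact hf u v h0 h1
      set A : K := u ^ m + α * v ^ (m * p ^ i) with hA_def
      have hAq : A ^ q = A := by
        rw [hA_def, hadd, mul_pow, pow_right_comm u, pow_right_comm v, h0, h1, hαF]
      have hBq : (2 * u * v) ^ q = 2 * u * v := by
        rw [mul_pow, mul_pow, h2q, h0, h1]
      rw [hscal]
      have hfyq : (f y - b) ^ q = A - 2 * u * v * ξ - b ^ q := by
        rw [hfy, hsub, hadd, mul_pow, hBq, hξq, hAq]
        ring
      constructor
      · intro hmem
        rw [hfyq, hfy] at hmem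
        have h2A : 2 * A = b + b ^ q := by linear_combination hmem
        rw [hb0def]
        field_simp
        linear_combination h2A
      · intro hA_eq
        rw [hfyq, hfy]
        have h2A : 2 * A = b + b ^ q := by
          rw [hb0def] at hA_eq
          field_simp at hA_eq
          linear_combination hA_eq
        linear_combination h2A
    have hshift : {x : K | f (x + a) - b ∈ scalarSet K q ξ}.ncard =
        {y : K | f y - b ∈ scalarSet K q ξ}.ncard := by
      have himg : (fun x : K => x + a) '' {x : K | f (x + a) - b ∈ scalarSet K q ξ} =
          {y : K | f y - b ∈ scalarSet K q ξ} := by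
        ext y
        constructor
        · rintro ⟨x, hx, rfl⟩; exact hx
        · intro hy
          exact ⟨y - a, by simpa using hy, by ring⟩
      rw [← himg, Set.ncard_image_of_injective _ (add_left_injective a)]
    have hsetE : {y : K | f y - b ∈ scalarSet K q ξ}.ncard =
        {uv : ↥E × ↥E | uv.1 ^ m + αE * uv.2 ^ (m * p ^ i) = (⟨b0, hb0E⟩ : ↥E)}.ncard := by
      set b0E : ↥E := ⟨b0, hb0E⟩ with hb0Edef
      set Φ : ↥E × ↥E → K := fun uv => (uv.1 : K) + (uv.2 : K) * ξ with hΦdef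
      have hΦinj : Function.Injective Φ := by
        intro uv uv' h
        obtain ⟨h1, h2⟩ := hinjθ ξ hξ0 hξq _ _ _ _ uv.1.2 uv.2.2 uv'.1.2 uv'.2.2 h
        exact Prod.ext (Subtype.ext h1) (Subtype.ext h2)
      have himg : Φ '' {uv : ↥E × ↥E | uv.1 ^ m + αE * uv.2 ^ (m * p ^ i) = b0E} =
          {y : K | f y - b ∈ scalarSet K q ξ} := by
        ext y
        constructor
        · rintro ⟨⟨u, v⟩, huv, rfl⟩
          simp only [Set.mem_setOf_eq] at huv ⊢
          have huvK : (u : K) ^ m + α * (v : K) ^ (m * p ^ i) = b0 := by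
            have hc := congrArg (Subtype.val : ↥E → K) huv
            push_cast at hc
            exact hc
          rw [hcond]
          have hu : (u : K) ^ q = u := u.2
          have hv : (v : K) ^ q = v := v.2
          have hyq : ((u : K) + (v : K) * ξ) ^ q = (u : K) - (v : K) * ξ := by
            rw [hadd, mul_pow, hu, hv, hξq]; ring
          have hco0 : (((u : K) + (v : K) * ξ) + ((u : K) + (v : K) * ξ) ^ q) / 2 = (u : K) := by
            rw [hyq]; field_simp; ring
          have hco1 : (((u : K) + (v : K) * ξ) - ((u : K) + (v : K) * ξ) ^ q) / (2 * ξ)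
              = (v : K) := by
            rw [hyq]; field_simp; ring
          show (((↑u + ↑v * ξ) + (↑u + ↑v * ξ) ^ q) / 2) ^ m +
              α * (((↑u + ↑v * ξ) - (↑u + ↑v * ξ) ^ q) / (2 * ξ)) ^ (m * p ^ i) = b0
          rw [hco0, hco1]
          exact huvK
        · intro hy
          simp only [Set.mem_setOf_eq] at hy
          obtain ⟨h0, h1, hyrep⟩ := hdecomp ξ hξ0 hξq y
          rw [hcond] at hy
          refine ⟨(⟨_, h0⟩, ⟨_, h1⟩), ?_, ?_⟩
          · simp only [Set.mem_setOf_eq]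
            apply Subtype.coe_injective
            push_cast
            exact hy
          · show (y + y ^ q) / 2 + (y - y ^ q) / (2 * ξ) * ξ = y
            exact hyrep.symm
      rw [← himg, Set.ncard_image_of_injective _ hΦinj]
    rw [hshift, hsetE, hEcount]
    have hb0iff : (⟨b0, hb0E⟩ : ↥E) = (0 : ↥E) ↔ b ^ q = -b := by
      constructor
      · intro h
        have hb00 : b0 = 0 := by
          have := congrArg (Subtype.val : ↥E → K) h
          simpa using this
        rw [hb0def, div_eq_zero_iff] at hb00
        rcases hb00 with h' | h'
        · linear_combination h'
        · exact absurd h' h2K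
      · intro h
        apply Subtype.coe_injective
        show b0 = ((0 : ↥E) : K)
        rw [ZeroMemClass.coe_zero, hb0def, h]
        ring
    by_cases hbb : b ^ q = -b
    · rw [if_pos (hb0iff.mpr hbb), if_pos hbb]
    · rw [if_neg (fun h => hbb (hb0iff.mp h)), if_neg hbb]
  -- ===== conclusion =====
  refine ⟨?_, ?_⟩
  · intro a b
    constructor
    · intro hb
      rw [hmain a b, if_pos ((hscal b).mp hb)]
    · intro hb
      rw [hmain a b, if_neg (fun h => hb ((hscal b).mpr h))]
  · intro L hL
    rcases hL with ⟨a, b, rfl⟩ | ⟨a, rfl⟩ | rfl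
    · -- affine line
      have hLU : affLine K f a b ∩ unitalSet K q ξ =
          (fun x : K => (Sum.inl (x, f (x + a) - b) : ShiftPt K)) ''
            {x : K | f (x + a) - b ∈ scalarSet K q ξ} := by
        ext P
        constructor
        · rintro ⟨hP1, hP2⟩
          rcases hP1 with ⟨x, rfl⟩ | rfl
          · rcases hP2 with ⟨x', t, ht, hPt⟩ | hP3
            · have h1 : x = x' ∧ f (x + a) - b = t * ξ := by
                simpa [Sum.inl.injEq, Prod.mk.injEq] using hPt
              exact ⟨x, ⟨t, ht, h1.2⟩, rfl⟩
            · simp at hP3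
          · rcases hP2 with ⟨x', t, ht, hPt⟩ | hP3
            · simp at hPt
            · simp at hP3
        · rintro ⟨x, ⟨t, ht, hc⟩, rfl⟩
          refine ⟨Or.inl ⟨x, rfl⟩, Or.inl ⟨x, t, ht, ?_⟩⟩
          show (Sum.inl (x, f (x + a) - b) : ShiftPt K) = Sum.inl (x, t * ξ)
          rw [hc]
      have hinl : Function.Injective
          (fun x : K => (Sum.inl (x, f (x + a) - b) : ShiftPt K)) := by
        intro x y hxy
        simp only [Sum.inl.injEq, Prod.mk.injEq] at hxy
        exact hxy.1
      rw [hLU, Set.ncard_image_of_injective _ hinl, hmain a b]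
      by_cases hbb : b ^ q = -b
      · left; rw [if_pos hbb]
      · right; rw [if_neg hbb]
    · -- vertical line
      right
      have hnotmem : (Sum.inr (Sum.inr ()) : ShiftPt K) ∉
          (fun t : K => (Sum.inl (a, t * ξ) : ShiftPt K)) '' {t : K | t ^ q = t} := by
        rintro ⟨t, ht, h⟩
        simp at h
      have hinjt : Function.Injective (fun t : K => (Sum.inl (a, t * ξ) : ShiftPt K)) := by
        intro t t' h
        simp only [Sum.inl.injEq, Prod.mk.injEq] at h
        exact mul_right_cancel₀ hξ0 h.2
      have hLU : vertLine K a ∩ unitalSet K q ξ =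
          insert (Sum.inr (Sum.inr ()) : ShiftPt K)
            ((fun t : K => (Sum.inl (a, t * ξ) : ShiftPt K)) '' {t : K | t ^ q = t}) := by
        ext P
        constructor
        · rintro ⟨hP1, hP2⟩
          rcases hP1 with ⟨y, rfl⟩ | rfl
          · rcases hP2 with ⟨x', t, ht, hPt⟩ | hP3
            · right
              have h1 : a = x' ∧ y = t * ξ := by
                simpa [Sum.inl.injEq, Prod.mk.injEq] using hPt
              exact ⟨t, ht, by rw [h1.2]⟩
            · simp at hP3
          · exact Set.mem_insert _ _
        · intro hP
          rcases hP with rfl | ⟨t, ht, rfl⟩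
          · exact ⟨Or.inr rfl, Or.inr rfl⟩
          · exact ⟨Or.inl ⟨t * ξ, rfl⟩, Or.inl ⟨a, t, ht, rfl⟩⟩
      rw [hLU, Set.ncard_insert_of_notMem hnotmem (Set.toFinite _),
        Set.ncard_image_of_injective _ hinjt, hFset]
    · -- line at infinity
      left
      have hLU : lineAtInf K ∩ unitalSet K q ξ =
          {(Sum.inr (Sum.inr ()) : ShiftPt K)} := by
        ext P
        constructor
        · rintro ⟨⟨s, rfl⟩, hP2⟩
          rcases hP2 with ⟨x, t, ht, hPt⟩ | hP3
          · simp at hPt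
          · exact hP3
        · rintro rfl
          exact ⟨⟨Sum.inr (), rfl⟩, Or.inr rfl⟩
      rw [hLU, Set.ncard_singleton]
end
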